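/- arXiv:1307.5709 — 7 statements merged into one kernel-verified Lean document; each statement's English description precedes it below -/
import Mathlib

section
/- Let X and Y be compact metric spaces and ω a finite Borel (Radon) measure on X. Let Φ be a set-valued map from X to Y that is continuous at every point of X, single-valued ω-a.e., and surjective (Φ(X) = Y). Then the set function M_Φ defined by M_Φ(E) = ω(Φ⁻¹(E)) is a Radon measure on Y: the collection of sets E ⊆ Y with Φ⁻¹(E) ω-measurable is a σ-algebra containing the Borel sets, Φ⁻¹(K) is compact in X for every compact K ⊆ Y, and M_Φ is countably additive on this σ-algebra. -/
open Filter MeasureTheory Topology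

/-- `Φ⁻¹(E) = {x : Φ(x) ∩ E ≠ ∅}` for a set-valued map `Φ`. -/
def SVPreimage {X Y : Type*} (Φ : X → Set Y) (E : Set Y) : Set X :=
  {x | (Φ x ∩ E).Nonempty}

/-- Continuity of a set-valued map at a point: whenever `xₖ → x₀` and `yₖ ∈ Φ(xₖ)`, some
subsequence of `yₖ` converges to a point of `Φ(x₀)`. -/
def SVContinuousAt {X Y : Type*} [TopologicalSpace X] [TopologicalSpace Y]
    (Φ : X → Set Y) (x₀ : X) : Prop :=
  ∀ (xk : ℕ → X) (yk : ℕ → Y), Tendsto xk atTop (nhds x₀) → (∀ k, yk k ∈ Φ (xk k)) →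
    ∃ (s : ℕ → ℕ) (y₀ : Y), StrictMono s ∧ y₀ ∈ Φ x₀ ∧ Tendsto (yk ∘ s) atTop (nhds y₀)

lemma SVPreimage_empty {X Y : Type*} (Φ : X → Set Y) : SVPreimage Φ (∅ : Set Y) = ∅ := by
  ext x; simp [SVPreimage]

lemma SVPreimage_iUnion {X Y : Type*} (Φ : X → Set Y) (E : ℕ → Set Y) :
    SVPreimage Φ (⋃ i, E i) = ⋃ i, SVPreimage Φ (E i) := by
  ext x
  simp only [SVPreimage, Set.mem_setOf_eq, Set.mem_iUnion]
  constructor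
  · rintro ⟨y, hyΦ, hyU⟩
    rcases Set.mem_iUnion.1 hyU with ⟨i, hi⟩
    exact ⟨i, y, hyΦ, hi⟩
  · rintro ⟨i, y, hyΦ, hi⟩
    exact ⟨y, hyΦ, Set.mem_iUnion.2 ⟨i, hi⟩⟩

/-- Lemma 2.1: for `Φ ∈ C_s(X,Y)`, the set function `M_Φ(E) = ω(Φ⁻¹(E))` is a Radon measure:
the sets `E` with `Φ⁻¹(E)` `ω`-measurable form a σ-algebra containing the Borel sets,
`Φ⁻¹(K)` is compact for compact `K`, and `M_Φ` is countably additive on this σ-algebra. -/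
theorem stmt0 {X Y : Type*} [MetricSpace X] [CompactSpace X] [MetricSpace Y] [CompactSpace Y]
    [MeasurableSpace X] [BorelSpace X] [MeasurableSpace Y] [BorelSpace Y]
    (ω : Measure X) [IsFiniteMeasure ω]
    (Φ : X → Set Y)
    (hne : ∀ x, (Φ x).Nonempty)
    (hcont : ∀ x, SVContinuousAt Φ x)
    (hsv : ∀ᵐ x ∂ω, ∃ y, Φ x = {y})
    (hsurj : (⋃ x, Φ x) = Set.univ) :
    -- every Borel set belongs to the σ-algebra 𝒞 = {E : Φ⁻¹(E) is ω-measurable}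
    (∀ E : Set Y, MeasurableSet E → NullMeasurableSet (SVPreimage Φ E) ω) ∧
    -- 𝒞 is a σ-algebra: contains ∅, closed under complements and countable unions
    (NullMeasurableSet (SVPreimage Φ (∅ : Set Y)) ω) ∧
    (∀ E : Set Y, NullMeasurableSet (SVPreimage Φ E) ω →
      NullMeasurableSet (SVPreimage Φ Eᶜ) ω) ∧
    (∀ E : ℕ → Set Y, (∀ i, NullMeasurableSet (SVPreimage Φ (E i)) ω) →
      NullMeasurableSet (SVPreimage Φ (⋃ i, E i)) ω) ∧
    -- Φ⁻¹(K) is compact for every compact K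
    (∀ K : Set Y, IsCompact K → IsCompact (SVPreimage Φ K)) ∧
    -- countable additivity of M_Φ on 𝒞
    (∀ E : ℕ → Set Y, (∀ i, NullMeasurableSet (SVPreimage Φ (E i)) ω) →
      (Pairwise fun i j => Disjoint (E i) (E j)) →
      ω (SVPreimage Φ (⋃ i, E i)) = ∑' i, ω (SVPreimage Φ (E i))) := by
  -- compactness of preimages of compact sets
  have hcompact : ∀ K : Set Y, IsCompact K → IsCompact (SVPreimage Φ K) := by
    intro K hK
    have hclosed : IsSeqClosed (SVPreimage Φ K) := by
      intro xk x hmem hlim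
      choose yk hyΦ hyK using hmem
      obtain ⟨s, y₀, hs, hy₀Φ, hy₀lim⟩ := hcont x xk yk hlim hyΦ
      have hy₀K : y₀ ∈ K :=
        hK.isClosed.mem_of_tendsto hy₀lim (Eventually.of_forall fun n => hyK (s n))
      exact ⟨y₀, hy₀Φ, hy₀K⟩
    exact hclosed.isClosed.isCompact
  -- complement, a.e.
  have hcompl : ∀ E : Set Y, NullMeasurableSet (SVPreimage Φ E) ω →
      NullMeasurableSet (SVPreimage Φ Eᶜ) ω := by
    intro E hE
    have hae : SVPreimage Φ Eᶜ =ᵐ[ω] (SVPreimage Φ E)ᶜ := by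
      filter_upwards [hsv] with x hx
      rcases hx with ⟨y, hy⟩
      have : (x ∈ SVPreimage Φ Eᶜ) = (x ∈ (SVPreimage Φ E)ᶜ) := by
        simp only [SVPreimage, Set.mem_setOf_eq, Set.mem_compl_iff, hy,
          Set.singleton_inter_nonempty, Set.mem_compl_iff, eq_iff_iff]
      exact this
    exact (hE.compl).congr hae.symm
  have hunion : ∀ E : ℕ → Set Y, (∀ i, NullMeasurableSet (SVPreimage Φ (E i)) ω) →
      NullMeasurableSet (SVPreimage Φ (⋃ i, E i)) ω := by
    intro E hE
    rw [SVPreimage_iUnion]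
    exact NullMeasurableSet.iUnion hE
  have hempty : NullMeasurableSet (SVPreimage Φ (∅ : Set Y)) ω := by
    rw [SVPreimage_empty]; exact MeasurableSet.empty.nullMeasurableSet
  -- Borel sets
  have hborel : ∀ E : Set Y, MeasurableSet E → NullMeasurableSet (SVPreimage Φ E) ω := by
    have key : ∀ E : Set Y,
        MeasurableSet[MeasurableSpace.generateFrom {s : Set Y | IsClosed s}] E →
        NullMeasurableSet (SVPreimage Φ E) ω := by
      intro E hE
      induction hE with
      | basic s hs => exact ((hcompact s hs.isCompact).isClosed.measurableSet).nullMeasurableSet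
      | empty => exact hempty
      | compl s _ ih => exact hcompl s ih
      | iUnion f _ ih => exact hunion f ih
    intro E hE
    have heq : ‹MeasurableSpace Y› = MeasurableSpace.generateFrom {s : Set Y | IsClosed s} := by
      rw [BorelSpace.measurable_eq (α := Y), borel_eq_generateFrom_isClosed]
    exact key E (heq ▸ hE)
  refine ⟨hborel, hempty, hcompl, hunion, hcompact, ?_⟩
  -- countable additivity
  intro E hE hdisj
  rw [SVPreimage_iUnion]
  refine measure_iUnion₀ ?_ hE
  intro i j hij
  refine measure_mono_null ?_ (ae_iff.1 hsv)
  intro x hx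
  rcases hx with ⟨⟨y₁, hy₁Φ, hy₁⟩, ⟨y₂, hy₂Φ, hy₂⟩⟩
  simp only [Set.mem_setOf_eq]
  rintro ⟨y, hy⟩
  rw [hy, Set.mem_singleton_iff] at hy₁Φ hy₂Φ
  subst hy₁Φ; subst hy₂Φ
  exact (hdisj hij).le_bot ⟨hy₁, hy₂⟩
end

section
/- Let X and Y be compact metric spaces, ω a finite Borel measure on X, F ⊆ C(X), and T : F → C_s(X,Y) a map that is continuous at φ ∈ F. If φⱼ ∈ F and φⱼ → φ uniformly on X, then the measures M_{T(φⱼ)} converge weakly to M_{T(φ)} on Y; in particular limsup_{j→∞} M_{T(φⱼ)}(K) ≤ M_{T(φ)}(K) for every compact K ⊆ Y and liminf_{j→∞} M_{T(φⱼ)}(G) ≥ M_{T(φ)}(G) for every open G ⊆ Y. -/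
open Filter MeasureTheory Topology

/-- `Φ ∈ C_s(X,Y)`: nonempty values, continuous everywhere, single-valued `ω`-a.e.,
and surjective. -/
def IsCs {X Y : Type*} [TopologicalSpace X] [TopologicalSpace Y] [MeasurableSpace X]
    (ω : Measure X) (Φ : X → Set Y) : Prop :=
  (∀ x, (Φ x).Nonempty) ∧ (∀ x, SVContinuousAt Φ x) ∧
    (∀ᵐ x ∂ω, ∃ y, Φ x = {y}) ∧ (⋃ x, Φ x) = Set.univ

/-- Continuity of `T : F → C_s(X,Y)` at `φ ∈ F` (Definition 2.2). -/
def TContinuousAt {X Y : Type*} [TopologicalSpace X] [TopologicalSpace Y]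
    (F : Set C(X, ℝ)) (T : C(X, ℝ) → X → Set Y) (φ : C(X, ℝ)) : Prop :=
  ∀ φs : ℕ → C(X, ℝ), (∀ j, φs j ∈ F) →
    TendstoUniformly (fun j x => φs j x) (fun x => φ x) atTop →
    ∀ (x₀ : X) (ys : ℕ → Y), (∀ j, ys j ∈ T (φs j) x₀) →
      ∃ (s : ℕ → ℕ) (y₀ : Y), StrictMono s ∧ y₀ ∈ T φ x₀ ∧ Tendsto (ys ∘ s) atTop (nhds y₀)

/-- The set-valued preimage of a closed set under an everywhere continuous set-valued map
is closed. -/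
theorem svPreimage_isClosed {X Y : Type*} [MetricSpace X] [MetricSpace Y]
    {Φ : X → Set Y} (hc : ∀ x, SVContinuousAt Φ x) {K : Set Y} (hK : IsClosed K) :
    IsClosed (SVPreimage Φ K) := by
  refine IsSeqClosed.isClosed ?_
  intro xs x hxs hx
  choose ys hy using hxs
  obtain ⟨s, y₀, hs, hy₀, hty⟩ := hc x xs ys hx (fun n => (hy n).1)
  exact ⟨y₀, hy₀, hK.mem_of_tendsto hty (Eventually.of_forall fun k => (hy (s k)).2)⟩

/-- Uniform convergence passes to subsequences. -/
theorem tendstoUniformly_comp_strictMono {X : Type*} {f : ℕ → X → ℝ} {g : X → ℝ}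
    (h : TendstoUniformly f g atTop) {s : ℕ → ℕ} (hs : StrictMono s) :
    TendstoUniformly (fun k => f (s k)) g atTop :=
  fun u hu => hs.tendsto_atTop.eventually (h u hu)

/-- Lemma 2.3: if `T` is continuous at `φ` and `φⱼ → φ` uniformly, then
`M_{T(φⱼ)} → M_{T(φ)}` weakly: `limsup M_{T(φⱼ)}(K) ≤ M_{T(φ)}(K)` for compact `K` and
`liminf M_{T(φⱼ)}(G) ≥ M_{T(φ)}(G)` for open `G`. -/
theorem stmt1 {X Y : Type*} [MetricSpace X] [CompactSpace X] [MetricSpace Y] [CompactSpace Y]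
    [MeasurableSpace X] [BorelSpace X]
    (ω : Measure X) [IsFiniteMeasure ω]
    (F : Set C(X, ℝ)) (T : C(X, ℝ) → X → Set Y)
    (hTCs : ∀ f ∈ F, IsCs ω (T f))
    (φ : C(X, ℝ)) (hφ : φ ∈ F) (hTcont : TContinuousAt F T φ)
    (φs : ℕ → C(X, ℝ)) (hφs : ∀ j, φs j ∈ F)
    (hconv : TendstoUniformly (fun j x => φs j x) (fun x => φ x) atTop) :
    (∀ K : Set Y, IsCompact K →
      limsup (fun j => ω (SVPreimage (T (φs j)) K)) atTop ≤ ω (SVPreimage (T φ) K)) ∧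
    (∀ G : Set Y, IsOpen G →
      ω (SVPreimage (T φ) G) ≤ liminf (fun j => ω (SVPreimage (T (φs j)) G)) atTop) := by
  -- key subsequence extraction lemma
  have key : ∀ (s : ℕ → ℕ), StrictMono s → ∀ (x : X) (ys : ℕ → Y),
      (∀ k, ys k ∈ T (φs (s k)) x) →
      ∃ (t : ℕ → ℕ) (y₀ : Y), StrictMono t ∧ y₀ ∈ T φ x ∧
        Tendsto (ys ∘ t) atTop (nhds y₀) := by
    intro s hs x ys hys
    exact hTcont (fun k => φs (s k)) (fun k => hφs (s k))
      (tendstoUniformly_comp_strictMono hconv hs) x ys hys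
  constructor
  · -- compact (closed) sets
    intro K hK
    set A : ℕ → Set X := fun j => SVPreimage (T (φs j)) K with hA
    have hAclosed : ∀ j, IsClosed (A j) :=
      fun j => svPreimage_isClosed (hTCs (φs j) (hφs j)).2.1 hK.isClosed
    set B : ℕ → Set X := fun n => ⋃ j ∈ Set.Ici n, A j with hB
    have hBmeas : ∀ n, MeasurableSet (B n) :=
      fun n => MeasurableSet.biUnion (Set.to_countable _)
        (fun j _ => (hAclosed j).measurableSet)
    have hBanti : Antitone B := fun m n hmn =>
      Set.biUnion_subset_biUnion_left (Set.Ici_subset_Ici.2 hmn)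
    -- ⋂ B n ⊆ SVPreimage (T φ) K
    have hsub : (⋂ n, B n) ⊆ SVPreimage (T φ) K := by
      intro x hx
      have hfreq : ∃ᶠ j in atTop, x ∈ A j := by
        rw [frequently_atTop]
        intro n
        obtain ⟨j, hj, hxj⟩ := Set.mem_iUnion₂.1 (Set.mem_iInter.1 hx n)
        exact ⟨j, hj, hxj⟩
      obtain ⟨s, hs, hmem⟩ := extraction_of_frequently_atTop hfreq
      choose ys hy using fun k => hmem k
      obtain ⟨t, y₀, ht, hy₀, hty⟩ := key s hs x ys (fun k => (hy k).1)
      exact ⟨y₀, hy₀, hK.isClosed.mem_of_tendsto hty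
        (Eventually.of_forall fun k => (hy (t k)).2)⟩
    calc limsup (fun j => ω (A j)) atTop
        ≤ ⨅ n, ω (B n) := by
          refine le_iInf fun n => ?_
          refine limsup_le_of_le (by isBoundedDefault) ?_
          filter_upwards [eventually_ge_atTop n] with j hj
          exact measure_mono (Set.subset_biUnion_of_mem hj)
      _ = ω (⋂ n, B n) :=
          (hBanti.measure_iInter (fun n => (hBmeas n).nullMeasurableSet)
            ⟨0, measure_ne_top ω _⟩).symm
      _ ≤ ω (SVPreimage (T φ) K) := measure_mono hsub
  · -- open sets
    intro G hG
    set A : ℕ → Set X := fun j => SVPreimage (T (φs j)) G with hA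
    set C : ℕ → Set X := fun n => ⋂ j ∈ Set.Ici n, A j with hC
    have hCmono : Monotone C := fun m n hmn =>
      Set.biInter_subset_biInter_left (Set.Ici_subset_Ici.2 hmn)
    set N : Set X := {x | ¬ ∃ y, T φ x = {y}} with hN
    have hNnull : ω N = 0 := by
      have := (hTCs φ hφ).2.2.1
      rwa [MeasureTheory.ae_iff] at this
    -- a.e. point of SVPreimage (T φ) G is eventually in A j
    have hsub : SVPreimage (T φ) G ⊆ (⋃ n, C n) ∪ N := by
      intro x hx
      by_cases hxN : x ∈ N
      · exact Or.inr hxN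
      refine Or.inl ?_
      rw [hN, Set.mem_setOf_eq, not_not] at hxN
      obtain ⟨y, hy⟩ := hxN
      obtain ⟨y', hy'Φ, hy'G⟩ := hx
      rw [hy] at hy'Φ
      subst hy'Φ
      -- show eventually x ∈ A j
      by_contra hcon
      have hfreq : ∃ᶠ j in atTop, x ∉ A j := by
        rw [Set.mem_iUnion] at hcon
        push_neg at hcon
        rw [frequently_atTop]
        intro n
        obtain ⟨j, hj, hxj⟩ := by
          have := hcon n
          rw [hC, Set.mem_iInter₂] at this
          push_neg at this
          exact this
        exact ⟨j, hj, hxj⟩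
      obtain ⟨s, hs, hmem⟩ := extraction_of_frequently_atTop hfreq
      choose ys hyΦ using fun k => ((hTCs (φs (s k)) (hφs (s k))).1 x)
      have hynG : ∀ k, ys k ∉ G := by
        intro k hkG
        exact hmem k ⟨ys k, hyΦ k, hkG⟩
      obtain ⟨t, y₀, ht, hy₀, hty⟩ := key s hs x ys hyΦ
      rw [hy, Set.mem_singleton_iff] at hy₀
      subst hy₀
      have : y₀ ∈ Gᶜ := hG.isClosed_compl.mem_of_tendsto hty
        (Eventually.of_forall fun k => hynG (t k))
      exact this hy'G
    calc ω (SVPreimage (T φ) G)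
        ≤ ω ((⋃ n, C n) ∪ N) := measure_mono hsub
      _ ≤ ω (⋃ n, C n) + ω N := measure_union_le _ _
      _ = ω (⋃ n, C n) := by rw [hNnull, add_zero]
      _ = ⨆ n, ω (C n) := hCmono.measure_iUnion
      _ ≤ liminf (fun j => ω (A j)) atTop := by
          refine iSup_le fun n => ?_
          refine le_liminf_of_le (by isBoundedDefault) ?_
          filter_upwards [eventually_ge_atTop n] with j hj
          exact measure_mono (Set.biInter_subset_of_mem hj)
end

section
/- Let X, Y be compact metric spaces, ω a finite Borel measure on X, p₁,…,p_N distinct points of Y and g₁,…,g_N > 0 with N ≥ 2. Let F ⊆ C⁺(X) and T : F → C_s(X,Y) be such that F is T-concave and condition (A3) holds. Assume ω(X) = Σᵢ gᵢ and that there exist b₁⁰ ∈ (α_{p₁},β_{p₁}) and bᵢ⁰ ∈ (α_{pᵢ},β_{pᵢ}) (2 ≤ i ≤ N) such that ρ₀ = min_{1≤i≤N} h_{bᵢ⁰,pᵢ} satisfies M_{T(ρ₀)}({pᵢ}) ≤ gᵢ for 2 ≤ i ≤ N. Then there exist bᵢ ∈ (α_{pᵢ},β_{pᵢ}) for 2 ≤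 i ≤ N such that, with b₁ = b₁⁰, the function ρ(x) = min_{1≤i≤N} h_{bᵢ,pᵢ}(x) satisfies M_{T(ρ)}(E) = Σ_{i : pᵢ∈E} gᵢ for every Borel set E ⊆ Y, i.e. M_{T(ρ)} = Σᵢ gᵢ δ_{pᵢ}. -/
open Filter MeasureTheory Topology

open scoped ENNReal

set_option linter.unusedSectionVars false

namespace Stmt2Aux

structure Setup (X Y : Type*) [MetricSpace X] [CompactSpace X] [MetricSpace Y] [CompactSpace Y]
    [MeasurableSpace X] [BorelSpace X] (ω : Measure X) (N : ℕ) where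
  F : Set C(X, ℝ)
  T : C(X, ℝ) → X → Set Y
  α : Y → EReal
  β : Y → EReal
  h : ℝ → Y → C(X, ℝ)
  p : Fin N → Y
  g : Fin N → ℝ
  hN : 2 ≤ N
  hp : Function.Injective p
  hg : ∀ i, 0 < g i
  hFpos : ∀ f ∈ F, ∀ x, 0 < f x
  hA1 : ∀ f₁ ∈ F, ∀ f₂ ∈ F, f₁ ⊓ f₂ ∈ F
  hTCs : ∀ f ∈ F, IsCs ω (T f)
  hTcont : ∀ φ ∈ F, TContinuousAt F T φ
  hA2 : ∀ φ₁ ∈ F, ∀ φ₂ ∈ F, ∀ x₀ : X, φ₁ x₀ ≤ φ₂ x₀ → T φ₁ x₀ ⊆ T (φ₁ ⊓ φ₂) x₀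
  hA3mem : ∀ (y : Y) (t : ℝ), α y < (t : EReal) → (t : EReal) < β y → h t y ∈ F
  hA3a : ∀ (y : Y) (t : ℝ), α y < (t : EReal) → (t : EReal) < β y → ∀ x : X, y ∈ T (h t y) x
  hA3b : ∀ (y : Y) (t s : ℝ), α y < (t : EReal) → (s : EReal) < β y → t ≤ s →
      ∀ x, h t y x ≤ h s y x
  hA3c : ∀ (y : Y), ∀ ε : ℝ, 0 < ε → ∃ t₀ : ℝ, α y < (t₀ : EReal) ∧ (t₀ : EReal) < β y ∧
      ∀ t : ℝ, α y < (t : EReal) → t ≤ t₀ → ∀ x, h t y x < ε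
  hA3d : ∀ (y : Y) (t : ℝ), α y < (t : EReal) → (t : EReal) < β y →
      ∀ ε : ℝ, 0 < ε → ∃ δ : ℝ, 0 < δ ∧ ∀ t' : ℝ, α y < (t' : EReal) → (t' : EReal) < β y →
        |t' - t| < δ → ∀ x, |h t' y x - h t y x| ≤ ε
  hmass : ω Set.univ = ∑ i, ENNReal.ofReal (g i)

variable {X Y : Type*} [MetricSpace X] [CompactSpace X] [MetricSpace Y] [CompactSpace Y]
  [MeasurableSpace X] [BorelSpace X] {ω : Measure X} [IsFiniteMeasure ω] {N : ℕ} [NeZero N]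

instance : Nonempty (Fin N) := ⟨⟨0, Nat.pos_of_ne_zero (NeZero.ne N)⟩⟩

namespace Setup

variable (S : Setup X Y ω N)

/-- validity of a parameter vector -/
def Valid (b : Fin N → ℝ) : Prop :=
  ∀ i, S.α (S.p i) < (b i : EReal) ∧ (b i : EReal) < S.β (S.p i)

noncomputable def rho (b : Fin N → ℝ) : C(X, ℝ) :=
  Finset.univ.inf' Finset.univ_nonempty fun i => S.h (b i) (S.p i)

lemma rho_apply (b : Fin N → ℝ) (x : X) :
    S.rho b x = Finset.univ.inf' Finset.univ_nonempty (fun i => S.h (b i) (S.p i) x) :=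
  ContinuousMap.inf'_apply _ _ _

lemma rho_eq_iInf (b : Fin N → ℝ) (x : X) :
    S.rho b x = ⨅ i, S.h (b i) (S.p i) x := by
  rw [rho_apply S, Finset.inf'_univ_eq_ciInf]

lemma inf'_mem_F {b : Fin N → ℝ} (hb : S.Valid b) (t : Finset (Fin N)) (H : t.Nonempty) :
    (t.inf' H fun i => S.h (b i) (S.p i)) ∈ S.F :=
  Finset.inf'_mem S.F S.hA1 t H _ (fun i _ => S.hA3mem _ _ (hb i).1 (hb i).2)

lemma rho_mem_F {b : Fin N → ℝ} (hb : S.Valid b) : S.rho b ∈ S.F :=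
  S.inf'_mem_F hb _ _

/-- the sets `A_i(b) = (T ρ_b)^{-1}({p_i})` -/
def A (b : Fin N → ℝ) (i : Fin N) : Set X := SVPreimage (S.T (S.rho b)) {S.p i}

lemma mem_A_iff {b : Fin N → ℝ} {i : Fin N} {x : X} :
    x ∈ S.A b i ↔ S.p i ∈ S.T (S.rho b) x := by
  simp [A, SVPreimage, Set.Nonempty]

lemma erase_nonempty (hN : 2 ≤ N) (i : Fin N) : (Finset.univ.erase i).Nonempty := by
  rw [← Finset.card_pos, Finset.card_erase_of_mem (Finset.mem_univ i), Finset.card_univ,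
    Fintype.card_fin]
  omega

/-- key fact: if `h (b i) (p i)` attains the min at `x₀` then `p i ∈ T ρ_b x₀`. -/
lemma mem_T_rho_of_min {b : Fin N → ℝ} (hb : S.Valid b) {x₀ : X} {i : Fin N}
    (hmin : ∀ j, S.h (b i) (S.p i) x₀ ≤ S.h (b j) (S.p j) x₀) :
    S.p i ∈ S.T (S.rho b) x₀ := by
  set φ₁ : C(X, ℝ) := S.h (b i) (S.p i) with hφ₁
  set φ₂ : C(X, ℝ) := (Finset.univ.erase i).inf' (erase_nonempty S.hN i)
    (fun j => S.h (b j) (S.p j)) with hφ₂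
  have hφ₁F : φ₁ ∈ S.F := S.hA3mem _ _ (hb i).1 (hb i).2
  have hφ₂F : φ₂ ∈ S.F := S.inf'_mem_F hb _ _
  have hle : φ₁ x₀ ≤ φ₂ x₀ := by
    rw [hφ₂, ContinuousMap.inf'_apply]
    exact Finset.le_inf' _ _ (fun j _ => hmin j)
  have hrho : S.rho b = φ₁ ⊓ φ₂ := by
    ext x
    rw [rho_apply S, ContinuousMap.inf_apply, hφ₂, hφ₁, ContinuousMap.inf'_apply]
    apply le_antisymm
    · exact le_inf (Finset.inf'_le _ (Finset.mem_univ i))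
        (Finset.le_inf' _ _ fun j _ => Finset.inf'_le _ (Finset.mem_univ j))
    · apply Finset.le_inf'
      intro j _
      by_cases hj : j = i
      · subst hj; exact inf_le_left
      · exact le_trans inf_le_right
          (Finset.inf'_le _ (Finset.mem_erase.2 ⟨hj, Finset.mem_univ j⟩))
  have := S.hA2 φ₁ hφ₁F φ₂ hφ₂F x₀ hle
  rw [← hrho] at this
  exact this (S.hA3a _ _ (hb i).1 (hb i).2 x₀)

/-- each `x` has a minimizing index. -/
lemma exists_min (b : Fin N → ℝ) (x : X) :
    ∃ i, ∀ j, S.h (b i) (S.p i) x ≤ S.h (b j) (S.p j) x := by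
  obtain ⟨i, -, hi⟩ := Finset.exists_min_image Finset.univ
    (fun j => S.h (b j) (S.p j) x) Finset.univ_nonempty
  exact ⟨i, fun j => hi j (Finset.mem_univ j)⟩

lemma A_cover {b : Fin N → ℝ} (hb : S.Valid b) : (⋃ i, S.A b i) = Set.univ := by
  ext x
  simp only [Set.mem_iUnion, Set.mem_univ, iff_true]
  obtain ⟨i, hi⟩ := S.exists_min b x
  exact ⟨i, (S.mem_A_iff).2 (S.mem_T_rho_of_min hb hi)⟩

lemma A_closed {b : Fin N → ℝ} (hb : S.Valid b) (i : Fin N) : IsClosed (S.A b i) := by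
  have hcont := (S.hTCs _ (S.rho_mem_F hb)).2.1
  apply IsSeqClosed.isClosed
  intro xk x hxk hlim
  obtain ⟨s, y₀, -, hy₀, hys⟩ := hcont x xk (fun _ => S.p i) hlim
    (fun k => (S.mem_A_iff).1 (hxk k))
  have : y₀ = S.p i := by
    have : Tendsto (fun _ : ℕ => S.p i) atTop (nhds y₀) := hys
    exact (tendsto_nhds_unique tendsto_const_nhds this).symm
  rw [mem_A_iff]
  rwa [this] at hy₀

lemma A_measurable {b : Fin N → ℝ} (hb : S.Valid b) (i : Fin N) :
    MeasurableSet (S.A b i) := (S.A_closed hb i).measurableSet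

/-- a measurable null set off which `T ρ_b` is single-valued -/
lemma exists_null_Z {b : Fin N → ℝ} (hb : S.Valid b) :
    ∃ Z : Set X, MeasurableSet Z ∧ ω Z = 0 ∧ ∀ x ∉ Z, ∃ y, S.T (S.rho b) x = {y} := by
  have hae := (S.hTCs _ (S.rho_mem_F hb)).2.2.1
  rw [MeasureTheory.ae_iff] at hae
  refine ⟨toMeasurable ω {x | ¬ ∃ y, S.T (S.rho b) x = {y}},
    measurableSet_toMeasurable _ _, by rwa [measure_toMeasurable], fun x hx => ?_⟩
  by_contra hcon
  exact hx (subset_toMeasurable _ _ hcon)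

lemma measure_biUnion_A {b : Fin N → ℝ} (hb : S.Valid b) (I : Finset (Fin N)) :
    ω (⋃ i ∈ I, S.A b i) = ∑ i ∈ I, ω (S.A b i) := by
  classical
  obtain ⟨Z, hZm, hZ0, hZsv⟩ := S.exists_null_Z hb
  have key : ∀ i, ω (S.A b i ∩ Zᶜ) = ω (S.A b i) := by
    intro i
    refine le_antisymm (measure_mono Set.inter_subset_left) ?_
    calc ω (S.A b i) ≤ ω ((S.A b i ∩ Zᶜ) ∪ Z) := by
          apply measure_mono; intro x hx
          by_cases hxZ : x ∈ Z
          · exact Set.mem_union_right _ hxZ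
          · exact Set.mem_union_left _ ⟨hx, hxZ⟩
      _ ≤ ω (S.A b i ∩ Zᶜ) + ω Z := measure_union_le _ _
      _ = ω (S.A b i ∩ Zᶜ) := by rw [hZ0, add_zero]
  have hd : (I : Set (Fin N)).PairwiseDisjoint (fun i => S.A b i ∩ Zᶜ) := by
    intro i _ j _ hij
    refine Set.disjoint_left.2 fun x hxi hxj => hij ?_
    obtain ⟨y, hy⟩ := hZsv x hxi.2
    have h1 : S.p i = y := by
      have := (S.mem_A_iff).1 hxi.1; rw [hy] at this; exact this
    have h2 : S.p j = y := by
      have := (S.mem_A_iff).1 hxj.1; rw [hy] at this; exact this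
    exact S.hp (h1.trans h2.symm)
  have heq : ω (⋃ i ∈ I, S.A b i) = ω (⋃ i ∈ I, (S.A b i ∩ Zᶜ)) := by
    apply le_antisymm
    · have h1 : ω (⋃ i ∈ I, S.A b i) ≤ ω ((⋃ i ∈ I, (S.A b i ∩ Zᶜ)) ∪ Z) := by
        apply measure_mono; intro x hx
        simp only [Set.mem_iUnion] at hx
        obtain ⟨i, hiI, hxi⟩ := hx
        by_cases hxZ : x ∈ Z
        · exact Set.mem_union_right _ hxZ
        · exact Set.mem_union_left _ (Set.mem_iUnion₂.2 ⟨i, hiI, hxi, hxZ⟩)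
      have h2 : ω ((⋃ i ∈ I, (S.A b i ∩ Zᶜ)) ∪ Z) ≤ ω (⋃ i ∈ I, (S.A b i ∩ Zᶜ)) + ω Z :=
        measure_union_le _ _
      rw [hZ0, add_zero] at h2
      exact h1.trans h2
    · exact measure_mono (Set.iUnion₂_mono fun i _ => Set.inter_subset_left)
  rw [heq, measure_biUnion_finset hd (fun i _ => ((S.A_measurable hb i).inter hZm.compl))]
  exact Finset.sum_congr rfl (fun i _ => key i)

lemma sum_A {b : Fin N → ℝ} (hb : S.Valid b) :
    ∑ i, ω (S.A b i) = ω Set.univ := by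
  rw [← S.measure_biUnion_A hb Finset.univ]
  congr 1
  rw [← S.A_cover hb]
  simp

lemma rho_tendstoUniformly (bs : ℕ → Fin N → ℝ) (b' : Fin N → ℝ)
    (hbs : ∀ k, S.Valid (bs k)) (hb' : S.Valid b')
    (hconv : ∀ i, Tendsto (fun k => bs k i) atTop (𝓝 (b' i))) :
    TendstoUniformly (fun k x => S.rho (bs k) x) (fun x => S.rho b' x) atTop := by
  rw [Metric.tendstoUniformly_iff]
  intro ε hε
  have hhalf : 0 < ε / 2 := by linarith
  have hδ : ∀ i : Fin N, ∃ δ : ℝ, 0 < δ ∧ ∀ t' : ℝ, S.α (S.p i) < (t' : EReal) →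
      (t' : EReal) < S.β (S.p i) → |t' - b' i| < δ →
      ∀ x, |S.h t' (S.p i) x - S.h (b' i) (S.p i) x| ≤ ε / 2 :=
    fun i => S.hA3d (S.p i) (b' i) (hb' i).1 (hb' i).2 (ε / 2) hhalf
  choose δ hδpos hδ using hδ
  have hev : ∀ᶠ k in atTop, ∀ i, |bs k i - b' i| < δ i := by
    rw [Filter.eventually_all]
    intro i
    have := (hconv i).eventually (Metric.ball_mem_nhds (b' i) (hδpos i))
    simpa [Real.dist_eq] using this
  filter_upwards [hev] with k hk x
  have hbound : ∀ i : Fin N, |S.h (bs k i) (S.p i) x - S.h (b' i) (S.p i) x| ≤ ε / 2 :=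
    fun i => hδ i (bs k i) (hbs k i).1 (hbs k i).2 (hk i) x
  rw [Real.dist_eq]
  have h1 : S.rho (bs k) x ≤ S.rho b' x + ε / 2 := by
    obtain ⟨j, -, hj⟩ := Finset.exists_mem_eq_inf' Finset.univ_nonempty
      (fun i => S.h (b' i) (S.p i) x)
    rw [rho_apply S b', hj]
    calc S.rho (bs k) x ≤ S.h (bs k j) (S.p j) x := by
          rw [rho_apply]; exact Finset.inf'_le _ (Finset.mem_univ j)
      _ ≤ S.h (b' j) (S.p j) x + ε / 2 := by
          have := hbound j; rw [abs_le] at this; linarith [this.2]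
  have h2 : S.rho b' x ≤ S.rho (bs k) x + ε / 2 := by
    obtain ⟨j, -, hj⟩ := Finset.exists_mem_eq_inf' Finset.univ_nonempty
      (fun i => S.h (bs k i) (S.p i) x)
    rw [rho_apply S (bs k), hj]
    calc S.rho b' x ≤ S.h (b' j) (S.p j) x := by
          rw [rho_apply]; exact Finset.inf'_le _ (Finset.mem_univ j)
      _ ≤ S.h (bs k j) (S.p j) x + ε / 2 := by
          have := hbound j; rw [abs_le] at this; linarith [this.1]
  rw [abs_lt]
  constructor <;> linarith

/-- upper semicontinuity of the masses along a convergent sequence of parameters. -/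
lemma le_measure_A_of_tendsto (bs : ℕ → Fin N → ℝ) (b' : Fin N → ℝ)
    (hbs : ∀ k, S.Valid (bs k)) (hb' : S.Valid b')
    (hconv : ∀ i, Tendsto (fun k => bs k i) atTop (𝓝 (b' i))) (j : Fin N) {v : ℝ≥0∞}
    (hv : Tendsto (fun k => ω (S.A (bs k) j)) atTop (𝓝 v)) : v ≤ ω (S.A b' j) := by
  have hU := S.rho_tendstoUniformly bs b' hbs hb' hconv
  set U : ℕ → Set X := fun n => ⋃ k, ⋃ (_ : n ≤ k), S.A (bs k) j with hUdef
  have hsub : (⋂ n, U n) ⊆ S.A b' j := by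
    intro x hx
    simp only [hUdef, Set.mem_iInter, Set.mem_iUnion] at hx
    choose K hK1 hK2 using hx
    have hKtop : Tendsto K atTop atTop := tendsto_atTop_mono hK1 tendsto_id
    have hUK : TendstoUniformly (fun l x => S.rho (bs (K l)) x) (fun x => S.rho b' x) atTop := by
      rw [Metric.tendstoUniformly_iff] at hU ⊢
      intro ε hε
      exact hKtop.eventually (hU ε hε)
    obtain ⟨s, y₀, -, hy₀, hys⟩ := S.hTcont _ (S.rho_mem_F hb') (fun l => S.rho (bs (K l)))
      (fun l => S.rho_mem_F (hbs (K l))) hUK x (fun _ => S.p j)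
      (fun l => (S.mem_A_iff).1 (hK2 l))
    have : y₀ = S.p j := (tendsto_nhds_unique tendsto_const_nhds hys).symm
    rw [mem_A_iff]
    rwa [this] at hy₀
  have hUmeas : ∀ n, MeasurableSet (U n) :=
    fun n => MeasurableSet.iUnion fun k => MeasurableSet.iUnion fun _ => S.A_measurable (hbs k) j
  have hUanti : Antitone U := by
    intro n m hnm
    exact Set.iUnion₂_mono' fun k hk => ⟨k, hnm.trans hk, subset_rfl⟩
  have hInter : ω (⋂ n, U n) = ⨅ n, ω (U n) :=
    hUanti.measure_iInter (fun n => (hUmeas n).nullMeasurableSet) ⟨0, measure_ne_top ω _⟩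
  have hvle : ∀ n, v ≤ ω (U n) := by
    intro n
    apply le_of_tendsto hv
    filter_upwards [Filter.eventually_ge_atTop n] with k hk
    exact measure_mono (Set.subset_iUnion₂ (s := fun k _ => S.A (bs k) j) k hk)
  calc v ≤ ⨅ n, ω (U n) := le_iInf hvle
    _ = ω (⋂ n, U n) := hInter.symm
    _ ≤ ω (S.A b' j) := measure_mono hsub

/-- full convergence of the masses. -/
lemma tendsto_measure_A (bs : ℕ → Fin N → ℝ) (b' : Fin N → ℝ)
    (hbs : ∀ k, S.Valid (bs k)) (hb' : S.Valid b')
    (hconv : ∀ i, Tendsto (fun k => bs k i) atTop (𝓝 (b' i))) (j : Fin N) :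
    Tendsto (fun k => ω (S.A (bs k) j)) atTop (𝓝 (ω (S.A b' j))) := by
  apply Filter.tendsto_of_subseq_tendsto
  intro ns hns
  set w : ℕ → (Fin N → ℝ≥0∞) := fun k i => ω (S.A (bs (ns k)) i) with hwdef
  obtain ⟨v, -, ms, hms, hv⟩ := isCompact_univ.tendsto_subseq (x := w) (fun n => Set.mem_univ _)
  refine ⟨ms, ?_⟩
  have hvi : ∀ i, Tendsto (fun l => ω (S.A (bs (ns (ms l))) i)) atTop (𝓝 (v i)) := by
    intro i
    have := hv
    rw [tendsto_pi_nhds] at this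
    exact this i
  have hnsms : Tendsto (fun l => ns (ms l)) atTop atTop := hns.comp hms.tendsto_atTop
  have hconv' : ∀ i, Tendsto (fun l => bs (ns (ms l)) i) atTop (𝓝 (b' i)) :=
    fun i => (hconv i).comp hnsms
  have husc : ∀ i, v i ≤ ω (S.A b' i) :=
    fun i => S.le_measure_A_of_tendsto _ b' (fun l => hbs _) hb' hconv' i (hvi i)
  have hsumv : ∑ i, v i = ω Set.univ := by
    have h1 : Tendsto (fun l => ∑ i, ω (S.A (bs (ns (ms l))) i)) atTop (𝓝 (∑ i, v i)) :=
      tendsto_finset_sum _ (fun i _ => hvi i)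
    have h2 : (fun l => ∑ i, ω (S.A (bs (ns (ms l))) i)) = fun _ => ω Set.univ := by
      funext l; exact S.sum_A (hbs _)
    rw [h2] at h1
    exact tendsto_nhds_unique h1 tendsto_const_nhds
  have hvtop : ∀ i, v i ≠ ⊤ := fun i => ((husc i).trans_lt (measure_lt_top ω _)).ne
  have heq : ∀ i, v i = ω (S.A b' i) := by
    by_contra hcon
    push_neg at hcon
    obtain ⟨j₀, hj₀⟩ := hcon
    have hlt : (v j₀).toReal < (ω (S.A b' j₀)).toReal := by
      rcases lt_or_eq_of_le (husc j₀) with hlt | heq'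
      · exact ENNReal.toReal_strict_mono (measure_ne_top ω _) hlt
      · exact absurd heq' hj₀
    have hsum1 : ∑ i, (v i).toReal < ∑ i, (ω (S.A b' i)).toReal :=
      Finset.sum_lt_sum (fun i _ => ENNReal.toReal_mono (measure_ne_top ω _) (husc i))
        ⟨j₀, Finset.mem_univ j₀, hlt⟩
    have hsum2 : ∑ i, (v i).toReal = ∑ i, (ω (S.A b' i)).toReal := by
      rw [← ENNReal.toReal_sum (fun i _ => hvtop i),
        ← ENNReal.toReal_sum (fun i _ => measure_ne_top ω _), hsumv, S.sum_A hb']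
    linarith
  have := hvi j
  rw [heq j] at this
  exact this

/-- monotonicity: lowering the other coordinates while keeping coordinate `i` fixed
can only decrease the mass at `p i`. -/
lemma measure_A_mono {b c : Fin N → ℝ} (hb : S.Valid b) (hc : S.Valid c)
    (hle : ∀ j, b j ≤ c j) {i : Fin N} (hi : b i = c i) :
    ω (S.A b i) ≤ ω (S.A c i) := by
  set ψ : C(X, ℝ) := (Finset.univ.erase i).inf' (erase_nonempty S.hN i)
    (fun j => S.h (b j) (S.p j)) with hψdef
  have hψF : ψ ∈ S.F := S.inf'_mem_F hb _ _
  have hcF : S.rho c ∈ S.F := S.rho_mem_F hc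
  have hhb : ∀ j x, S.h (b j) (S.p j) x ≤ S.h (c j) (S.p j) x :=
    fun j x => S.hA3b (S.p j) (b j) (c j) (hb j).1 (hc j).2 (hle j) x
  have hrho : S.rho b = S.rho c ⊓ ψ := by
    ext x
    rw [rho_apply S b, ContinuousMap.inf_apply, hψdef, ContinuousMap.inf'_apply]
    apply le_antisymm
    · refine le_inf ?_ ?_
      · rw [rho_apply S c]
        exact Finset.le_inf' _ _ fun j _ =>
          le_trans (Finset.inf'_le _ (Finset.mem_univ j)) (hhb j x)
      · exact Finset.le_inf' _ _ fun j hj => Finset.inf'_le _ (Finset.mem_univ j)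
    · obtain ⟨j₀, -, hj₀⟩ := Finset.exists_mem_eq_inf' (Finset.univ_nonempty)
        (fun j => S.h (b j) (S.p j) x)
      rw [hj₀]
      by_cases hji : j₀ = i
      · subst hji
        refine le_trans inf_le_left ?_
        rw [rho_apply S c, hi]
        exact Finset.inf'_le _ (Finset.mem_univ j₀)
      · exact le_trans inf_le_right
          (Finset.inf'_le _ (Finset.mem_erase.2 ⟨hji, Finset.mem_univ j₀⟩))
  obtain ⟨Zb, hZbm, hZb0, hZbsv⟩ := S.exists_null_Z hb
  obtain ⟨Zc, hZcm, hZc0, hZcsv⟩ := S.exists_null_Z hc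
  have hsub : S.A b i ⊆ S.A c i ∪ (Zb ∪ Zc) := by
    intro x hx
    by_cases hxZ : x ∈ Zb ∪ Zc
    · exact Set.mem_union_right _ hxZ
    · rw [Set.mem_union] at hxZ
      push_neg at hxZ
      obtain ⟨y, hy⟩ := hZbsv x hxZ.1
      have hyi : y = S.p i := by
        have := (S.mem_A_iff).1 hx
        rw [hy] at this
        exact this.symm
      left
      rw [mem_A_iff]
      by_cases hcase : S.rho c x ≤ ψ x
      · have hsub2 := S.hA2 _ hcF _ hψF x hcase
        rw [← hrho, hy, hyi] at hsub2
        obtain ⟨z, hz⟩ := (S.hTCs _ hcF).1 x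
        have := hsub2 hz
        rw [Set.mem_singleton_iff] at this
        rwa [← this]
      · push_neg at hcase
        exfalso
        obtain ⟨j₀, hj₀mem, hj₀⟩ := Finset.exists_mem_eq_inf' (erase_nonempty S.hN i)
          (fun j => S.h (b j) (S.p j) x)
        have hψx : ψ x = S.h (b j₀) (S.p j₀) x := by
          rw [hψdef, ContinuousMap.inf'_apply]
          exact hj₀
        have hmin : ∀ l, S.h (b j₀) (S.p j₀) x ≤ S.h (b l) (S.p l) x := by
          intro l
          by_cases hli : l = i
          · subst hli
            have h1 : S.rho c x ≤ S.h (c l) (S.p l) x := by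
              rw [rho_apply S c]; exact Finset.inf'_le _ (Finset.mem_univ l)
            rw [← hi] at h1
            rw [← hψx]
            exact le_of_lt (lt_of_lt_of_le hcase h1)
          · rw [← hψx, hψdef, ContinuousMap.inf'_apply]
            exact Finset.inf'_le _ (Finset.mem_erase.2 ⟨hli, Finset.mem_univ l⟩)
        have hmem := S.mem_T_rho_of_min hb hmin
        rw [hy, hyi, Set.mem_singleton_iff] at hmem
        have : j₀ = i := S.hp hmem
        rw [Finset.mem_erase] at hj₀mem
        exact hj₀mem.1 this
  calc ω (S.A b i) ≤ ω (S.A c i ∪ (Zb ∪ Zc)) := measure_mono hsub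
    _ ≤ ω (S.A c i) + ω (Zb ∪ Zc) := measure_union_le _ _
    _ ≤ ω (S.A c i) + (ω Zb + ω Zc) := by gcongr; exact measure_union_le _ _
    _ = ω (S.A c i) := by rw [hZb0, hZc0, add_zero, add_zero]

include S in
lemma X_nonempty : Nonempty X := by
  by_contra hcon
  rw [not_nonempty_iff] at hcon
  have h1 : ω Set.univ = 0 := by
    have : (Set.univ : Set X) = ∅ := Set.univ_eq_empty_iff.2 hcon
    rw [this, measure_empty]
  rw [S.hmass] at h1
  rw [Finset.sum_eq_zero_iff] at h1
  have h2 := h1 ⟨0, Nat.pos_of_ne_zero (NeZero.ne N)⟩ (Finset.mem_univ _)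
  rw [ENNReal.ofReal_eq_zero] at h2
  exact absurd h2 (not_le.2 (S.hg _))

lemma exists_pos_lb {f : C(X, ℝ)} (hf : f ∈ S.F) : ∃ ε : ℝ, 0 < ε ∧ ∀ x, ε ≤ f x := by
  have : Nonempty X := S.X_nonempty
  obtain ⟨x₀, -, hx₀⟩ := isCompact_univ.exists_isMinOn (Set.univ_nonempty)
    f.continuous.continuousOn
  exact ⟨f x₀, S.hFpos f hf x₀, fun x => hx₀ (Set.mem_univ x)⟩

lemma A_eq_univ {b : Fin N → ℝ} (hb : S.Valid b) {i : Fin N}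
    (hdom : ∀ x, ∀ j, S.h (b i) (S.p i) x ≤ S.h (b j) (S.p j) x) :
    S.A b i = Set.univ := by
  ext x
  simp only [Set.mem_univ, iff_true]
  exact (S.mem_A_iff).2 (S.mem_T_rho_of_min hb (fun j => hdom x j))

lemma measure_A_zero {b : Fin N → ℝ} (hb : S.Valid b) (Sb : Finset (Fin N))
    (hSne : Sb.Nonempty) {j : Fin N} (hj : j ∉ Sb) (δ : ℝ)
    (hsmall : ∀ i ∈ Sb, ∀ x, S.h (b i) (S.p i) x < δ)
    (hbig : ∀ l ∉ Sb, ∀ x, δ ≤ S.h (b l) (S.p l) x) :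
    ω (S.A b j) = 0 := by
  obtain ⟨Z, hZm, hZ0, hZsv⟩ := S.exists_null_Z hb
  have hsub : S.A b j ⊆ Z := by
    intro x hx
    by_contra hxZ
    obtain ⟨y, hy⟩ := hZsv x hxZ
    obtain ⟨i₀, hi₀mem, hi₀⟩ := Finset.exists_min_image Sb
      (fun i => S.h (b i) (S.p i) x) hSne
    have hmin : ∀ l, S.h (b i₀) (S.p i₀) x ≤ S.h (b l) (S.p l) x := by
      intro l
      by_cases hl : l ∈ Sb
      · exact hi₀ l hl
      · exact le_of_lt (lt_of_lt_of_le (hsmall i₀ hi₀mem x) (hbig l hl x))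
    have h1 := S.mem_T_rho_of_min hb hmin
    have h2 := (S.mem_A_iff).1 hx
    rw [hy, Set.mem_singleton_iff] at h1 h2
    have : i₀ = j := S.hp (h1.trans h2.symm)
    rw [this] at hi₀mem
    exact hj hi₀mem
  exact le_antisymm (le_trans (measure_mono hsub) (le_of_eq hZ0)) zero_le

lemma valid_update {b : Fin N → ℝ} (hb : S.Valid b) {i : Fin N} {t : ℝ}
    (h1 : S.α (S.p i) < (t : EReal)) (h2 : (t : EReal) < S.β (S.p i)) :
    S.Valid (Function.update b i t) := by
  intro j
  by_cases hj : j = i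
  · subst hj; rw [Function.update_self]; exact ⟨h1, h2⟩
  · rw [Function.update_of_ne hj]; exact hb j

lemma continuousAt_coord {b : Fin N → ℝ} (hb : S.Valid b) (i : Fin N) {t : ℝ}
    (ht1 : S.α (S.p i) < (t : EReal)) (ht2 : (t : EReal) < S.β (S.p i)) :
    ContinuousAt (fun t' => (ω (S.A (Function.update b i t') i)).toReal) t := by
  classical
  rw [ContinuousAt, tendsto_iff_seq_tendsto]
  intro u hu
  set R : Set ℝ := {t' | S.α (S.p i) < (t' : EReal) ∧ (t' : EReal) < S.β (S.p i)} with hRdef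
  have hRopen : IsOpen R := by
    have : R = ((↑) : ℝ → EReal) ⁻¹' (Set.Ioi (S.α (S.p i)) ∩ Set.Iio (S.β (S.p i))) := by
      ext t'; simp [hRdef, Set.mem_Ioi, Set.mem_Iio, and_comm]
    rw [this]
    exact (isOpen_Ioi.inter isOpen_Iio).preimage continuous_coe_real_ereal
  have htR : t ∈ R := ⟨ht1, ht2⟩
  have hev : ∀ᶠ k in atTop, u k ∈ R := hu.eventually (hRopen.mem_nhds htR)
  set u' : ℕ → ℝ := fun k => if u k ∈ R then u k else t with hu'def
  have hu'R : ∀ k, u' k ∈ R := by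
    intro k
    by_cases hk : u k ∈ R
    · simp only [hu'def, if_pos hk]; exact hk
    · simpa [hu'def, hk] using htR
  have huu' : u =ᶠ[atTop] u' := by
    filter_upwards [hev] with k hk
    simp [hu'def, hk]
  have hu't : Tendsto u' atTop (𝓝 t) := hu.congr' huu'
  have hbs : ∀ k, S.Valid (Function.update b i (u' k)) :=
    fun k => S.valid_update hb (hu'R k).1 (hu'R k).2
  have hconv : ∀ j, Tendsto (fun k => Function.update b i (u' k) j) atTop
      (𝓝 (Function.update b i t j)) := by
    intro j
    by_cases hj : j = i
    · subst hj; simpa [Function.update_self] using hu't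
    · simp only [Function.update_of_ne hj]; exact tendsto_const_nhds
  have hmain := S.tendsto_measure_A _ _ hbs (S.valid_update hb ht1 ht2) hconv i
  have hmain' : Tendsto (fun k => (ω (S.A (Function.update b i (u' k)) i)).toReal) atTop
      (𝓝 ((ω (S.A (Function.update b i t) i)).toReal)) := by
    rw [ENNReal.tendsto_toReal_iff (fun k => measure_ne_top ω _) (measure_ne_top ω _)]
    exact hmain
  apply hmain'.congr'
  filter_upwards [huu'] with k hk
  simp [Function.comp, ← hk]

lemma step {b : Fin N → ℝ} (hb : S.Valid b)
    (hsmall : ∀ i : Fin N, i ≠ 0 → ω (S.A b i) ≤ ENNReal.ofReal (S.g i)) :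
    ∃ b' : Fin N → ℝ, (∀ j, S.α (S.p j) < (b' j : EReal) ∧ b' j ≤ b j) ∧ b' 0 = b 0 ∧
      ∀ i : Fin N, i ≠ 0 → ω (S.A (Function.update b i (b' i)) i) = ENNReal.ofReal (S.g i) := by
  classical
  have key : ∀ i : Fin N, ∃ t : ℝ, (S.α (S.p i) < (t : EReal) ∧ t ≤ b i) ∧ (i = 0 → t = b i) ∧
      (i ≠ 0 → ω (S.A (Function.update b i t) i) = ENNReal.ofReal (S.g i)) := by
    intro i
    by_cases hi : i = 0
    · exact ⟨b i, ⟨(hb i).1, le_refl _⟩, fun _ => rfl, fun hcon => absurd hi hcon⟩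
    · set ψ : C(X, ℝ) := (Finset.univ.erase i).inf' (erase_nonempty S.hN i)
        (fun j => S.h (b j) (S.p j)) with hψdef
      have hψF : ψ ∈ S.F := S.inf'_mem_F hb _ _
      obtain ⟨ε, hε, hεle⟩ := S.exists_pos_lb hψF
      obtain ⟨t₀, ht₀1, ht₀2, ht₀3⟩ := S.hA3c (S.p i) ε hε
      set tl : ℝ := min t₀ (b i) with htldef
      have htl1 : S.α (S.p i) < (tl : EReal) := by
        rcases min_cases t₀ (b i) with ⟨heq, -⟩ | ⟨heq, -⟩ <;> rw [htldef, heq]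
        · exact ht₀1
        · exact (hb i).1
      have htl2 : tl ≤ b i := min_le_right _ _
      have htlβ : (tl : EReal) < S.β (S.p i) :=
        lt_of_le_of_lt (EReal.coe_le_coe_iff.2 htl2) (hb i).2
      have hvtl : S.Valid (Function.update b i tl) := S.valid_update hb htl1 htlβ
      have hsmalltl : ∀ x, S.h tl (S.p i) x < ε := ht₀3 tl htl1 (min_le_left _ _)
      have hdom : S.A (Function.update b i tl) i = Set.univ := by
        apply S.A_eq_univ hvtl
        intro x j
        rw [Function.update_self]
        by_cases hj : j = i
        · subst hj; rw [Function.update_self]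
        · rw [Function.update_of_ne hj]
          refine le_trans (le_of_lt (hsmalltl x)) (le_trans (hεle x) ?_)
          rw [hψdef, ContinuousMap.inf'_apply]
          exact Finset.inf'_le _ (Finset.mem_erase.2 ⟨hj, Finset.mem_univ j⟩)
      set f : ℝ → ℝ := fun t => (ω (S.A (Function.update b i t) i)).toReal with hfdef
      have hcont : ContinuousOn f (Set.Icc tl (b i)) := by
        intro t ht
        have ht1 : S.α (S.p i) < (t : EReal) :=
          lt_of_lt_of_le htl1 (EReal.coe_le_coe_iff.2 ht.1)
        have ht2 : (t : EReal) < S.β (S.p i) :=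
          lt_of_le_of_lt (EReal.coe_le_coe_iff.2 ht.2) (hb i).2
        exact (S.continuousAt_coord hb i ht1 ht2).continuousWithinAt
      have hsum : (ω (Set.univ : Set X)).toReal = ∑ j, S.g j := by
        rw [S.hmass, ENNReal.toReal_sum (fun j _ => ENNReal.ofReal_ne_top)]
        exact Finset.sum_congr rfl fun j _ => ENNReal.toReal_ofReal (le_of_lt (S.hg j))
      have hflow : f tl = (ω (Set.univ : Set X)).toReal := by rw [hfdef]; simp only [hdom]
      have hfhigh : f (b i) ≤ S.g i := by
        rw [hfdef]
        simp only [Function.update_eq_self]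
        calc (ω (S.A b i)).toReal ≤ (ENNReal.ofReal (S.g i)).toReal :=
              ENNReal.toReal_mono ENNReal.ofReal_ne_top (hsmall i hi)
          _ = S.g i := ENNReal.toReal_ofReal (le_of_lt (S.hg i))
      have hgmem : S.g i ∈ Set.Icc (f (b i)) (f tl) := by
        refine ⟨hfhigh, ?_⟩
        rw [hflow, hsum]
        exact Finset.single_le_sum (fun j _ => le_of_lt (S.hg j)) (Finset.mem_univ i)
      obtain ⟨t, htmem, htval⟩ := intermediate_value_Icc' htl2 hcont hgmem
      refine ⟨t, ⟨lt_of_lt_of_le htl1 (EReal.coe_le_coe_iff.2 htmem.1), htmem.2⟩,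
        fun hcon => absurd hcon hi, fun _ => ?_⟩
      rw [← ENNReal.ofReal_toReal (measure_ne_top ω (S.A (Function.update b i t) i))]
      rw [show (ω (S.A (Function.update b i t) i)).toReal = S.g i from htval]
  choose b' h1 h2 h3 using key
  exact ⟨b', h1, h2 0 rfl, h3⟩

lemma main (b0 : Fin N → ℝ) (hb0 : S.Valid b0)
    (hsmall0 : ∀ i : Fin N, i ≠ 0 → ω (S.A b0 i) ≤ ENNReal.ofReal (S.g i)) :
    ∃ b : Fin N → ℝ, b 0 = b0 0 ∧ S.Valid b ∧ ∀ i, ω (S.A b i) = ENNReal.ofReal (S.g i) := by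
  classical
  set P : (Fin N → ℝ) → Prop := fun b => S.Valid b ∧ b 0 = b0 0 ∧
    ∀ i : Fin N, i ≠ 0 → ω (S.A b i) ≤ ENNReal.ofReal (S.g i) with hPdef
  have hstep : ∀ b, P b → ∃ b', (P b' ∧ (∀ j, b' j ≤ b j) ∧ b' 0 = b 0) ∧
      ∀ i : Fin N, i ≠ 0 →
        ω (S.A (Function.update b i (b' i)) i) = ENNReal.ofReal (S.g i) := by
    intro b hPb
    obtain ⟨b', h1, h2, h3⟩ := S.step hPb.1 hPb.2.2
    have hvalid' : S.Valid b' := fun j => ⟨(h1 j).1,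
      lt_of_le_of_lt (EReal.coe_le_coe_iff.2 (h1 j).2) ((hPb.1 j).2)⟩
    refine ⟨b', ⟨⟨hvalid', by rw [h2, hPb.2.1], fun i hi => ?_⟩, fun j => (h1 j).2, h2⟩, h3⟩
    have hu : S.Valid (Function.update b i (b' i)) :=
      S.valid_update hPb.1 (h1 i).1 (hvalid' i).2
    have hle : ∀ j, b' j ≤ Function.update b i (b' i) j := by
      intro j; by_cases hj : j = i
      · subst hj; rw [Function.update_self]
      · rw [Function.update_of_ne hj]; exact (h1 j).2
    have hmono := S.measure_A_mono hvalid' hu hle (i := i)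
      (by rw [Function.update_self])
    rw [h3 i hi] at hmono
    exact hmono
  choose! st hst using hstep
  set B : ℕ → Fin N → ℝ := fun k => st^[k] b0 with hBdef
  have hBsucc : ∀ k, B (k + 1) = st (B k) := by
    intro k; rw [hBdef]; exact Function.iterate_succ_apply' st k b0
  have hPB : ∀ k, P (B k) := by
    intro k
    induction k with
    | zero => exact ⟨hb0, rfl, hsmall0⟩
    | succ k ih => rw [hBsucc]; exact (hst (B k) ih).1.1
  have hBle : ∀ k j, B (k + 1) j ≤ B k j := by
    intro k j; rw [hBsucc]; exact (hst (B k) (hPB k)).1.2.1 j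
  have hBanti : ∀ j, Antitone (fun k => B k j) :=
    fun j => antitone_nat_of_succ_le (fun k => hBle k j)
  have hB0coord : ∀ k, B k 0 = b0 0 := fun k => (hPB k).2.1
  have hBupdate : ∀ k, ∀ i : Fin N, i ≠ 0 →
      ω (S.A (Function.update (B k) i (B (k + 1) i)) i) = ENNReal.ofReal (S.g i) := by
    intro k i hi; rw [hBsucc]; exact (hst (B k) (hPB k)).2 i hi
  -- all coordinates stay bounded away from α
  have Hlb : ∀ i, ∃ t : ℝ, S.α (S.p i) < (t : EReal) ∧ ∀ k, t ≤ B k i := by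
    by_contra hcon
    push_neg at hcon
    obtain ⟨i₀, hi₀⟩ := hcon
    set Sb : Finset (Fin N) := Finset.univ.filter
      (fun i => ¬ ∃ t : ℝ, S.α (S.p i) < (t : EReal) ∧ ∀ k, t ≤ B k i) with hSbdef
    have hi₀Sb : i₀ ∈ Sb := by
      rw [hSbdef, Finset.mem_filter]
      refine ⟨Finset.mem_univ _, ?_⟩
      rintro ⟨t, ht1, ht2⟩
      obtain ⟨k, hk⟩ := hi₀ t ht1
      exact absurd (ht2 k) (not_le.2 hk)
    have h0Sb : (0 : Fin N) ∉ Sb := by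
      rw [hSbdef, Finset.mem_filter]
      rintro ⟨-, hbad⟩
      exact hbad ⟨b0 0, (hb0 0).1, fun k => le_of_eq (hB0coord k).symm⟩
    have hεl : ∀ l : Fin N, l ∉ Sb → ∃ ε : ℝ, 0 < ε ∧ ∀ k x, ε ≤ S.h (B k l) (S.p l) x := by
      intro l hl
      rw [hSbdef, Finset.mem_filter, not_and, not_not] at hl
      obtain ⟨t, ht1, ht2⟩ := hl (Finset.mem_univ l)
      have ht2' : (t : EReal) < S.β (S.p l) :=
        lt_of_le_of_lt (EReal.coe_le_coe_iff.2 (ht2 0)) (((hPB 0).1 l).2)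
      obtain ⟨ε, hε, hεle⟩ := S.exists_pos_lb (S.hA3mem (S.p l) t ht1 ht2')
      exact ⟨ε, hε, fun k x => le_trans (hεle x)
        (S.hA3b (S.p l) t (B k l) ht1 (((hPB k).1 l).2) (ht2 k) x)⟩
    choose! εl hεlpos hεlle using hεl
    set Sc : Finset (Fin N) := Finset.univ.filter (fun l => l ∉ Sb) with hScdef
    have h0Sc : (0 : Fin N) ∈ Sc := by rw [hScdef, Finset.mem_filter]; exact ⟨Finset.mem_univ _, h0Sb⟩
    have hScne : Sc.Nonempty := ⟨0, h0Sc⟩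
    set δ : ℝ := Sc.inf' hScne εl with hδdef
    have hδpos : 0 < δ := by
      rw [hδdef, Finset.lt_inf'_iff]
      intro l hl
      rw [hScdef, Finset.mem_filter] at hl
      exact hεlpos l hl.2
    have hδle : ∀ l ∉ Sb, δ ≤ εl l := by
      intro l hl
      exact Finset.inf'_le _ (by rw [hScdef, Finset.mem_filter]; exact ⟨Finset.mem_univ _, hl⟩)
    have hKi : ∀ i ∈ Sb, ∃ K, ∀ x, S.h (B K i) (S.p i) x < δ := by
      intro i hi
      rw [hSbdef, Finset.mem_filter] at hi
      have hbad := hi.2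
      push_neg at hbad
      obtain ⟨t₀, ht₀1, ht₀2, ht₀3⟩ := S.hA3c (S.p i) δ hδpos
      have ht₁α : S.α (S.p i) < ((min t₀ (B 0 i) : ℝ) : EReal) := by
        rcases min_cases t₀ (B 0 i) with ⟨heq, -⟩ | ⟨heq, -⟩ <;> rw [heq]
        · exact ht₀1
        · exact ((hPB 0).1 i).1
      obtain ⟨k, hk⟩ := hbad (min t₀ (B 0 i)) ht₁α
      exact ⟨k, fun x => ht₀3 (B k i) (((hPB k).1 i).1)
        (le_trans (le_of_lt hk) (min_le_left _ _)) x⟩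
    choose! Ki hKival using hKi
    set kstar : ℕ := Sb.sup Ki with hkstardef
    have hz := S.measure_A_zero ((hPB kstar).1) Sb ⟨i₀, hi₀Sb⟩ h0Sb δ
      (fun i hiSb x => by
        refine lt_of_le_of_lt ?_ (hKival i hiSb x)
        exact S.hA3b (S.p i) (B kstar i) (B (Ki i) i) (((hPB kstar).1 i).1)
          (((hPB (Ki i)).1 i).2) (hBanti i (Finset.le_sup hiSb)) x)
      (fun l hl x => le_trans (hδle l hl) (hεlle l hl kstar x))
    -- contradiction with the mass bounds
    have hsumA := S.sum_A ((hPB kstar).1)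
    rw [S.hmass] at hsumA
    have hdecompA : ω (S.A (B kstar) 0) + ∑ i ∈ Finset.univ.erase 0, ω (S.A (B kstar) i)
        = ∑ i, ENNReal.ofReal (S.g i) := by
      rw [Finset.add_sum_erase Finset.univ (fun i => ω (S.A (B kstar) i))
        (Finset.mem_univ (0 : Fin N))]
      exact hsumA
    have hdecompg : ENNReal.ofReal (S.g 0) + ∑ i ∈ Finset.univ.erase 0, ENNReal.ofReal (S.g i)
        = ∑ i, ENNReal.ofReal (S.g i) :=
      Finset.add_sum_erase Finset.univ (fun i => ENNReal.ofReal (S.g i))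
        (Finset.mem_univ (0 : Fin N))
    have hle2 : ∑ i ∈ Finset.univ.erase 0, ω (S.A (B kstar) i)
        ≤ ∑ i ∈ Finset.univ.erase 0, ENNReal.ofReal (S.g i) :=
      Finset.sum_le_sum fun i hi => (hPB kstar).2.2 i (Finset.mem_erase.1 hi).1
    rw [hz, zero_add] at hdecompA
    have hcontra : ENNReal.ofReal (S.g 0) + ∑ i ∈ Finset.univ.erase 0, ENNReal.ofReal (S.g i)
        ≤ 0 + ∑ i ∈ Finset.univ.erase 0, ENNReal.ofReal (S.g i) := by
      rw [zero_add, hdecompg, ← hdecompA]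
      exact hle2
    have : ENNReal.ofReal (S.g 0) ≤ 0 := ENNReal.le_of_add_le_add_right
      (by
        apply ne_of_lt
        calc ∑ i ∈ Finset.univ.erase 0, ENNReal.ofReal (S.g i)
            ≤ ∑ i, ENNReal.ofReal (S.g i) :=
              Finset.sum_le_sum_of_subset (Finset.erase_subset _ _)
          _ < ⊤ := by
              rw [← S.hmass]; exact measure_lt_top ω _) hcontra
    rw [nonpos_iff_eq_zero, ENNReal.ofReal_eq_zero] at this
    exact absurd this (not_le.2 (S.hg 0))
  choose tlb htlb1 htlb2 using Hlb
  set binf : Fin N → ℝ := fun i => ⨅ k, B k i with hbinfdef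
  have hbdd : ∀ i, BddBelow (Set.range fun k => B k i) := by
    intro i
    refine ⟨tlb i, ?_⟩
    rintro r ⟨k, rfl⟩
    exact htlb2 i k
  have hconvB : ∀ i, Tendsto (fun k => B k i) atTop (𝓝 (binf i)) :=
    fun i => tendsto_atTop_ciInf (hBanti i) (hbdd i)
  have hlbB : ∀ i, tlb i ≤ binf i := fun i => le_ciInf (fun k => htlb2 i k)
  have hubB : ∀ i, binf i ≤ B 0 i := fun i => ciInf_le (hbdd i) 0
  have hbinfvalid : S.Valid binf := fun i =>
    ⟨lt_of_lt_of_le (htlb1 i) (EReal.coe_le_coe_iff.2 (hlbB i)),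
      lt_of_le_of_lt (EReal.coe_le_coe_iff.2 (hubB i)) (((hPB 0).1 i).2)⟩
  have hbinf0 : binf 0 = b0 0 := by
    rw [hbinfdef]
    simp only
    rw [show (fun k => B k 0) = fun _ : ℕ => b0 0 from funext hB0coord]
    exact ciInf_const
  have hmasses : ∀ i : Fin N, i ≠ 0 → ω (S.A binf i) = ENNReal.ofReal (S.g i) := by
    intro i hi
    set cs : ℕ → Fin N → ℝ := fun k => Function.update (B k) i (B (k + 1) i) with hcsdef
    have hcsvalid : ∀ k, S.Valid (cs k) := fun k =>
      S.valid_update ((hPB k).1) (((hPB (k + 1)).1 i).1) (((hPB (k + 1)).1 i).2)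
    have hcsconv : ∀ j, Tendsto (fun k => cs k j) atTop (𝓝 (binf j)) := by
      intro j
      by_cases hj : j = i
      · subst hj
        simp only [hcsdef, Function.update_self]
        exact (hconvB j).comp (tendsto_add_atTop_nat 1)
      · simp only [hcsdef, Function.update_of_ne hj]
        exact hconvB j
    have hlim := S.tendsto_measure_A cs binf hcsvalid hbinfvalid hcsconv i
    have hconst : (fun k => ω (S.A (cs k) i)) = fun _ => ENNReal.ofReal (S.g i) :=
      funext fun k => hBupdate k i hi
    rw [hconst] at hlim
    exact (tendsto_nhds_unique tendsto_const_nhds hlim).symm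
  have h0 : ω (S.A binf 0) = ENNReal.ofReal (S.g 0) := by
    have hsumA := S.sum_A hbinfvalid
    rw [S.hmass] at hsumA
    have hdecompA : ω (S.A binf 0) + ∑ i ∈ Finset.univ.erase 0, ω (S.A binf i)
        = ∑ i, ENNReal.ofReal (S.g i) := by
      rw [Finset.add_sum_erase Finset.univ (fun i => ω (S.A binf i))
        (Finset.mem_univ (0 : Fin N))]
      exact hsumA
    have hdecompg : ENNReal.ofReal (S.g 0) + ∑ i ∈ Finset.univ.erase 0, ENNReal.ofReal (S.g i)
        = ∑ i, ENNReal.ofReal (S.g i) :=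
      Finset.add_sum_erase Finset.univ (fun i => ENNReal.ofReal (S.g i))
        (Finset.mem_univ (0 : Fin N))
    have herase : ∑ i ∈ Finset.univ.erase 0, ω (S.A binf i)
        = ∑ i ∈ Finset.univ.erase 0, ENNReal.ofReal (S.g i) :=
      Finset.sum_congr rfl fun i hi => hmasses i (Finset.mem_erase.1 hi).1
    rw [herase] at hdecompA
    rw [← hdecompg] at hdecompA
    exact (ENNReal.add_left_inj (by
      apply ne_of_lt
      calc ∑ i ∈ Finset.univ.erase 0, ENNReal.ofReal (S.g i)
          ≤ ∑ i, ENNReal.ofReal (S.g i) :=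
            Finset.sum_le_sum_of_subset (Finset.erase_subset _ _)
        _ < ⊤ := by rw [← S.hmass]; exact measure_lt_top ω _)).1 hdecompA
  refine ⟨binf, hbinf0, hbinfvalid, fun i => ?_⟩
  by_cases hi : i = 0
  · subst hi; exact h0
  · exact hmasses i hi

lemma final {b : Fin N → ℝ} (hb : S.Valid b)
    (hA : ∀ i, ω (S.A b i) = ENNReal.ofReal (S.g i)) (E : Set Y) :
    ω (SVPreimage (S.T (S.rho b)) E)
      = ∑ i, E.indicator (fun _ => ENNReal.ofReal (S.g i)) (S.p i) := by
  classical
  obtain ⟨Z, hZm, hZ0, hZsv⟩ := S.exists_null_Z hb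
  set I : Finset (Fin N) := Finset.univ.filter (fun i => S.p i ∈ E) with hIdef
  have hsub1 : (⋃ i ∈ I, S.A b i) ⊆ SVPreimage (S.T (S.rho b)) E := by
    intro x hx
    rw [Set.mem_iUnion₂] at hx
    obtain ⟨i, hiI, hxi⟩ := hx
    rw [hIdef, Finset.mem_filter] at hiI
    exact ⟨S.p i, (S.mem_A_iff).1 hxi, hiI.2⟩
  have hsub2 : SVPreimage (S.T (S.rho b)) E ⊆ (⋃ i ∈ I, S.A b i) ∪ Z := by
    intro x hx
    by_cases hxZ : x ∈ Z
    · exact Set.mem_union_right _ hxZ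
    · left
      obtain ⟨y, hy⟩ := hZsv x hxZ
      obtain ⟨y', hy'T, hy'E⟩ := hx
      rw [hy, Set.mem_singleton_iff] at hy'T
      obtain ⟨i₀, hi₀⟩ := S.exists_min b x
      have hpi₀ := S.mem_T_rho_of_min hb hi₀
      rw [hy, Set.mem_singleton_iff] at hpi₀
      refine Set.mem_iUnion₂.2 ⟨i₀, ?_, (S.mem_A_iff).2 ?_⟩
      · rw [hIdef, Finset.mem_filter]
        refine ⟨Finset.mem_univ _, ?_⟩
        rw [hpi₀, ← hy'T]
        exact hy'E
      · rw [hy]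
        exact Set.mem_singleton_iff.2 hpi₀
  have heq : ω (SVPreimage (S.T (S.rho b)) E) = ω (⋃ i ∈ I, S.A b i) := by
    apply le_antisymm
    · calc ω (SVPreimage (S.T (S.rho b)) E) ≤ ω ((⋃ i ∈ I, S.A b i) ∪ Z) :=
            measure_mono hsub2
        _ ≤ ω (⋃ i ∈ I, S.A b i) + ω Z := measure_union_le _ _
        _ = ω (⋃ i ∈ I, S.A b i) := by rw [hZ0, add_zero]
    · exact measure_mono hsub1
  rw [heq, S.measure_biUnion_A hb I]
  have h1 : ∑ i ∈ I, ω (S.A b i) = ∑ i ∈ I, ENNReal.ofReal (S.g i) :=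
    Finset.sum_congr rfl fun i _ => hA i
  rw [h1, hIdef, Finset.sum_filter]
  apply Finset.sum_congr rfl
  intro i _
  rw [Set.indicator_apply]

end Setup

end Stmt2Aux

/-- Theorem 2.5 (concave case, discrete target measure). -/
theorem stmt2 {X Y : Type*} [MetricSpace X] [CompactSpace X] [MetricSpace Y] [CompactSpace Y]
    [MeasurableSpace X] [BorelSpace X] [MeasurableSpace Y] [BorelSpace Y]
    (ω : Measure X) [IsFiniteMeasure ω]
    (F : Set C(X, ℝ)) (T : C(X, ℝ) → X → Set Y)
    (α β : Y → EReal) (h : ℝ → Y → C(X, ℝ))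
    -- F ⊆ C⁺(X)
    (hFpos : ∀ f ∈ F, ∀ x, 0 < f x)
    -- (A1)
    (hA1 : ∀ f₁ ∈ F, ∀ f₂ ∈ F, f₁ ⊓ f₂ ∈ F)
    -- T maps F into C_s(X,Y)
    (hTCs : ∀ f ∈ F, IsCs ω (T f))
    -- T is continuous at each φ ∈ F
    (hTcont : ∀ φ ∈ F, TContinuousAt F T φ)
    -- (A2)
    (hA2 : ∀ φ₁ ∈ F, ∀ φ₂ ∈ F, ∀ x₀ : X, φ₁ x₀ ≤ φ₂ x₀ → T φ₁ x₀ ⊆ T (φ₁ ⊓ φ₂) x₀)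
    -- (A3): the family h_{t,y} ⊆ F with properties (a)-(d)
    (hA3mem : ∀ (y : Y) (t : ℝ), α y < (t : EReal) → (t : EReal) < β y → h t y ∈ F)
    (hA3a : ∀ (y : Y) (t : ℝ), α y < (t : EReal) → (t : EReal) < β y → ∀ x : X, y ∈ T (h t y) x)
    (hA3b : ∀ (y : Y) (t s : ℝ), α y < (t : EReal) → (s : EReal) < β y → t ≤ s →
      ∀ x, h t y x ≤ h s y x)
    (hA3c : ∀ (y : Y), ∀ ε : ℝ, 0 < ε → ∃ t₀ : ℝ, α y < (t₀ : EReal) ∧ (t₀ : EReal) < β y ∧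
      ∀ t : ℝ, α y < (t : EReal) → t ≤ t₀ → ∀ x, h t y x < ε)
    (hA3d : ∀ (y : Y) (t : ℝ), α y < (t : EReal) → (t : EReal) < β y →
      ∀ ε : ℝ, 0 < ε → ∃ δ : ℝ, 0 < δ ∧ ∀ t' : ℝ, α y < (t' : EReal) → (t' : EReal) < β y →
        |t' - t| < δ → ∀ x, |h t' y x - h t y x| ≤ ε)
    -- the data: distinct points p_i and masses g_i, N ≥ 2
    {N : ℕ} [NeZero N] (hN : 2 ≤ N)
    (p : Fin N → Y) (hp : Function.Injective p)
    (g : Fin N → ℝ) (hg : ∀ i, 0 < g i)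
    -- conservation of energy
    (hmass : ω Set.univ = ∑ i, ENNReal.ofReal (g i))
    -- existence of ρ₀ = min h_{bᵢ⁰,pᵢ} with M_{T(ρ₀)}({pᵢ}) ≤ gᵢ for i ≥ 2
    (b0 : Fin N → ℝ) (hb0 : ∀ i, α (p i) < (b0 i : EReal) ∧ (b0 i : EReal) < β (p i))
    (ρ0 : C(X, ℝ)) (hρ0 : ∀ x, ρ0 x = ⨅ i, h (b0 i) (p i) x)
    (hρ0small : ∀ i : Fin N, i ≠ 0 → ω (SVPreimage (T ρ0) {p i}) ≤ ENNReal.ofReal (g i)) :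
    ∃ b : Fin N → ℝ, b 0 = b0 0 ∧
      (∀ i, α (p i) < (b i : EReal) ∧ (b i : EReal) < β (p i)) ∧
      ∃ ρ : C(X, ℝ), (∀ x, ρ x = ⨅ i, h (b i) (p i) x) ∧
        ∀ E : Set Y, MeasurableSet E →
          ω (SVPreimage (T ρ) E) = ∑ i, E.indicator (fun _ => ENNReal.ofReal (g i)) (p i) := by
  classical
  set S : Stmt2Aux.Setup X Y ω N :=
    { F := F, T := T, α := α, β := β, h := h, p := p, g := g, hN := hN, hp := hp, hg := hg,
      hFpos := hFpos, hA1 := hA1, hTCs := hTCs, hTcont := hTcont, hA2 := hA2,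
      hA3mem := hA3mem, hA3a := hA3a, hA3b := hA3b, hA3c := hA3c, hA3d := hA3d,
      hmass := hmass } with hSdef
  have hb0' : S.Valid b0 := fun i => hb0 i
  have hρ0eq : ρ0 = S.rho b0 := by
    ext x
    rw [hρ0 x, Stmt2Aux.Setup.rho_eq_iInf S b0 x]
  have hsmall0 : ∀ i : Fin N, i ≠ 0 → ω (S.A b0 i) ≤ ENNReal.ofReal (S.g i) := by
    intro i hi
    have h2 := hρ0small i hi
    rw [hρ0eq] at h2
    exact h2
  obtain ⟨b, hb0eq, hbvalid, hbmass⟩ := S.main b0 hb0' hsmall0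
  refine ⟨b, hb0eq, fun i => hbvalid i, S.rho b, fun x => S.rho_eq_iInf b x, fun E _ => ?_⟩
  exact S.final hbvalid hbmass E
end

section
/- In the T-concave setting with (A3), assume additionally that X is connected, that ω(E) > 0 for every nonempty open set E ⊆ X, and that (A3)(b) is strengthened to h_{t,y₀}(x) < h_{s,y₀}(x) for all x whenever t < s. Let ρ = min_{1≤i≤N} h_{bᵢ,pᵢ} and ρ* = min_{1≤i≤N} h_{bᵢ*,pᵢ} both satisfy M_{T(ρ)} = M_{T(ρ*)} = Σᵢ gᵢ δ_{pᵢ} with g₁,…,g_N > 0 and p₁,…,p_N ∈ Y distinct. Then: (a) if b₁* ≤ b₁ then bᵢ* ≤ bᵢ for all 1 ≤ i ≤ N, and if b₁* = b₁ then bᵢ* = bᵢ for all i; (b) if ρ(x₀) = ρ*(x₀) for some x₀ ∈ X then ρ = ρ* on X. -/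
open Filter MeasureTheory Topology

set_option linter.unusedSectionVars false

section AuxKey

lemma fin_iInf_eq_inf' {N : ℕ} [NeZero N] (φ : Fin N → ℝ) :
    (⨅ i, φ i) = Finset.univ.inf' Finset.univ_nonempty φ :=
  le_antisymm
    (Finset.le_inf' _ _ fun i _ => ciInf_le (Finite.bddBelow_range φ) i)
    (le_ciInf fun i => Finset.inf'_le _ (Finset.mem_univ i))

variable {X Y : Type*} [MetricSpace X] [CompactSpace X] [MetricSpace Y] [CompactSpace Y]
    [MeasurableSpace X] [BorelSpace X] [MeasurableSpace Y] [BorelSpace Y]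

lemma facts_aux
    (ω : Measure X) [IsFiniteMeasure ω]
    (F : Set C(X, ℝ)) (T : C(X, ℝ) → X → Set Y)
    (α β : Y → EReal) (h : ℝ → Y → C(X, ℝ))
    (hA1 : ∀ f₁ ∈ F, ∀ f₂ ∈ F, f₁ ⊓ f₂ ∈ F)
    (hTne : ∀ f ∈ F, ∀ x, (T f x).Nonempty)
    (hA2 : ∀ φ₁ ∈ F, ∀ φ₂ ∈ F, ∀ x₀ : X, φ₁ x₀ ≤ φ₂ x₀ → T φ₁ x₀ ⊆ T (φ₁ ⊓ φ₂) x₀)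
    (hA3mem : ∀ (y : Y) (t : ℝ), α y < (t : EReal) → (t : EReal) < β y → h t y ∈ F)
    (hA3a : ∀ (y : Y) (t : ℝ), α y < (t : EReal) → (t : EReal) < β y → ∀ x : X, y ∈ T (h t y) x)
    {N : ℕ} [NeZero N]
    (p : Fin N → Y) (hp : Function.Injective p)
    (g : Fin N → ℝ)
    (c : Fin N → ℝ)
    (hc : ∀ i, α (p i) < (c i : EReal) ∧ (c i : EReal) < β (p i))
    (σ : C(X, ℝ)) (hσ : ∀ x, σ x = ⨅ i, h (c i) (p i) x)
    (hM : ∀ E : Set Y, MeasurableSet E →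
      ω (SVPreimage (T σ) E) = ∑ i, E.indicator (fun _ => ENNReal.ofReal (g i)) (p i)) :
    (∀ x, ∃ j, σ x = h (c j) (p j) x) ∧
    (∀ j, ω {x | σ x = h (c j) (p j) x} ≤ ENNReal.ofReal (g j)) ∧
    (∀ s : Finset (Fin N),
      (∑ i ∈ s, ENNReal.ofReal (g i)) ≤ ω (⋃ i ∈ s, {x | σ x = h (c i) (p i) x})) := by
  have hσeq : σ = Finset.univ.inf' Finset.univ_nonempty (fun i => h (c i) (p i)) := by
    ext x
    rw [hσ x, ContinuousMap.inf'_apply]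
    exact fin_iInf_eq_inf' _
  have hσF : σ ∈ F := by
    rw [hσeq]
    exact Finset.inf'_mem F (fun a ha b hb => hA1 a ha b hb) _ _ _
      (fun i _ => hA3mem (p i) (c i) (hc i).1 (hc i).2)
  have hσle : ∀ j x, σ x ≤ h (c j) (p j) x := fun j x => by
    rw [hσ x]; exact ciInf_le (Finite.bddBelow_range _) j
  have hmin : ∀ x, ∃ j, σ x = h (c j) (p j) x := by
    intro x
    obtain ⟨j, -, hj⟩ := Finset.exists_mem_eq_inf' (Finset.univ_nonempty (α := Fin N))
      (fun i => h (c i) (p i) x)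
    exact ⟨j, by rw [hσ x, fin_iInf_eq_inf']; exact hj⟩
  have hCA : ∀ j x, σ x = h (c j) (p j) x → p j ∈ T σ x := by
    intro j x hx
    have h1 : T (h (c j) (p j)) x ⊆ T (h (c j) (p j) ⊓ σ) x :=
      hA2 _ (hA3mem (p j) (c j) (hc j).1 (hc j).2) _ hσF x (le_of_eq hx.symm)
    have h2 : h (c j) (p j) ⊓ σ = σ := by
      ext x'
      rw [ContinuousMap.inf_apply]
      exact inf_eq_right.mpr (hσle j x')
    have := h1 (hA3a (p j) (c j) (hc j).1 (hc j).2 x)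
    rwa [h2] at this
  have hωuniv : ω Set.univ = ∑ i, ENNReal.ofReal (g i) := by
    have h1 : SVPreimage (T σ) Set.univ = Set.univ := by
      ext x
      simp only [SVPreimage, Set.inter_univ, Set.mem_setOf_eq, Set.mem_univ, iff_true]
      exact hTne σ hσF x
    have := hM Set.univ MeasurableSet.univ
    rw [h1] at this
    simpa using this
  have hupper : ∀ j, ω {x | σ x = h (c j) (p j) x} ≤ ENNReal.ofReal (g j) := by
    intro j
    have h1 : {x | σ x = h (c j) (p j) x} ⊆ SVPreimage (T σ) {p j} := by
      intro x hx
      exact ⟨p j, hCA j x hx, rfl⟩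
    have h2 : ω (SVPreimage (T σ) {p j}) = ENNReal.ofReal (g j) := by
      rw [hM {p j} (measurableSet_singleton _)]
      rw [Finset.sum_eq_single_of_mem j (Finset.mem_univ j)]
      · simp
      · intro i _ hij
        simp [Set.indicator_of_notMem, (hp.ne hij)]
    exact h2 ▸ measure_mono h1
  refine ⟨hmin, hupper, ?_⟩
  intro s
  classical
  have hcover : (Set.univ : Set X) ⊆
      (⋃ i ∈ s, {x | σ x = h (c i) (p i) x}) ∪ (⋃ i ∈ sᶜ, {x | σ x = h (c i) (p i) x}) := by
    intro x _
    obtain ⟨j, hj⟩ := hmin x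
    by_cases hjs : j ∈ s
    · exact Or.inl (Set.mem_biUnion hjs hj)
    · exact Or.inr (Set.mem_biUnion (Finset.mem_compl.mpr hjs) hj)
  have h1 : ω Set.univ ≤ ω (⋃ i ∈ s, {x | σ x = h (c i) (p i) x})
      + ∑ i ∈ sᶜ, ENNReal.ofReal (g i) := by
    calc ω Set.univ ≤ ω ((⋃ i ∈ s, {x | σ x = h (c i) (p i) x})
        ∪ (⋃ i ∈ sᶜ, {x | σ x = h (c i) (p i) x})) := measure_mono hcover
      _ ≤ ω (⋃ i ∈ s, {x | σ x = h (c i) (p i) x})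
          + ω (⋃ i ∈ sᶜ, {x | σ x = h (c i) (p i) x}) := measure_union_le _ _
      _ ≤ _ := by
          gcongr
          exact (measure_biUnion_finset_le _ _).trans (Finset.sum_le_sum fun i _ => hupper i)
  rw [hωuniv, ← Finset.sum_add_sum_compl s (fun i => ENNReal.ofReal (g i))] at h1
  exact (ENNReal.add_le_add_iff_right (by
    exact (ENNReal.sum_lt_top.mpr fun i _ => ENNReal.ofReal_lt_top).ne)).mp h1

/-- Key dichotomy: either `b i ≤ bs i` for all `i`, or `bs i < b i` for all `i`. -/
lemma key_aux
    (ω : Measure X) [IsFiniteMeasure ω] [ConnectedSpace X]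
    (hωpos : ∀ U : Set X, IsOpen U → U.Nonempty → 0 < ω U)
    (F : Set C(X, ℝ)) (T : C(X, ℝ) → X → Set Y)
    (α β : Y → EReal) (h : ℝ → Y → C(X, ℝ))
    (hA1 : ∀ f₁ ∈ F, ∀ f₂ ∈ F, f₁ ⊓ f₂ ∈ F)
    (hTne : ∀ f ∈ F, ∀ x, (T f x).Nonempty)
    (hA2 : ∀ φ₁ ∈ F, ∀ φ₂ ∈ F, ∀ x₀ : X, φ₁ x₀ ≤ φ₂ x₀ → T φ₁ x₀ ⊆ T (φ₁ ⊓ φ₂) x₀)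
    (hA3mem : ∀ (y : Y) (t : ℝ), α y < (t : EReal) → (t : EReal) < β y → h t y ∈ F)
    (hA3a : ∀ (y : Y) (t : ℝ), α y < (t : EReal) → (t : EReal) < β y → ∀ x : X, y ∈ T (h t y) x)
    (hA3b : ∀ (y : Y) (t s : ℝ), α y < (t : EReal) → (s : EReal) < β y → t < s →
      ∀ x, h t y x < h s y x)
    {N : ℕ} [NeZero N]
    (p : Fin N → Y) (hp : Function.Injective p)
    (g : Fin N → ℝ) (hg : ∀ i, 0 < g i)
    (b bs : Fin N → ℝ)
    (hb : ∀ i, α (p i) < (b i : EReal) ∧ (b i : EReal) < β (p i))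
    (hbs : ∀ i, α (p i) < (bs i : EReal) ∧ (bs i : EReal) < β (p i))
    (ρ ρs : C(X, ℝ))
    (hρ : ∀ x, ρ x = ⨅ i, h (b i) (p i) x)
    (hρs : ∀ x, ρs x = ⨅ i, h (bs i) (p i) x)
    (hMρ : ∀ E : Set Y, MeasurableSet E →
      ω (SVPreimage (T ρ) E) = ∑ i, E.indicator (fun _ => ENNReal.ofReal (g i)) (p i))
    (hMρs : ∀ E : Set Y, MeasurableSet E →
      ω (SVPreimage (T ρs) E) = ∑ i, E.indicator (fun _ => ENNReal.ofReal (g i)) (p i)) :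
    (∀ i, b i ≤ bs i) ∨ (∀ i, bs i < b i) := by
  classical
  by_contra hcon
  push_neg at hcon
  obtain ⟨⟨i₀, hi₀⟩, j₀, hj₀⟩ := hcon
  obtain ⟨hminρ, hupρ, hlowρ⟩ := facts_aux ω F T α β h hA1 hTne hA2 hA3mem hA3a p hp g b hb ρ hρ hMρ
  obtain ⟨hminρs, hupρs, hlowρs⟩ :=
    facts_aux ω F T α β h hA1 hTne hA2 hA3mem hA3a p hp g bs hbs ρs hρs hMρs
  have hρle : ∀ j x, ρ x ≤ h (b j) (p j) x := fun j x => by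
    rw [hρ x]; exact ciInf_le (Finite.bddBelow_range _) j
  have hρsle : ∀ j x, ρs x ≤ h (bs j) (p j) x := fun j x => by
    rw [hρs x]; exact ciInf_le (Finite.bddBelow_range _) j
  have hmono : ∀ i x, b i ≤ bs i → h (b i) (p i) x ≤ h (bs i) (p i) x := by
    intro i x hle
    rcases eq_or_lt_of_le hle with heq | hlt
    · rw [heq]
    · exact le_of_lt (hA3b (p i) (b i) (bs i) (hb i).1 (hbs i).2 hlt x)
  set Sf : Finset (Fin N) := Finset.univ.filter (fun i => bs i < b i) with hSf
  have hi₀S : i₀ ∈ Sf := by simp [hSf, hi₀]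
  have hj₀S : j₀ ∉ Sf := by simp [hSf, not_lt.mpr hj₀]
  set W : Set X := {x | ρs x < ρ x} with hW
  set U : Set X := ⋃ i ∈ Sf, {x | ρ x = h (b i) (p i) x} with hU
  have hWopen : IsOpen W := isOpen_lt (map_continuous ρs) (map_continuous ρ)
  have hUclosed : IsClosed U :=
    Set.Finite.isClosed_biUnion (Sf.finite_toSet)
      (fun i _ => isClosed_eq (map_continuous ρ) (map_continuous _))
  have hUW : U ⊆ W := by
    intro x hx
    obtain ⟨i, hiS, hxi⟩ := Set.mem_iUnion₂.mp hx
    have hiS' : bs i < b i := by simpa [hSf] using hiS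
    have : h (bs i) (p i) x < h (b i) (p i) x :=
      hA3b (p i) (bs i) (b i) (hbs i).1 (hb i).2 hiS' x
    exact lt_of_le_of_lt (hρsle i x) (by rw [← hxi] at this; exact this)
  have hWsub : W ⊆ ⋃ i ∈ Sf, {x | ρs x = h (bs i) (p i) x} := by
    intro x hx
    obtain ⟨j, hj⟩ := hminρs x
    have hjS : j ∈ Sf := by
      by_contra hjn
      have hjle : b j ≤ bs j := by simpa [hSf, not_lt] using hjn
      have : ρ x ≤ ρs x := (hρle j x).trans ((hmono j x hjle).trans (le_of_eq hj.symm))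
      exact absurd hx (not_lt.mpr this)
    exact Set.mem_biUnion hjS hj
  -- measure bounds
  have hWle : ω W ≤ ∑ i ∈ Sf, ENNReal.ofReal (g i) :=
    (measure_mono hWsub).trans
      ((measure_biUnion_finset_le _ _).trans (Finset.sum_le_sum fun i _ => hupρs i))
  have hUge : (∑ i ∈ Sf, ENNReal.ofReal (g i)) ≤ ω U := hlowρ Sf
  -- W \ U is a null open set, hence empty
  have hdiff0 : ω (W \ U) = 0 := by
    have h1 : ω (W ∩ U) + ω (W \ U) = ω W := measure_inter_add_diff W hUclosed.measurableSet
    rw [Set.inter_eq_self_of_subset_right hUW] at h1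
    have h2 : ω U + ω (W \ U) ≤ ω U + 0 := by
      rw [add_zero, h1]
      exact hWle.trans hUge
    exact le_antisymm (by
      have := (ENNReal.add_le_add_iff_left (measure_ne_top ω U)).mp h2
      exact this) zero_le
  have hWU : W = U := by
    have hWUsub : W ⊆ U := by
      by_contra hns
      obtain ⟨x, hxW, hxU⟩ := Set.not_subset.mp hns
      have hop : IsOpen (W \ U) := hWopen.sdiff hUclosed
      have := hωpos (W \ U) hop ⟨x, hxW, hxU⟩
      rw [hdiff0] at this
      exact lt_irrefl 0 this
    exact le_antisymm hWUsub hUW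
  -- W is clopen, nonempty and proper: contradiction with connectedness
  have hclopen : IsClopen W := ⟨hWU ▸ hUclosed, hWopen⟩
  have hWne : W.Nonempty := by
    have h1 : (ENNReal.ofReal (g i₀)) ≤ ω {x | ρ x = h (b i₀) (p i₀) x} := by
      have := hlowρ {i₀}
      simpa using this
    have h2 : {x | ρ x = h (b i₀) (p i₀) x}.Nonempty := by
      apply nonempty_of_measure_ne_zero (μ := ω)
      intro h0
      rw [h0] at h1
      exact absurd (le_antisymm h1 zero_le).symm
        (by simpa [ENNReal.ofReal_eq_zero, not_le] using (hg i₀))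
    obtain ⟨x, hx⟩ := h2
    exact ⟨x, hUW (Set.mem_biUnion hi₀S hx)⟩
  have hWproper : W ≠ Set.univ := by
    have h1 : (ENNReal.ofReal (g j₀)) ≤ ω {x | ρs x = h (bs j₀) (p j₀) x} := by
      have := hlowρs {j₀}
      simpa using this
    have h2 : {x | ρs x = h (bs j₀) (p j₀) x}.Nonempty := by
      apply nonempty_of_measure_ne_zero (μ := ω)
      intro h0
      rw [h0] at h1
      exact absurd (le_antisymm h1 zero_le).symm
        (by simpa [ENNReal.ofReal_eq_zero, not_le] using (hg j₀))
    obtain ⟨x, hx⟩ := h2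
    intro hWU'
    have hxW : x ∈ W := hWU' ▸ Set.mem_univ x
    have : ρ x ≤ ρs x := by
      calc ρ x ≤ h (b j₀) (p j₀) x := hρle j₀ x
        _ ≤ h (bs j₀) (p j₀) x := hmono j₀ x hj₀
        _ = ρs x := hx.symm
    exact absurd hxW (not_lt.mpr this)
  rcases isClopen_iff.mp hclopen with he | hu
  · exact hWne.ne_empty he
  · exact hWproper hu

end AuxKey

/-- Theorem 2.7 (comparison/uniqueness, concave case). -/
theorem stmt3 {X Y : Type*} [MetricSpace X] [CompactSpace X] [MetricSpace Y] [CompactSpace Y]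
    [MeasurableSpace X] [BorelSpace X] [MeasurableSpace Y] [BorelSpace Y]
    (ω : Measure X) [IsFiniteMeasure ω]
    -- X is connected and ω is positive on nonempty open sets
    [ConnectedSpace X]
    (hωpos : ∀ U : Set X, IsOpen U → U.Nonempty → 0 < ω U)
    (F : Set C(X, ℝ)) (T : C(X, ℝ) → X → Set Y)
    (α β : Y → EReal) (h : ℝ → Y → C(X, ℝ))
    -- F ⊆ C⁺(X)
    (hFpos : ∀ f ∈ F, ∀ x, 0 < f x)
    -- (A1)
    (hA1 : ∀ f₁ ∈ F, ∀ f₂ ∈ F, f₁ ⊓ f₂ ∈ F)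
    -- T maps F into C_s(X,Y)
    (hTCs : ∀ f ∈ F, IsCs ω (T f))
    -- T is continuous at each φ ∈ F
    (hTcont : ∀ φ ∈ F, TContinuousAt F T φ)
    -- (A2)
    (hA2 : ∀ φ₁ ∈ F, ∀ φ₂ ∈ F, ∀ x₀ : X, φ₁ x₀ ≤ φ₂ x₀ → T φ₁ x₀ ⊆ T (φ₁ ⊓ φ₂) x₀)
    -- (A3) with (b) strengthened to strict monotonicity
    (hA3mem : ∀ (y : Y) (t : ℝ), α y < (t : EReal) → (t : EReal) < β y → h t y ∈ F)
    (hA3a : ∀ (y : Y) (t : ℝ), α y < (t : EReal) → (t : EReal) < β y → ∀ x : X, y ∈ T (h t y) x)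
    (hA3b : ∀ (y : Y) (t s : ℝ), α y < (t : EReal) → (s : EReal) < β y → t < s →
      ∀ x, h t y x < h s y x)
    (hA3c : ∀ (y : Y), ∀ ε : ℝ, 0 < ε → ∃ t₀ : ℝ, α y < (t₀ : EReal) ∧ (t₀ : EReal) < β y ∧
      ∀ t : ℝ, α y < (t : EReal) → t ≤ t₀ → ∀ x, h t y x < ε)
    (hA3d : ∀ (y : Y) (t : ℝ), α y < (t : EReal) → (t : EReal) < β y →
      ∀ ε : ℝ, 0 < ε → ∃ δ : ℝ, 0 < δ ∧ ∀ t' : ℝ, α y < (t' : EReal) → (t' : EReal) < β y →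
        |t' - t| < δ → ∀ x, |h t' y x - h t y x| ≤ ε)
    -- the data
    {N : ℕ} [NeZero N] (hN : 2 ≤ N)
    (p : Fin N → Y) (hp : Function.Injective p)
    (g : Fin N → ℝ) (hg : ∀ i, 0 < g i)
    -- two solutions ρ = min h_{bᵢ,pᵢ} and ρ* = min h_{bᵢ*,pᵢ} as in Theorem 2.5
    (b bs : Fin N → ℝ)
    (hb : ∀ i, α (p i) < (b i : EReal) ∧ (b i : EReal) < β (p i))
    (hbs : ∀ i, α (p i) < (bs i : EReal) ∧ (bs i : EReal) < β (p i))
    (ρ ρs : C(X, ℝ))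
    (hρ : ∀ x, ρ x = ⨅ i, h (b i) (p i) x)
    (hρs : ∀ x, ρs x = ⨅ i, h (bs i) (p i) x)
    (hMρ : ∀ E : Set Y, MeasurableSet E →
      ω (SVPreimage (T ρ) E) = ∑ i, E.indicator (fun _ => ENNReal.ofReal (g i)) (p i))
    (hMρs : ∀ E : Set Y, MeasurableSet E →
      ω (SVPreimage (T ρs) E) = ∑ i, E.indicator (fun _ => ENNReal.ofReal (g i)) (p i)) :
    -- (a)
    ((bs 0 ≤ b 0 → ∀ i, bs i ≤ b i) ∧ (bs 0 = b 0 → ∀ i, bs i = b i)) ∧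
    -- (b)
    ((∃ x₀ : X, ρ x₀ = ρs x₀) → ∀ x : X, ρ x = ρs x) := by
  have hTne : ∀ f ∈ F, ∀ x, (T f x).Nonempty := fun f hf x => (hTCs f hf).1 x
  have key1 := key_aux ω hωpos F T α β h hA1 hTne hA2 hA3mem hA3a hA3b p hp g hg
    b bs hb hbs ρ ρs hρ hρs hMρ hMρs
  have key2 := key_aux ω hωpos F T α β h hA1 hTne hA2 hA3mem hA3a hA3b p hp g hg
    bs b hbs hb ρs ρ hρs hρ hMρs hMρ
  obtain ⟨hminρ, -, -⟩ :=
    facts_aux ω F T α β h hA1 hTne hA2 hA3mem hA3a p hp g b hb ρ hρ hMρ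
  obtain ⟨hminρs, -, -⟩ :=
    facts_aux ω F T α β h hA1 hTne hA2 hA3mem hA3a p hp g bs hbs ρs hρs hMρs
  have hρle : ∀ j x, ρ x ≤ h (b j) (p j) x := fun j x => by
    rw [hρ x]; exact ciInf_le (Finite.bddBelow_range _) j
  have hρsle : ∀ j x, ρs x ≤ h (bs j) (p j) x := fun j x => by
    rw [hρs x]; exact ciInf_le (Finite.bddBelow_range _) j
  constructor
  · constructor
    · intro h0 i
      rcases key2 with hk | hk
      · exact hk i
      · exact absurd h0 (not_le.mpr (hk 0))
    · intro h0 i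
      have h1 : bs i ≤ b i := by
        rcases key2 with hk | hk
        · exact hk i
        · have := hk 0; linarith
      have h2 : b i ≤ bs i := by
        rcases key1 with hk | hk
        · exact hk i
        · have := hk 0; linarith
      exact le_antisymm h1 h2
  · rintro ⟨x₀, hx₀⟩ x
    have heq : ∀ i, b i = bs i := by
      rcases key1 with hk1 | hk1
      · rcases key2 with hk2 | hk2
        · exact fun i => le_antisymm (hk1 i) (hk2 i)
        · exfalso
          obtain ⟨j, hj⟩ := hminρs x₀
          have h3 := hA3b (p j) (b j) (bs j) (hb j).1 (hbs j).2 (hk2 j) x₀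
          have h4 := hρle j x₀
          linarith
      · exfalso
        obtain ⟨j, hj⟩ := hminρ x₀
        have h3 := hA3b (p j) (bs j) (b j) (hbs j).1 (hb j).2 (hk1 j) x₀
        have h4 := hρsle j x₀
        linarith
    rw [hρ x, hρs x]
    exact iInf_congr fun i => by rw [heq i]
end

section
/- In the T-concave setting with (A3), let μ_l be a sequence of finitely supported (discrete) Radon measures on Y converging weakly to a Radon measure μ, with μ_l(Y) = ω(X) for all l. For each l let ρ_l ∈ F be of the form ρ_l = min_{1≤i≤N_l} h_{bᵢˡ,pᵢˡ} and satisfy M_{T(ρ_l)} = μ_l. Assume there exists R₀ > 0 with R₀ in the range of ρ_l for every l, and: (i) for each R₁ > 0 there is C_{R₁} > 0 such that whenever R₁ is in the range of some h_{t,y}, then C_{R₁}⁻¹ ≤ h_{t,y} ≤ C_{R₁} on X; (ii) for any C₁ > C₀ > 0 the family {f ∈ F : C₀ ≤ f ≤ C₁ on X} is compact in C(X). Then there exists ρ ∈ F with M_{T(ρ)} = μ. -/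
open Filter MeasureTheory Topology

lemma sv_selection {X Y : Type*} [MetricSpace X] [MetricSpace Y]
    [MeasurableSpace X] [BorelSpace X] [MeasurableSpace Y] [BorelSpace Y]
    (ω : Measure X) (Φ : X → Set Y) (hne : ∀ x, (Φ x).Nonempty)
    (hcont : ∀ x, SVContinuousAt Φ x)
    (hsv : ∀ᵐ x ∂ω, ∃ y, Φ x = {y}) :
    ∃ (u v : X → Y), Measurable v ∧ (∀ x, u x ∈ Φ x) ∧
      (∀ᵐ x ∂ω, Φ x = {u x}) ∧ u =ᵐ[ω] v ∧
      ∀ E : Set Y, ω (SVPreimage Φ E) = ω (v ⁻¹' E) := by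
  classical
  set u : X → Y := fun x => (hne x).choose with hu
  have humem : ∀ x, u x ∈ Φ x := fun x => (hne x).choose_spec
  have h0 : ω {x | ¬ ∃ y, Φ x = {y}} = 0 := by rwa [ae_iff] at hsv
  obtain ⟨N, hNsub, hNmeas, hNnull⟩ := exists_measurable_superset_of_null h0
  have hNsingle : ∀ x ∉ N, Φ x = {u x} := by
    intro x hx
    have : ∃ y, Φ x = {y} := by
      by_contra hcon
      exact hx (hNsub hcon)
    obtain ⟨y, hy⟩ := this
    have : u x = y := by
      have := humem x
      rw [hy] at this
      exact this
    rw [hy, this]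
  have husv : ∀ᵐ x ∂ω, Φ x = {u x} := by
    rw [ae_iff]
    refine measure_mono_null (fun x hx => ?_) hNnull
    by_contra hxN
    exact hx (hNsingle x hxN)
  have hcontOn : ContinuousOn u Nᶜ := by
    intro x₀ hx₀
    have hx : Φ x₀ = {u x₀} := hNsingle x₀ hx₀
    apply ContinuousAt.continuousWithinAt
    rw [ContinuousAt, tendsto_iff_seq_tendsto]
    intro xk hxk
    apply tendsto_of_subseq_tendsto
    intro ns hns
    obtain ⟨s, y₀, hsm, hy₀, hty⟩ := hcont x₀ (xk ∘ ns) (fun k => u (xk (ns k)))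
      (hxk.comp hns) (fun k => humem _)
    rw [hx, Set.mem_singleton_iff] at hy₀
    exact ⟨s, by simpa [hy₀, Function.comp_def] using hty⟩
  have hrestr : ω.restrict Nᶜ = ω :=
    Measure.restrict_eq_self_of_ae_mem (compl_mem_ae_iff.mpr hNnull)
  have haem : AEMeasurable u ω := by
    have := hcontOn.aemeasurable (μ := ω) hNmeas.compl
    rwa [hrestr] at this
  refine ⟨u, haem.mk u, haem.measurable_mk, humem, husv, haem.ae_eq_mk, ?_⟩
  intro E
  set v := haem.mk u with hv
  have hdiff : ω (N ∪ {x | u x ≠ v x}) = 0 := by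
    have h1 : ω {x | u x ≠ v x} = 0 := by
      have := haem.ae_eq_mk
      rwa [Filter.EventuallyEq, ae_iff] at this
    exact le_antisymm (le_trans (measure_union_le _ _) (by rw [hNnull, h1]; simp))
      (zero_le)
  obtain ⟨M, hMsub, hMmeas, hMnull⟩ := exists_measurable_superset_of_null hdiff
  have key : ∀ A : Set X, ω (A ∩ Mᶜ) = ω A := by
    intro A
    refine le_antisymm (measure_mono Set.inter_subset_left) ?_
    have := measure_inter_add_diff (μ := ω) A hMmeas
    have hAM : ω (A ∩ M) = 0 :=
      le_antisymm (le_trans (measure_mono Set.inter_subset_right) hMnull.le) (zero_le)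
    have hEq : ω A = ω (A ∩ Mᶜ) := by
      rw [← this, hAM, zero_add, Set.diff_eq]
    exact hEq.le
  have hset : SVPreimage Φ E ∩ Mᶜ = v ⁻¹' E ∩ Mᶜ := by
    ext x
    simp only [Set.mem_inter_iff, Set.mem_compl_iff, Set.mem_preimage, SVPreimage,
      Set.mem_setOf_eq, and_congr_left_iff]
    intro hxM
    have hxN : x ∉ N := fun h => hxM (hMsub (Set.mem_union_left _ h))
    have hxuv : u x = v x := by
      by_contra h
      exact hxM (hMsub (Set.mem_union_right _ h))
    rw [hNsingle x hxN, hxuv, Set.singleton_inter_nonempty]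
  rw [← key (SVPreimage Φ E), hset, key]

/-- Theorem 2.8 (concave case, general target measure, by approximation). -/
theorem stmt4 {X Y : Type*} [MetricSpace X] [CompactSpace X] [MetricSpace Y] [CompactSpace Y]
    [MeasurableSpace X] [BorelSpace X] [MeasurableSpace Y] [BorelSpace Y]
    (ω : Measure X) [IsFiniteMeasure ω]
    (F : Set C(X, ℝ)) (T : C(X, ℝ) → X → Set Y)
    (α β : Y → EReal) (h : ℝ → Y → C(X, ℝ))
    -- F ⊆ C⁺(X)
    (hFpos : ∀ f ∈ F, ∀ x, 0 < f x)
    -- (A1)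
    (hA1 : ∀ f₁ ∈ F, ∀ f₂ ∈ F, f₁ ⊓ f₂ ∈ F)
    -- T maps F into C_s(X,Y)
    (hTCs : ∀ f ∈ F, IsCs ω (T f))
    -- T is continuous at each φ ∈ F
    (hTcont : ∀ φ ∈ F, TContinuousAt F T φ)
    -- (A2)
    (hA2 : ∀ φ₁ ∈ F, ∀ φ₂ ∈ F, ∀ x₀ : X, φ₁ x₀ ≤ φ₂ x₀ → T φ₁ x₀ ⊆ T (φ₁ ⊓ φ₂) x₀)
    -- (A3)
    (hA3mem : ∀ (y : Y) (t : ℝ), α y < (t : EReal) → (t : EReal) < β y → h t y ∈ F)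
    (hA3a : ∀ (y : Y) (t : ℝ), α y < (t : EReal) → (t : EReal) < β y → ∀ x : X, y ∈ T (h t y) x)
    (hA3b : ∀ (y : Y) (t s : ℝ), α y < (t : EReal) → (s : EReal) < β y → t ≤ s →
      ∀ x, h t y x ≤ h s y x)
    (hA3c : ∀ (y : Y), ∀ ε : ℝ, 0 < ε → ∃ t₀ : ℝ, α y < (t₀ : EReal) ∧ (t₀ : EReal) < β y ∧
      ∀ t : ℝ, α y < (t : EReal) → t ≤ t₀ → ∀ x, h t y x < ε)
    (hA3d : ∀ (y : Y) (t : ℝ), α y < (t : EReal) → (t : EReal) < β y →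
      ∀ ε : ℝ, 0 < ε → ∃ δ : ℝ, 0 < δ ∧ ∀ t' : ℝ, α y < (t' : EReal) → (t' : EReal) < β y →
        |t' - t| < δ → ∀ x, |h t' y x - h t y x| ≤ ε)
    -- discrete measures μ_l converging weakly to μ with μ_l(Y) = ω(X)
    (μs : ℕ → Measure Y) (μ : Measure Y) [IsFiniteMeasure μ] [∀ l, IsFiniteMeasure (μs l)]
    (hdiscr : ∀ l, ∃ (m : ℕ) (q : Fin m → Y) (c : Fin m → ENNReal),
      μs l = ∑ i, c i • Measure.dirac (q i))
    (hweak : ∀ fc : C(Y, ℝ),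
      Tendsto (fun l => ∫ y, fc y ∂(μs l)) atTop (nhds (∫ y, fc y ∂μ)))
    (hmassl : ∀ l, μs l Set.univ = ω Set.univ)
    -- solutions ρ_l = min_i h_{bᵢˡ,pᵢˡ} of M_{T(ρ_l)} = μ_l
    (ρs : ℕ → C(X, ℝ)) (hρsF : ∀ l, ρs l ∈ F)
    (hρsform : ∀ l, ∃ (m : ℕ), 0 < m ∧ ∃ (q : Fin m → Y) (bb : Fin m → ℝ),
      (∀ i, α (q i) < (bb i : EReal) ∧ (bb i : EReal) < β (q i)) ∧
      ∀ x, ρs l x = ⨅ i, h (bb i) (q i) x)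
    (hρssol : ∀ l, ∀ E : Set Y, MeasurableSet E → ω (SVPreimage (T (ρs l)) E) = μs l E)
    -- R₀ in the range of every ρ_l
    (R₀ : ℝ) (hR₀pos : 0 < R₀) (hR₀range : ∀ l, ∃ x, ρs l x = R₀)
    -- (i)
    (hi : ∀ R₁ : ℝ, 0 < R₁ → ∃ C : ℝ, 0 < C ∧ ∀ (y : Y) (t : ℝ),
      α y < (t : EReal) → (t : EReal) < β y → (∃ x, h t y x = R₁) →
      ∀ x, C⁻¹ ≤ h t y x ∧ h t y x ≤ C)
    -- (ii)
    (hii : ∀ C₀ C₁ : ℝ, 0 < C₀ → C₀ < C₁ →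
      IsCompact {f : C(X, ℝ) | f ∈ F ∧ ∀ x, C₀ ≤ f x ∧ f x ≤ C₁}) :
    ∃ ρ : C(X, ℝ), ρ ∈ F ∧ ∀ E : Set Y, MeasurableSet E → ω (SVPreimage (T ρ) E) = μ E := by
  classical
  -- Step 1: uniform bounds on ρs l
  obtain ⟨C, hCpos, hC⟩ := hi R₀ hR₀pos
  set D : ℝ := max C 2 with hD
  have hD2 : (2:ℝ) ≤ D := le_max_right _ _
  have hCD : C ≤ D := le_max_left _ _
  have hDpos : (0:ℝ) < D := lt_of_lt_of_le two_pos hD2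
  have hDinvpos : (0:ℝ) < D⁻¹ := inv_pos.mpr hDpos
  have hDinv_lt : D⁻¹ < D := by
    have h1 : D⁻¹ ≤ 2⁻¹ := by
      apply inv_anti₀ two_pos hD2
    have h2 : (2:ℝ)⁻¹ < 2 := by norm_num
    exact lt_of_le_of_lt h1 (lt_of_lt_of_le h2 hD2)
  have hDCinv : D⁻¹ ≤ C⁻¹ := inv_anti₀ hCpos hCD
  have hmem : ∀ l, ρs l ∈ {f : C(X, ℝ) | f ∈ F ∧ ∀ x, D⁻¹ ≤ f x ∧ f x ≤ D} := by
    intro l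
    obtain ⟨m, hm, q, bb, hαβ, hform⟩ := hρsform l
    obtain ⟨x₀, hx₀⟩ := hR₀range l
    haveI : Nonempty (Fin m) := ⟨⟨0, hm⟩⟩
    have hbdd : ∀ x : X, BddBelow (Set.range fun i => h (bb i) (q i) x) :=
      fun x => (Set.finite_range _).bddBelow
    have hge : ∀ i, R₀ ≤ h (bb i) (q i) x₀ := by
      intro i
      calc R₀ = ρs l x₀ := hx₀.symm
        _ = ⨅ j, h (bb j) (q j) x₀ := hform x₀
        _ ≤ h (bb i) (q i) x₀ := ciInf_le (hbdd x₀) i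
    have hlow : ∀ i x, C⁻¹ ≤ h (bb i) (q i) x := by
      intro i x
      obtain ⟨hα_i, hβ_i⟩ := hαβ i
      obtain ⟨t₀, ht₀α, ht₀β, ht₀⟩ := hA3c (q i) R₀ hR₀pos
      have ht₀lt : t₀ < bb i := by
        by_contra hcon
        push_neg at hcon
        exact absurd (hge i) (not_le.mpr (ht₀ (bb i) hα_i hcon x₀))
      have hsub : ∀ t ∈ Set.Icc t₀ (bb i), α (q i) < (t : EReal) ∧ (t : EReal) < β (q i) := by
        intro t ht
        constructor
        · exact lt_of_lt_of_le ht₀α (by exact_mod_cast ht.1)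
        · exact lt_of_le_of_lt (by exact_mod_cast ht.2) hβ_i
      have hcont' : ContinuousOn (fun t => h t (q i) x₀) (Set.Icc t₀ (bb i)) := by
        intro t ht
        rw [Metric.continuousWithinAt_iff]
        intro ε hε
        obtain ⟨δ, hδ, hδ'⟩ := hA3d (q i) t (hsub t ht).1 (hsub t ht).2 (ε/2) (half_pos hε)
        refine ⟨δ, hδ, fun {t'} ht' hd => ?_⟩
        have hb := hδ' t' (hsub t' ht').1 (hsub t' ht').2 (by simpa [Real.dist_eq] using hd) x₀
        have : dist (h t' (q i) x₀) (h t (q i) x₀) ≤ ε/2 := by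
          simpa [Real.dist_eq] using hb
        exact lt_of_le_of_lt this (half_lt_self hε)
      have hivt := intermediate_value_Icc (le_of_lt ht₀lt) hcont'
      have hR₀mem : R₀ ∈ Set.Icc (h t₀ (q i) x₀) (h (bb i) (q i) x₀) :=
        ⟨le_of_lt (ht₀ t₀ ht₀α le_rfl x₀), hge i⟩
      obtain ⟨t', ht'mem, ht'val⟩ := hivt hR₀mem
      have ht'αβ := hsub t' ht'mem
      calc C⁻¹ ≤ h t' (q i) x := (hC (q i) t' ht'αβ.1 ht'αβ.2 ⟨x₀, ht'val⟩ x).1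
        _ ≤ h (bb i) (q i) x := hA3b (q i) t' (bb i) ht'αβ.1 hβ_i ht'mem.2 x
    refine ⟨hρsF l, fun x => ⟨?_, ?_⟩⟩
    · rw [hform x]
      exact le_trans hDCinv (le_ciInf fun i => hlow i x)
    · obtain ⟨i₀, hi₀⟩ := Finite.exists_min (fun i => h (bb i) (q i) x₀)
      have hmin : h (bb i₀) (q i₀) x₀ = R₀ := by
        refine le_antisymm ?_ (hge i₀)
        calc h (bb i₀) (q i₀) x₀ ≤ ⨅ j, h (bb j) (q j) x₀ := le_ciInf hi₀
          _ = ρs l x₀ := (hform x₀).symm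
          _ = R₀ := hx₀
      have hup := fun x => (hC (q i₀) (bb i₀) (hαβ i₀).1 (hαβ i₀).2 ⟨x₀, hmin⟩ x).2
      calc ρs l x = ⨅ j, h (bb j) (q j) x := hform x
        _ ≤ h (bb i₀) (q i₀) x := ciInf_le (hbdd x) i₀
        _ ≤ C := hup x
        _ ≤ D := hCD
  -- Step 2: extract a convergent subsequence
  have hKcomp := hii D⁻¹ D hDinvpos hDinv_lt
  obtain ⟨ρ, hρK, s, hs, hconv⟩ := hKcomp.tendsto_subseq hmem
  have hρF : ρ ∈ F := hρK.1
  -- Step 3: selections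
  obtain ⟨u, v, hv, humem, husv, huv, hformula⟩ :=
    sv_selection ω (T ρ) (hTCs ρ hρF).1 (hTCs ρ hρF).2.1 (hTCs ρ hρF).2.2.1
  have hsel : ∀ l, ∃ (u' v' : X → Y), Measurable v' ∧ (∀ x, u' x ∈ T (ρs l) x) ∧
      (∀ᵐ x ∂ω, T (ρs l) x = {u' x}) ∧ u' =ᵐ[ω] v' ∧
      ∀ E : Set Y, ω (SVPreimage (T (ρs l)) E) = ω (v' ⁻¹' E) :=
    fun l => sv_selection ω _ (hTCs _ (hρsF l)).1 (hTCs _ (hρsF l)).2.1 (hTCs _ (hρsF l)).2.2.1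
  choose uu vv hvv huumem huusv huuvv hform2 using hsel
  have hμl : ∀ l, μs l = ω.map (vv l) := by
    intro l
    ext E hE
    rw [Measure.map_apply (hvv l) hE, ← hform2 l E, hρssol l E hE]
  -- the key integral identity
  have key : ∀ fc : C(Y, ℝ), ∫ x, fc (v x) ∂ω = ∫ y, fc y ∂μ := by
    intro fc
    have h2 : ∀ l, ∫ y, fc y ∂(μs l) = ∫ x, fc (vv l x) ∂ω := by
      intro l
      rw [hμl l]
      exact integral_map (hvv l).aemeasurable fc.continuous.aestronglyMeasurable
    have hae : ∀ᵐ x ∂ω, Tendsto (fun j => vv (s j) x) atTop (𝓝 (v x)) := by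
      have hcomb : ∀ᵐ x ∂ω, (T ρ x = {u x} ∧ u x = v x) ∧ ∀ j, uu (s j) x = vv (s j) x := by
        filter_upwards [husv, huv, ae_all_iff.mpr (fun j : ℕ => huuvv (s j))] with x hx1 hx2 hx3
        exact ⟨⟨hx1, hx2⟩, hx3⟩
      filter_upwards [hcomb] with x hx
      obtain ⟨⟨hsx, hux⟩, hj⟩ := hx
      have htu : Tendsto (fun j => uu (s j) x) atTop (𝓝 (u x)) := by
        apply tendsto_of_subseq_tendsto
        intro ns hns
        have hunif : TendstoUniformly (fun j x => ρs (s (ns j)) x) (fun x => ρ x) atTop := by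
          have h' : Tendsto (fun j => ρs (s (ns j))) atTop (𝓝 ρ) := hconv.comp hns
          exact ContinuousMap.tendsto_iff_tendstoUniformly.mp h'
        obtain ⟨ms, y₀, hms, hy₀, hty⟩ := hTcont ρ hρF (fun j => ρs (s (ns j)))
          (fun j => hρsF _) hunif x (fun j => uu (s (ns j)) x) (fun j => huumem _ x)
        rw [hsx, Set.mem_singleton_iff] at hy₀
        exact ⟨ms, by simpa [hy₀, Function.comp_def] using hty⟩
      rw [← hux]
      exact htu.congr (fun j => hj j)
    have hdc : Tendsto (fun j => ∫ x, fc (vv (s j) x) ∂ω) atTop (𝓝 (∫ x, fc (v x) ∂ω)) := by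
      apply tendsto_integral_of_dominated_convergence (fun _ => ‖fc‖)
      · exact fun j => (fc.continuous.measurable.comp (hvv (s j))).aestronglyMeasurable
      · exact integrable_const _
      · exact fun j => Filter.Eventually.of_forall fun x =>
          ContinuousMap.norm_coe_le_norm fc _
      · filter_upwards [hae] with x hx using ((fc.continuous.tendsto _).comp hx)
    have hdc2 : Tendsto (fun j => ∫ x, fc (vv (s j) x) ∂ω) atTop (𝓝 (∫ y, fc y ∂μ)) := by
      have h' : Tendsto (fun j => ∫ y, fc y ∂(μs (s j))) atTop (𝓝 (∫ y, fc y ∂μ)) :=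
        (hweak fc).comp hs.tendsto_atTop
      exact h'.congr (fun j => h2 (s j))
    exact tendsto_nhds_unique hdc hdc2
  -- conclude ω.map v = μ
  haveI : IsFiniteMeasure (ω.map v) := Measure.isFiniteMeasure_map ω v
  have hfin : ω.map v = μ := by
    apply ext_of_forall_lintegral_eq_of_IsFiniteMeasure
    intro f
    have hfc : Continuous fun y => ((f y : ℝ)) := NNReal.continuous_coe.comp f.continuous
    set fc : C(Y, ℝ) := ⟨fun y => ((f y : ℝ)), hfc⟩ with hfcdef
    have hint1 : Integrable (fun y => ((f y : ℝ))) (ω.map v) :=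
      (BoundedContinuousFunction.mkOfCompact fc).integrable _
    have hint2 : Integrable (fun y => ((f y : ℝ))) μ :=
      (BoundedContinuousFunction.mkOfCompact fc).integrable _
    have e1 : ∫⁻ y, (f y : ENNReal) ∂(ω.map v) = ENNReal.ofReal (∫ y, ((f y : ℝ)) ∂(ω.map v)) :=
      lintegral_coe_eq_integral (fun y => f y) hint1
    have e2 : ∫⁻ y, (f y : ENNReal) ∂μ = ENNReal.ofReal (∫ y, ((f y : ℝ)) ∂μ) :=
      lintegral_coe_eq_integral (fun y => f y) hint2
    rw [e1, e2]
    congr 1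
    have e3 : ∫ y, ((f y : ℝ)) ∂(ω.map v) = ∫ x, fc (v x) ∂ω :=
      integral_map hv.aemeasurable fc.continuous.aestronglyMeasurable
    rw [e3]
    exact key fc
  refine ⟨ρ, hρF, fun E hE => ?_⟩
  rw [hformula E, ← Measure.map_apply hv hE, hfin]
end

section
/- Let X, Y be compact metric spaces, ω a finite Borel measure on X, p₁,…,p_N distinct points of Y and g₁,…,g_N > 0 with N ≥ 2. Let F ⊆ C⁺(X) and T : F → C_s(X,Y) be such that F is T-convex and condition (A3') holds. Assume ω(X) = Σᵢ gᵢ and that there exists (b₁⁰,…,b_N⁰) with bᵢ⁰ ∈ (α_{pᵢ},β_{pᵢ}) and h_{b₁⁰,p₁}(x) ≤ min_{2≤i≤N} h_{bᵢ⁰,pᵢ}(x) for all x ∈ X. Then there exist bᵢ ∈ (α_{pᵢ},β_{pᵢ}) for 2 ≤ i ≤ N such that, with b₁ = b₁⁰, the function ρ(x) = max_{1≤i≤N} h_{bᵢ,pᵢ}(x) satisfies M_{T(ρ)} = Σᵢ gᵢ δ_{pᵢ}. -/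
open Filter MeasureTheory Topology

set_option linter.unusedSectionVars false
set_option maxHeartbeats 1000000

open scoped ENNReal

section AuxDev2

variable {X Y : Type*} [MetricSpace X] [CompactSpace X] [MetricSpace Y] [CompactSpace Y]
    [MeasurableSpace X] [BorelSpace X] [MeasurableSpace Y] [BorelSpace Y]

def AdmB {N : ℕ} (α β : Y → EReal) (p : Fin N → Y) (b : Fin N → ℝ) : Prop :=
  ∀ j, α (p j) < (b j : EReal) ∧ (b j : EReal) < β (p j)

lemma erase_nonempty {N : ℕ} (hN : 2 ≤ N) (i : Fin N) : (Finset.univ.erase i).Nonempty := by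
  have h1 : (Finset.univ.erase i).card = N - 1 := by
    rw [Finset.card_erase_of_mem (Finset.mem_univ i), Finset.card_univ, Fintype.card_fin]
  refine Finset.card_pos.mp ?_
  omega

noncomputable def MexC (h : ℝ → Y → C(X, ℝ)) {N : ℕ} (p : Fin N → Y) (hN : 2 ≤ N)
    (i : Fin N) (b : Fin N → ℝ) : C(X, ℝ) :=
  (Finset.univ.erase i).sup' (erase_nonempty hN i) (fun j => h (b j) (p j))

noncomputable def rhoC (h : ℝ → Y → C(X, ℝ)) {N : ℕ} [NeZero N] (p : Fin N → Y)
    (b : Fin N → ℝ) : C(X, ℝ) :=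
  Finset.univ.sup' ⟨0, Finset.mem_univ 0⟩ (fun j => h (b j) (p j))

def KSetC (h : ℝ → Y → C(X, ℝ)) {N : ℕ} (p : Fin N → Y) (hN : 2 ≤ N)
    (i : Fin N) (b : Fin N → ℝ) (t : ℝ) : Set X :=
  {x | MexC h p hN i b x ≤ h t (p i) x}

lemma KSetC_closed (h : ℝ → Y → C(X, ℝ)) {N : ℕ} (p : Fin N → Y) (hN : 2 ≤ N)
    (i : Fin N) (b : Fin N → ℝ) (t : ℝ) : IsClosed (KSetC h p hN i b t) :=
  isClosed_le (MexC h p hN i b).continuous (h t (p i)).continuous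

lemma KSetC_meas (h : ℝ → Y → C(X, ℝ)) {N : ℕ} (p : Fin N → Y) (hN : 2 ≤ N)
    (i : Fin N) (b : Fin N → ℝ) (t : ℝ) : MeasurableSet (KSetC h p hN i b t) :=
  (KSetC_closed h p hN i b t).measurableSet

lemma MexC_apply (h : ℝ → Y → C(X, ℝ)) {N : ℕ} (p : Fin N → Y) (hN : 2 ≤ N)
    (i : Fin N) (b : Fin N → ℝ) (x : X) :
    MexC h p hN i b x
      = (Finset.univ.erase i).sup' (erase_nonempty hN i) (fun j => h (b j) (p j) x) := by
  rw [MexC, ContinuousMap.sup'_apply]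

lemma le_MexC (h : ℝ → Y → C(X, ℝ)) {N : ℕ} (p : Fin N → Y) (hN : 2 ≤ N)
    (i : Fin N) (b : Fin N → ℝ) {j : Fin N} (hj : j ≠ i) (x : X) :
    h (b j) (p j) x ≤ MexC h p hN i b x := by
  have hmem : j ∈ Finset.univ.erase i := Finset.mem_erase.mpr ⟨hj, Finset.mem_univ j⟩
  rw [MexC_apply]
  exact Finset.le_sup' (f := fun j => h (b j) (p j) x) hmem

lemma MexC_le (h : ℝ → Y → C(X, ℝ)) {N : ℕ} (p : Fin N → Y) (hN : 2 ≤ N)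
    (i : Fin N) (b : Fin N → ℝ) (x : X) {v : ℝ}
    (hv : ∀ j, j ≠ i → h (b j) (p j) x ≤ v) :
    MexC h p hN i b x ≤ v := by
  rw [MexC_apply]
  exact Finset.sup'_le _ _ fun j hj => hv j (Finset.mem_erase.mp hj).1

lemma le_rhoC (h : ℝ → Y → C(X, ℝ)) {N : ℕ} [NeZero N] (p : Fin N → Y)
    (b : Fin N → ℝ) (j : Fin N) (x : X) :
    h (b j) (p j) x ≤ rhoC h p b x := by
  rw [rhoC]; erw [ContinuousMap.sup'_apply]
  exact Finset.le_sup' (f := fun j => h (b j) (p j) x) (Finset.mem_univ j)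

lemma rhoC_le (h : ℝ → Y → C(X, ℝ)) {N : ℕ} [NeZero N] (p : Fin N → Y)
    (b : Fin N → ℝ) (x : X) {v : ℝ} (hv : ∀ j, h (b j) (p j) x ≤ v) :
    rhoC h p b x ≤ v := by
  rw [rhoC]; erw [ContinuousMap.sup'_apply]
  exact Finset.sup'_le _ _ fun j _ => hv j

lemma rhoC_memF {F : Set C(X, ℝ)} (h : ℝ → Y → C(X, ℝ)) {N : ℕ} [NeZero N]
    {α β : Y → EReal} {p : Fin N → Y} {b : Fin N → ℝ}
    (hA1 : ∀ f₁ ∈ F, ∀ f₂ ∈ F, f₁ ⊔ f₂ ∈ F)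
    (hA3mem : ∀ (y : Y) (t : ℝ), α y < (t : EReal) → (t : EReal) < β y → h t y ∈ F)
    (hb : AdmB α β p b) : rhoC h p b ∈ F := by
  rw [rhoC]
  exact Finset.sup'_induction _ _ (fun a ha b hb => hA1 a ha b hb)
    (fun j _ => hA3mem (p j) (b j) (hb j).1 (hb j).2)

lemma mem_T_rhoC {F : Set C(X, ℝ)} {T : C(X, ℝ) → X → Set Y}
    {h : ℝ → Y → C(X, ℝ)} {N : ℕ} [NeZero N] {α β : Y → EReal} {p : Fin N → Y}
    (hN : 2 ≤ N) {b : Fin N → ℝ}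
    (hA1 : ∀ f₁ ∈ F, ∀ f₂ ∈ F, f₁ ⊔ f₂ ∈ F)
    (hA2 : ∀ φ₁ ∈ F, ∀ φ₂ ∈ F, ∀ x₀ : X, φ₂ x₀ ≤ φ₁ x₀ → T φ₁ x₀ ⊆ T (φ₁ ⊔ φ₂) x₀)
    (hA3mem : ∀ (y : Y) (t : ℝ), α y < (t : EReal) → (t : EReal) < β y → h t y ∈ F)
    (hA3a : ∀ (y : Y) (t : ℝ), α y < (t : EReal) → (t : EReal) < β y → ∀ x : X, y ∈ T (h t y) x)
    (hb : AdmB α β p b) (i : Fin N) {x : X} (hx : x ∈ KSetC h p hN i b (b i)) :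
    p i ∈ T (rhoC h p b) x := by
  have hρF : rhoC h p b ∈ F := rhoC_memF h hA1 hA3mem hb
  have hiF : h (b i) (p i) ∈ F := hA3mem (p i) (b i) (hb i).1 (hb i).2
  have hle : rhoC h p b x ≤ h (b i) (p i) x := by
    refine rhoC_le h p b x fun j => ?_
    by_cases hj : j = i
    · subst hj; exact le_refl _
    · exact le_trans (le_MexC h p hN i b hj x) hx
  have hsub := hA2 (h (b i) (p i)) hiF (rhoC h p b) hρF x hle
  have heq : h (b i) (p i) ⊔ rhoC h p b = rhoC h p b := by
    ext x'
    simp only [ContinuousMap.sup_apply]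
    exact max_eq_right (le_rhoC h p b i x')
  rw [heq] at hsub
  exact hsub (hA3a (p i) (b i) (hb i).1 (hb i).2 x)

lemma overlap_null (ω : Measure X) [IsFiniteMeasure ω]
    {F : Set C(X, ℝ)} {T : C(X, ℝ) → X → Set Y}
    {h : ℝ → Y → C(X, ℝ)} {N : ℕ} [NeZero N] {α β : Y → EReal} {p : Fin N → Y}
    (hN : 2 ≤ N) {b : Fin N → ℝ} (hp : Function.Injective p)
    (hTCs : ∀ f ∈ F, IsCs ω (T f))
    (hA1 : ∀ f₁ ∈ F, ∀ f₂ ∈ F, f₁ ⊔ f₂ ∈ F)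
    (hA2 : ∀ φ₁ ∈ F, ∀ φ₂ ∈ F, ∀ x₀ : X, φ₂ x₀ ≤ φ₁ x₀ → T φ₁ x₀ ⊆ T (φ₁ ⊔ φ₂) x₀)
    (hA3mem : ∀ (y : Y) (t : ℝ), α y < (t : EReal) → (t : EReal) < β y → h t y ∈ F)
    (hA3a : ∀ (y : Y) (t : ℝ), α y < (t : EReal) → (t : EReal) < β y → ∀ x : X, y ∈ T (h t y) x)
    (hb : AdmB α β p b) {i j : Fin N} (hij : i ≠ j) :
    ω (KSetC h p hN i b (b i) ∩ KSetC h p hN j b (b j)) = 0 := by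
  have hρF : rhoC h p b ∈ F := rhoC_memF h hA1 hA3mem hb
  have h0 : ω {x | ¬ ∃ y, T (rhoC h p b) x = {y}} = 0 := ae_iff.mp (hTCs _ hρF).2.2.1
  refine measure_mono_null ?_ h0
  rintro x ⟨hxi, hxj⟩
  rintro ⟨y, hy⟩
  have h1 : p i ∈ T (rhoC h p b) x := mem_T_rhoC hN hA1 hA2 hA3mem hA3a hb i hxi
  have h2 : p j ∈ T (rhoC h p b) x := mem_T_rhoC hN hA1 hA2 hA3mem hA3a hb j hxj
  rw [hy, Set.mem_singleton_iff] at h1 h2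
  exact hij (hp (h1.trans h2.symm))

lemma KSetC_cover {h : ℝ → Y → C(X, ℝ)} {N : ℕ} [NeZero N] {p : Fin N → Y}
    (hN : 2 ≤ N) (b : Fin N → ℝ) :
    (⋃ i, KSetC h p hN i b (b i)) = Set.univ := by
  ext x
  simp only [Set.mem_iUnion, Set.mem_univ, iff_true]
  obtain ⟨i, -, hi⟩ := Finset.exists_mem_eq_sup'
    (⟨0, Finset.mem_univ 0⟩ : (Finset.univ : Finset (Fin N)).Nonempty)
    (fun j => h (b j) (p j) x)
  refine ⟨i, MexC_le h p hN i b x fun j _ => ?_⟩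
  calc h (b j) (p j) x ≤ _ := Finset.le_sup' (f := fun j => h (b j) (p j) x) (Finset.mem_univ j)
    _ = h (b i) (p i) x := hi

lemma tie_null (ω : Measure X) [IsFiniteMeasure ω]
    {F : Set C(X, ℝ)} {T : C(X, ℝ) → X → Set Y}
    {h : ℝ → Y → C(X, ℝ)} {N : ℕ} [NeZero N] {α β : Y → EReal} {p : Fin N → Y}
    (hN : 2 ≤ N) {b : Fin N → ℝ} (hp : Function.Injective p)
    (hTCs : ∀ f ∈ F, IsCs ω (T f))
    (hA1 : ∀ f₁ ∈ F, ∀ f₂ ∈ F, f₁ ⊔ f₂ ∈ F)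
    (hA2 : ∀ φ₁ ∈ F, ∀ φ₂ ∈ F, ∀ x₀ : X, φ₂ x₀ ≤ φ₁ x₀ → T φ₁ x₀ ⊆ T (φ₁ ⊔ φ₂) x₀)
    (hA3mem : ∀ (y : Y) (t : ℝ), α y < (t : EReal) → (t : EReal) < β y → h t y ∈ F)
    (hA3a : ∀ (y : Y) (t : ℝ), α y < (t : EReal) → (t : EReal) < β y → ∀ x : X, y ∈ T (h t y) x)
    (hb : AdmB α β p b) (i : Fin N) {t : ℝ}
    (ht1 : α (p i) < (t : EReal)) (ht2 : (t : EReal) < β (p i)) :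
    ω {x | h t (p i) x = MexC h p hN i b x} = 0 := by
  classical
  set b' := Function.update b i t with hb'def
  have hb'i : b' i = t := Function.update_self i t b
  have hb'ne : ∀ j, j ≠ i → b' j = b j := fun j hj => Function.update_of_ne hj t b
  have hb' : AdmB α β p b' := by
    intro j
    by_cases hj : j = i
    · subst hj; rw [hb'i]; exact ⟨ht1, ht2⟩
    · rw [hb'ne j hj]; exact hb j
  have hMex : ∀ x, MexC h p hN i b' x = MexC h p hN i b x := by
    intro x
    rw [MexC_apply, MexC_apply]
    refine Finset.sup'_congr _ rfl fun j hj => ?_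
    rw [hb'ne j (Finset.mem_erase.mp hj).1]
  have hnull : ω (⋃ j ∈ (Finset.univ.erase i : Finset (Fin N)),
      (KSetC h p hN i b' (b' i) ∩ KSetC h p hN j b' (b' j))) = 0 := by
    refine (measure_biUnion_null_iff (Finset.countable_toSet _)).mpr fun j hj => ?_
    exact overlap_null ω hN hp hTCs hA1 hA2 hA3mem hA3a hb'
      (Ne.symm (Finset.mem_erase.mp hj).1)
  refine measure_mono_null ?_ hnull
  intro x hx
  -- hx : h t (p i) x = MexC h p hN i b x
  obtain ⟨j, hjmem, hj⟩ := Finset.exists_mem_eq_sup' (erase_nonempty hN i)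
    (fun j => h (b j) (p j) x)
  have hjx : MexC h p hN i b x = h (b j) (p j) x := by rw [MexC_apply]; exact hj
  refine Set.mem_biUnion hjmem ⟨?_, ?_⟩
  · show MexC h p hN i b' x ≤ h (b' i) (p i) x
    rw [hMex, hb'i, hx]
  · show MexC h p hN j b' x ≤ h (b' j) (p j) x
    have hji : j ≠ i := (Finset.mem_erase.mp hjmem).1
    rw [hb'ne j hji]
    refine MexC_le h p hN j b' x fun k hk => ?_
    by_cases hki : k = i
    · subst hki
      rw [hb'i, hx, hjx]
    · rw [hb'ne k hki]
      calc h (b k) (p k) x ≤ MexC h p hN i b x := le_MexC h p hN i b hki x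
        _ = h (b j) (p j) x := hjx

lemma KSetC_mono {h : ℝ → Y → C(X, ℝ)} {N : ℕ} {α β : Y → EReal} {p : Fin N → Y}
    (hN : 2 ≤ N) {b b' : Fin N → ℝ}
    (hA3b : ∀ (y : Y) (t s : ℝ), α y < (t : EReal) → (s : EReal) < β y → t ≤ s →
      ∀ x, h s y x ≤ h t y x)
    (hb : AdmB α β p b) (hb' : AdmB α β p b') (hle : ∀ j, b j ≤ b' j) (i : Fin N) (t : ℝ) :
    KSetC h p hN i b t ⊆ KSetC h p hN i b' t := by
  intro x hx
  refine le_trans (MexC_le h p hN i b' x fun j hj => ?_) hx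
  calc h (b' j) (p j) x ≤ h (b j) (p j) x :=
        hA3b (p j) (b j) (b' j) (hb j).1 (hb' j).2 (hle j) x
    _ ≤ MexC h p hN i b x := le_MexC h p hN i b hj x

lemma exists_partition (ω : Measure X) [IsFiniteMeasure ω]
    {F : Set C(X, ℝ)} {T : C(X, ℝ) → X → Set Y}
    {h : ℝ → Y → C(X, ℝ)} {N : ℕ} [NeZero N] {α β : Y → EReal} {p : Fin N → Y}
    (hN : 2 ≤ N) {b : Fin N → ℝ} (hp : Function.Injective p)
    (hTCs : ∀ f ∈ F, IsCs ω (T f))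
    (hA1 : ∀ f₁ ∈ F, ∀ f₂ ∈ F, f₁ ⊔ f₂ ∈ F)
    (hA2 : ∀ φ₁ ∈ F, ∀ φ₂ ∈ F, ∀ x₀ : X, φ₂ x₀ ≤ φ₁ x₀ → T φ₁ x₀ ⊆ T (φ₁ ⊔ φ₂) x₀)
    (hA3mem : ∀ (y : Y) (t : ℝ), α y < (t : EReal) → (t : EReal) < β y → h t y ∈ F)
    (hA3a : ∀ (y : Y) (t : ℝ), α y < (t : EReal) → (t : EReal) < β y → ∀ x : X, y ∈ T (h t y) x)
    (hb : AdmB α β p b) :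
    ∃ Tt : Fin N → Set X, (∀ i, MeasurableSet (Tt i)) ∧
      Pairwise (Function.onFun Disjoint Tt) ∧
      (⋃ i, Tt i) = Set.univ ∧ (∀ i, Tt i ⊆ KSetC h p hN i b (b i)) ∧
      (∀ i, ω (Tt i) = ω (KSetC h p hN i b (b i))) := by
  classical
  set S : Fin N → Set X := fun i => KSetC h p hN i b (b i) with hSdef
  refine ⟨fun i => S i \ ⋃ j ∈ {j : Fin N | j < i}, S j, ?_, ?_, ?_, ?_, ?_⟩
  · intro i
    exact (KSetC_meas h p hN i b (b i)).diff
      (MeasurableSet.biUnion (Set.to_countable _) fun j _ => KSetC_meas h p hN j b (b j))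
  · intro i j hij
    have key : ∀ i j : Fin N, i < j →
        Disjoint (S i \ ⋃ k ∈ {k : Fin N | k < i}, S k) (S j \ ⋃ k ∈ {k : Fin N | k < j}, S k) := by
      intro i j hlt
      rw [Set.disjoint_left]
      rintro x ⟨hxi, -⟩ ⟨-, hxj⟩
      exact hxj (Set.mem_biUnion hlt hxi)
    rcases hij.lt_or_gt with hlt | hlt
    · exact key i j hlt
    · exact (key j i hlt).symm
  · apply Set.eq_univ_of_forall
    intro x
    have hx : ∃ i, x ∈ S i := by
      have := KSetC_cover (h := h) (p := p) hN b
      have hxu : x ∈ ⋃ i, S i := by rw [hSdef]; rw [this]; trivial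
      exact Set.mem_iUnion.mp hxu
    have hne : (Finset.univ.filter (fun i => x ∈ S i)).Nonempty := by
      obtain ⟨i, hi⟩ := hx
      exact ⟨i, Finset.mem_filter.mpr ⟨Finset.mem_univ i, hi⟩⟩
    obtain ⟨i, himem, hmin⟩ := Finset.exists_min_image _ id hne
    have hxi : x ∈ S i := (Finset.mem_filter.mp himem).2
    refine Set.mem_iUnion.mpr ⟨i, hxi, ?_⟩
    intro hmem
    obtain ⟨j, hjlt, hxj⟩ := by
      simpa using hmem
    exact absurd (hmin j (Finset.mem_filter.mpr ⟨Finset.mem_univ j, hxj⟩)) (by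
      simp only [id]
      exact not_le.mpr hjlt)
  · intro i; exact Set.diff_subset
  · intro i
    refine le_antisymm (measure_mono Set.diff_subset) ?_
    have hsub : S i ⊆ (S i \ ⋃ j ∈ {j : Fin N | j < i}, S j) ∪
        (⋃ j ∈ {j : Fin N | j < i}, S i ∩ S j) := by
      intro x hx
      by_cases hmem : x ∈ ⋃ j ∈ {j : Fin N | j < i}, S j
      · obtain ⟨j, hjlt, hxj⟩ := by simpa using hmem
        exact Or.inr (Set.mem_biUnion hjlt ⟨hx, hxj⟩)
      · exact Or.inl ⟨hx, hmem⟩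
    calc ω (S i) ≤ ω ((S i \ ⋃ j ∈ {j : Fin N | j < i}, S j) ∪
        (⋃ j ∈ {j : Fin N | j < i}, S i ∩ S j)) := measure_mono hsub
      _ ≤ ω (S i \ ⋃ j ∈ {j : Fin N | j < i}, S j) +
          ω (⋃ j ∈ {j : Fin N | j < i}, S i ∩ S j) := measure_union_le _ _
      _ = ω (S i \ ⋃ j ∈ {j : Fin N | j < i}, S j) := by
          have hz : ω (⋃ j ∈ {j : Fin N | j < i}, S i ∩ S j) = 0 := by
            refine (measure_biUnion_null_iff (Set.to_countable _)).mpr fun j hj => ?_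
            exact overlap_null ω hN hp hTCs hA1 hA2 hA3mem hA3a hb (ne_of_gt hj)
          rw [hz, add_zero]

/-- upper semicontinuity from the left: if `m ≤ ω (K t)` for all `t` in a set `S`,
then the same holds at `sSup S`. -/
lemma measure_KSetC_sSup (ω : Measure X) [IsFiniteMeasure ω]
    {h : ℝ → Y → C(X, ℝ)} {N : ℕ} {α β : Y → EReal} {p : Fin N → Y}
    (hN : 2 ≤ N)
    (hA3b : ∀ (y : Y) (t s : ℝ), α y < (t : EReal) → (s : EReal) < β y → t ≤ s →
      ∀ x, h s y x ≤ h t y x)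
    (hA3d : ∀ (y : Y) (t : ℝ), α y < (t : EReal) → (t : EReal) < β y →
      ∀ ε : ℝ, 0 < ε → ∃ δ : ℝ, 0 < δ ∧ ∀ t' : ℝ, α y < (t' : EReal) → (t' : EReal) < β y →
        |t' - t| < δ → ∀ x, |h t' y x - h t y x| ≤ ε)
    {b : Fin N → ℝ} {i : Fin N} {S : Set ℝ} {lo hi : ℝ} (hS : S ⊆ Set.Icc lo hi)
    (hlo : α (p i) < (lo : EReal)) (hhi : (hi : EReal) < β (p i)) (hSne : S.Nonempty)
    {m : ℝ≥0∞} (hm : ∀ t ∈ S, m ≤ ω (KSetC h p hN i b t)) :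
    m ≤ ω (KSetC h p hN i b (sSup S)) := by
  have hbdd : BddAbove S := ⟨hi, fun t ht => (hS ht).2⟩
  have hadm : ∀ t ∈ S, α (p i) < (t : EReal) ∧ (t : EReal) < β (p i) := fun t ht =>
    ⟨lt_of_lt_of_le hlo (EReal.coe_le_coe_iff.mpr (hS ht).1),
     lt_of_le_of_lt (EReal.coe_le_coe_iff.mpr (hS ht).2) hhi⟩
  have hsupmem : sSup S ∈ Set.Icc lo hi := by
    obtain ⟨t, ht⟩ := id hSne
    exact ⟨le_trans (hS ht).1 (le_csSup hbdd ht), csSup_le hSne fun t ht => (hS ht).2⟩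
  have hsupadm : α (p i) < ((sSup S : ℝ) : EReal) ∧ ((sSup S : ℝ) : EReal) < β (p i) :=
    ⟨lt_of_lt_of_le hlo (EReal.coe_le_coe_iff.mpr hsupmem.1),
     lt_of_le_of_lt (EReal.coe_le_coe_iff.mpr hsupmem.2) hhi⟩
  obtain ⟨u, humono, hutend, humem⟩ := exists_seq_tendsto_sSup hSne hbdd
  set A : ℕ → Set X := fun k => KSetC h p hN i b (u k) with hAdef
  have hAnti : Antitone A := by
    intro k l hkl
    intro x hx
    exact le_trans hx (hA3b (p i) (u k) (u l) (hadm _ (humem k)).1 (hadm _ (humem l)).2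
      (humono hkl) x)
  have htendm : Tendsto (ω ∘ A) atTop (𝓝 (ω (⋂ k, A k))) :=
    tendsto_measure_iInter_atTop
      (fun k => (KSetC_meas h p hN i b (u k)).nullMeasurableSet) hAnti
      ⟨0, measure_ne_top ω _⟩
  have hlim : m ≤ ω (⋂ k, A k) :=
    ge_of_tendsto htendm (Eventually.of_forall fun k => hm _ (humem k))
  refine le_trans hlim (measure_mono ?_)
  intro x hx
  simp only [Set.mem_iInter] at hx
  show MexC h p hN i b x ≤ h (sSup S) (p i) x
  by_contra hcon
  push_neg at hcon
  set ε := (MexC h p hN i b x - h (sSup S) (p i) x) / 2 with hεdef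
  have hε : 0 < ε := by simp only [hεdef]; linarith
  obtain ⟨δ, hδ, hδ'⟩ := hA3d (p i) (sSup S) hsupadm.1 hsupadm.2 ε hε
  obtain ⟨k₀, hk₀⟩ := Metric.tendsto_atTop.mp hutend δ hδ
  have hdist : |u k₀ - sSup S| < δ := by
    have := hk₀ k₀ le_rfl
    rwa [Real.dist_eq] at this
  have habs := hδ' (u k₀) (hadm _ (humem k₀)).1 (hadm _ (humem k₀)).2 hdist x
  have h1 : h (u k₀) (p i) x ≤ h (sSup S) (p i) x + ε := by
    have := abs_sub_le_iff.mp habs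
    linarith [this.1]
  have h2 : MexC h p hN i b x ≤ h (u k₀) (p i) x := hx k₀
  simp only [hεdef] at h1 h2
  linarith

/-- continuity from the right: bound the measure at `b i` using bounds for `t > b i`. -/
lemma measure_KSetC_le_of_right (ω : Measure X) [IsFiniteMeasure ω]
    {F : Set C(X, ℝ)} {T : C(X, ℝ) → X → Set Y}
    {h : ℝ → Y → C(X, ℝ)} {N : ℕ} [NeZero N] {α β : Y → EReal} {p : Fin N → Y}
    (hN : 2 ≤ N) {b : Fin N → ℝ} (hp : Function.Injective p)
    (hTCs : ∀ f ∈ F, IsCs ω (T f))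
    (hA1 : ∀ f₁ ∈ F, ∀ f₂ ∈ F, f₁ ⊔ f₂ ∈ F)
    (hA2 : ∀ φ₁ ∈ F, ∀ φ₂ ∈ F, ∀ x₀ : X, φ₂ x₀ ≤ φ₁ x₀ → T φ₁ x₀ ⊆ T (φ₁ ⊔ φ₂) x₀)
    (hA3mem : ∀ (y : Y) (t : ℝ), α y < (t : EReal) → (t : EReal) < β y → h t y ∈ F)
    (hA3a : ∀ (y : Y) (t : ℝ), α y < (t : EReal) → (t : EReal) < β y → ∀ x : X, y ∈ T (h t y) x)
    (hA3b : ∀ (y : Y) (t s : ℝ), α y < (t : EReal) → (s : EReal) < β y → t ≤ s →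
      ∀ x, h s y x ≤ h t y x)
    (hA3d : ∀ (y : Y) (t : ℝ), α y < (t : EReal) → (t : EReal) < β y →
      ∀ ε : ℝ, 0 < ε → ∃ δ : ℝ, 0 < δ ∧ ∀ t' : ℝ, α y < (t' : EReal) → (t' : EReal) < β y →
        |t' - t| < δ → ∀ x, |h t' y x - h t y x| ≤ ε)
    (hb : AdmB α β p b) (i : Fin N) {c : ℝ}
    (hlt : b i < c) (hcβ : (c : EReal) < β (p i))
    {m : ℝ≥0∞} (hm : ∀ t, b i < t → t ≤ c → ω (KSetC h p hN i b t) ≤ m) :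
    ω (KSetC h p hN i b (b i)) ≤ m := by
  set s : ℕ → ℝ := fun k => b i + (c - b i) / (k + 1) with hsdef
  have hcb : (0 : ℝ) < c - b i := by linarith
  have hsgt : ∀ k, b i < s k := by
    intro k
    have : (0 : ℝ) < (c - b i) / (k + 1) := by positivity
    simp only [hsdef]; linarith
  have hsle : ∀ k, s k ≤ c := by
    intro k
    have : (c - b i) / (k + 1) ≤ (c - b i) / 1 := by
      apply div_le_div_of_nonneg_left (le_of_lt hcb) one_pos
      push_cast; linarith
    simp only [hsdef]; push_cast at this ⊢; linarith
  have hsadm : ∀ k, α (p i) < ((s k : ℝ) : EReal) ∧ ((s k : ℝ) : EReal) < β (p i) := by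
    intro k
    constructor
    · exact lt_trans (hb i).1 (EReal.coe_lt_coe_iff.mpr (hsgt k))
    · exact lt_of_le_of_lt (EReal.coe_le_coe_iff.mpr (hsle k)) hcβ
  have hsanti : ∀ k l : ℕ, k ≤ l → s l ≤ s k := by
    intro k l hkl
    have : (c - b i) / (l + 1) ≤ (c - b i) / (k + 1) := by
      apply div_le_div_of_nonneg_left (le_of_lt hcb) (by positivity)
      push_cast; exact_mod_cast by exact_mod_cast Nat.add_le_add_right hkl 1
    simp only [hsdef]; linarith
  set B : ℕ → Set X := fun k => KSetC h p hN i b (s k) with hBdef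
  have hmono : Monotone B := by
    intro k l hkl x hx
    exact le_trans hx (hA3b (p i) (s l) (s k) (hsadm l).1 (hsadm k).2 (hsanti k l hkl) x)
  have htend : Tendsto (ω ∘ B) atTop (𝓝 (ω (⋃ k, B k))) :=
    tendsto_measure_iUnion_atTop hmono
  have hUle : ω (⋃ k, B k) ≤ m :=
    le_of_tendsto htend (Eventually.of_forall fun k => hm (s k) (hsgt k) (hsle k))
  have htie : ω {x | h (b i) (p i) x = MexC h p hN i b x} = 0 :=
    tie_null ω hN hp hTCs hA1 hA2 hA3mem hA3a hb i (hb i).1 (hb i).2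
  have hsub : KSetC h p hN i b (b i) ⊆
      (⋃ k, B k) ∪ {x | h (b i) (p i) x = MexC h p hN i b x} := by
    intro x hx
    have hx' : MexC h p hN i b x ≤ h (b i) (p i) x := hx
    rcases lt_or_eq_of_le hx' with hlt' | heq
    · left
      set ε := (h (b i) (p i) x - MexC h p hN i b x) / 2 with hεdef
      have hε : 0 < ε := by simp only [hεdef]; linarith
      obtain ⟨δ, hδ, hδ'⟩ := hA3d (p i) (b i) (hb i).1 (hb i).2 ε hε
      obtain ⟨n, hn⟩ := exists_nat_gt ((c - b i) / δ)
      have hnpos : (0 : ℝ) < n := lt_of_le_of_lt (by positivity) hn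
      have hklt : (c - b i) / (n + 1) < δ := by
        rw [div_lt_iff₀ (by positivity)]
        rw [div_lt_iff₀ hδ] at hn
        nlinarith [hδ]
      have hdist : |s n - b i| < δ := by
        have h1 : s n - b i = (c - b i) / (n + 1) := by simp [hsdef]
        rw [abs_of_pos (by rw [h1]; positivity), h1]
        exact hklt
      have habs := hδ' (s n) (hsadm n).1 (hsadm n).2 hdist x
      refine Set.mem_iUnion.mpr ⟨n, ?_⟩
      show MexC h p hN i b x ≤ h (s n) (p i) x
      have := abs_sub_le_iff.mp habs
      simp only [hεdef] at *
      linarith [this.2]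
    · right
      exact heq.symm
  calc ω (KSetC h p hN i b (b i)) ≤ ω ((⋃ k, B k) ∪ _) := measure_mono hsub
    _ ≤ ω (⋃ k, B k) + ω {x | h (b i) (p i) x = MexC h p hN i b x} := measure_union_le _ _
    _ ≤ m + 0 := add_le_add hUle (le_of_eq htie)
    _ = m := add_zero m

end AuxDev2

/-- Theorem 2.9 (convex case, discrete target measure). -/
theorem stmt5 {X Y : Type*} [MetricSpace X] [CompactSpace X] [MetricSpace Y] [CompactSpace Y]
    [MeasurableSpace X] [BorelSpace X] [MeasurableSpace Y] [BorelSpace Y]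
    (ω : Measure X) [IsFiniteMeasure ω]
    (F : Set C(X, ℝ)) (T : C(X, ℝ) → X → Set Y)
    (α β : Y → EReal) (h : ℝ → Y → C(X, ℝ))
    -- F ⊆ C⁺(X)
    (hFpos : ∀ f ∈ F, ∀ x, 0 < f x)
    -- (A1')
    (hA1 : ∀ f₁ ∈ F, ∀ f₂ ∈ F, f₁ ⊔ f₂ ∈ F)
    -- T maps F into C_s(X,Y)
    (hTCs : ∀ f ∈ F, IsCs ω (T f))
    -- T is continuous at each φ ∈ F
    (hTcont : ∀ φ ∈ F, TContinuousAt F T φ)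
    -- (A2')
    (hA2 : ∀ φ₁ ∈ F, ∀ φ₂ ∈ F, ∀ x₀ : X, φ₂ x₀ ≤ φ₁ x₀ → T φ₁ x₀ ⊆ T (φ₁ ⊔ φ₂) x₀)
    -- (A3')
    (hA3mem : ∀ (y : Y) (t : ℝ), α y < (t : EReal) → (t : EReal) < β y → h t y ∈ F)
    (hA3a : ∀ (y : Y) (t : ℝ), α y < (t : EReal) → (t : EReal) < β y → ∀ x : X, y ∈ T (h t y) x)
    (hA3b : ∀ (y : Y) (t s : ℝ), α y < (t : EReal) → (s : EReal) < β y → t ≤ s →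
      ∀ x, h s y x ≤ h t y x)
    (hA3c : ∀ (y : Y), ∀ ε : ℝ, 0 < ε → ∃ t₀ : ℝ, α y < (t₀ : EReal) ∧ (t₀ : EReal) < β y ∧
      ∀ t : ℝ, t₀ ≤ t → (t : EReal) < β y → ∀ x, h t y x < ε)
    (hA3d : ∀ (y : Y) (t : ℝ), α y < (t : EReal) → (t : EReal) < β y →
      ∀ ε : ℝ, 0 < ε → ∃ δ : ℝ, 0 < δ ∧ ∀ t' : ℝ, α y < (t' : EReal) → (t' : EReal) < β y →
        |t' - t| < δ → ∀ x, |h t' y x - h t y x| ≤ ε)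
    -- the data
    {N : ℕ} [NeZero N] (hN : 2 ≤ N)
    (p : Fin N → Y) (hp : Function.Injective p)
    (g : Fin N → ℝ) (hg : ∀ i, 0 < g i)
    -- conservation of energy
    (hmass : ω Set.univ = ∑ i, ENNReal.ofReal (g i))
    -- there exists (b₁⁰,…,b_N⁰) with h_{b₁⁰,p₁} ≤ min_{2≤i≤N} h_{bᵢ⁰,pᵢ} on X
    (b0 : Fin N → ℝ) (hb0 : ∀ i, α (p i) < (b0 i : EReal) ∧ (b0 i : EReal) < β (p i))
    (hb0dom : ∀ i : Fin N, i ≠ 0 → ∀ x, h (b0 0) (p 0) x ≤ h (b0 i) (p i) x) :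
    ∃ b : Fin N → ℝ, b 0 = b0 0 ∧
      (∀ i, α (p i) < (b i : EReal) ∧ (b i : EReal) < β (p i)) ∧
      ∃ ρ : C(X, ℝ), (∀ x, ρ x = ⨆ i, h (b i) (p i) x) ∧
        ∀ E : Set Y, MeasurableSet E →
          ω (SVPreimage (T ρ) E) = ∑ i, E.indicator (fun _ => ENNReal.ofReal (g i)) (p i) := by
  classical
  -- basic facts
  have hXpos : 0 < ω Set.univ := by
    rw [hmass]
    calc (0 : ℝ≥0∞) < ENNReal.ofReal (g 0) := ENNReal.ofReal_pos.mpr (hg 0)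
      _ ≤ ∑ i, ENNReal.ofReal (g i) :=
          Finset.single_le_sum (f := fun i : Fin N => ENNReal.ofReal (g i))
            (fun i _ => zero_le) (Finset.mem_univ 0)
  have hXne : Nonempty X := by
    by_contra hcon
    rw [not_nonempty_iff] at hcon
    rw [Set.univ_eq_empty_iff.mpr hcon, measure_empty] at hXpos
    exact lt_irrefl _ hXpos
  have hb1adm := hb0 0
  have hb1F : h (b0 0) (p 0) ∈ F := hA3mem _ _ hb1adm.1 hb1adm.2
  -- ε = min of h (b0 0) (p 0)
  obtain ⟨x₀, -, hx₀⟩ := isCompact_univ.exists_isMinOn Set.univ_nonempty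
    ((h (b0 0) (p 0)).continuous.continuousOn)
  set ε : ℝ := h (b0 0) (p 0) x₀ with hεdef
  have hε : 0 < ε := hFpos _ hb1F x₀
  have hεle : ∀ x, ε ≤ h (b0 0) (p 0) x := fun x => hx₀ (Set.mem_univ x)
  -- choose the right endpoints c
  choose t₀ ht₀α ht₀β ht₀small using fun i : Fin N => hA3c (p i) ε hε
  set c : Fin N → ℝ := fun i => if i = 0 then b0 0 else max (t₀ i) (b0 i) with hcdef
  have hc0 : c 0 = b0 0 := by simp [hcdef]
  have hcb0 : ∀ i, b0 i ≤ c i := by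
    intro i; by_cases hi : i = 0
    · subst hi; rw [hc0]
    · simp only [hcdef, if_neg hi]; exact le_max_right _ _
  have hcβ : ∀ i, (c i : EReal) < β (p i) := by
    intro i; by_cases hi : i = 0
    · subst hi; rw [hc0]; exact (hb0 0).2
    · simp only [hcdef, if_neg hi]
      rcases max_cases (t₀ i) (b0 i) with ⟨hm, -⟩ | ⟨hm, -⟩ <;> rw [hm]
      · exact ht₀β i
      · exact (hb0 i).2
  have hcsmall : ∀ i, i ≠ 0 → ∀ x, h (c i) (p i) x < ε := by
    intro i hi x
    have hci : c i = max (t₀ i) (b0 i) := by simp [hcdef, hi]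
    exact ht₀small i (c i) (by rw [hci]; exact le_max_left _ _) (hcβ i) x
  -- the lattice L
  set L : Set (Fin N → ℝ) := {b | ∀ j, b0 j ≤ b j ∧ b j ≤ c j} with hLdef
  have hLadm : ∀ b ∈ L, AdmB α β p b := by
    intro b hb j
    exact ⟨lt_of_lt_of_le (hb0 j).1 (EReal.coe_le_coe_iff.mpr (hb j).1),
      lt_of_le_of_lt (EReal.coe_le_coe_iff.mpr (hb j).2) (hcβ j)⟩
  -- the defining sets for the monotone map G
  set SD : (Fin N → ℝ) → Fin N → Set ℝ := fun b i =>
    {t | t ∈ Set.Icc (b0 i) (c i) ∧ ENNReal.ofReal (g i) ≤ ω (KSetC h p hN i b t)} with hSDdef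
  have hSDbdd : ∀ b i, BddAbove (SD b i ∪ {b0 i}) := by
    intro b i
    refine ⟨c i, ?_⟩
    rintro t (ht | ht)
    · exact ht.1.2
    · rw [Set.mem_singleton_iff] at ht; rw [ht]; exact hcb0 i
  set G : (Fin N → ℝ) → Fin N → ℝ :=
    fun b i => if i = 0 then b0 0 else sSup (SD b i ∪ {b0 i}) with hGdef
  have hGlb : ∀ b i, b0 i ≤ G b i := by
    intro b i
    by_cases hi : i = 0
    · subst hi; simp [hGdef]
    · simp only [hGdef, if_neg hi]
      exact le_csSup (hSDbdd b i) (Or.inr rfl)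
  have hGub : ∀ b i, G b i ≤ c i := by
    intro b i
    by_cases hi : i = 0
    · subst hi; simp only [hGdef, if_pos rfl, hc0]; exact le_refl _
    · simp only [hGdef, if_neg hi]
      refine csSup_le ⟨b0 i, Or.inr rfl⟩ ?_
      rintro t (ht | ht)
      · exact ht.1.2
      · rw [Set.mem_singleton_iff] at ht; rw [ht]; exact hcb0 i
  have hGL : ∀ b, G b ∈ L := fun b j => ⟨hGlb b j, hGub b j⟩
  have hSDmono : ∀ b ∈ L, ∀ b' ∈ L, (∀ j, b j ≤ b' j) → ∀ i, SD b i ⊆ SD b' i := by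
    intro b hb b' hb' hle i t ht
    exact ⟨ht.1, le_trans ht.2
      (measure_mono (KSetC_mono hN hA3b (hLadm b hb) (hLadm b' hb') hle i t))⟩
  have hGmono : ∀ b ∈ L, ∀ b' ∈ L, (∀ j, b j ≤ b' j) → ∀ i, G b i ≤ G b' i := by
    intro b hb b' hb' hle i
    by_cases hi : i = 0
    · subst hi; simp [hGdef]
    · simp only [hGdef, if_neg hi]
      exact csSup_le_csSup (hSDbdd b' i) ⟨b0 i, Or.inr rfl⟩
        (Set.union_subset_union_left _ (hSDmono b hb b' hb' hle i))
  -- Knaster–Tarski: largest fixed point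
  set A : Set (Fin N → ℝ) := {b | b ∈ L ∧ ∀ i, b i ≤ G b i} with hAdef
  have hb0L : b0 ∈ L := fun j => ⟨le_refl _, hcb0 j⟩
  have hb0A : b0 ∈ A := ⟨hb0L, fun i => hGlb b0 i⟩
  set bs : Fin N → ℝ := fun i => sSup ((fun b => b i) '' A) with hbsdef
  have himgne : ∀ i, ((fun b : Fin N → ℝ => b i) '' A).Nonempty := fun i => ⟨b0 i, b0, hb0A, rfl⟩
  have himgbdd : ∀ i, BddAbove ((fun b : Fin N → ℝ => b i) '' A) := by
    intro i; refine ⟨c i, ?_⟩; rintro t ⟨b, hb, rfl⟩; exact (hb.1 i).2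
  have hAle : ∀ b ∈ A, ∀ i, b i ≤ bs i := fun b hb i => le_csSup (himgbdd i) ⟨b, hb, rfl⟩
  have hbsL : bs ∈ L := by
    intro j
    refine ⟨hAle b0 hb0A j, ?_⟩
    exact csSup_le (himgne j) (by rintro t ⟨b, hb, rfl⟩; exact (hb.1 j).2)
  have hbsleG : ∀ i, bs i ≤ G bs i := by
    intro i
    refine csSup_le (himgne i) ?_
    rintro t ⟨b, hb, rfl⟩
    exact le_trans (hb.2 i) (hGmono b hb.1 bs hbsL (hAle b hb) i)
  have hbsA : bs ∈ A := ⟨hbsL, hbsleG⟩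
  have hGbsA : G bs ∈ A := ⟨hGL bs, fun i => hGmono bs hbsL (G bs) (hGL bs) hbsleG i⟩
  have hfix : ∀ i, G bs i = bs i := fun i => le_antisymm (hAle (G bs) hGbsA i) (hbsleG i)
  have hbs0 : bs 0 = b0 0 := le_antisymm ((hbsL 0).2.trans_eq hc0) (hbsL 0).1
  have hbsadm : AdmB α β p bs := hLadm bs hbsL
  -- Claim A: lower bound at the fixed point when SD is nonempty
  have hclaimA : ∀ i, i ≠ 0 → (SD bs i).Nonempty →
      ENNReal.ofReal (g i) ≤ ω (KSetC h p hN i bs (bs i)) := by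
    intro i hi hne
    have hSbdd : BddAbove (SD bs i) := ⟨c i, fun t ht => ht.1.2⟩
    have hsup_eq : bs i = sSup (SD bs i) := by
      have h1 : bs i = sSup (SD bs i ∪ {b0 i}) := by
        rw [← hfix i]; simp only [hGdef, if_neg hi]
      have h2 : sSup (SD bs i ∪ {b0 i}) = sSup (SD bs i) ⊔ sSup {b0 i} :=
        csSup_union hSbdd hne bddAbove_singleton (Set.singleton_nonempty _)
      rw [h1, h2, csSup_singleton]
      refine sup_eq_left.mpr ?_
      obtain ⟨t, ht⟩ := id hne
      exact le_trans ht.1.1 (le_csSup hSbdd ht)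
    rw [hsup_eq]
    exact measure_KSetC_sSup ω hN hA3b hA3d (fun t ht => ht.1) (hb0 i).1 (hcβ i) hne
      (fun t ht => ht.2)
  have hclaimA' : ∀ i, i ≠ 0 → ¬ (SD bs i).Nonempty → bs i = b0 i := by
    intro i hi hne
    rw [Set.not_nonempty_iff_eq_empty] at hne
    rw [← hfix i]
    simp only [hGdef, if_neg hi, hne, Set.empty_union, csSup_singleton]
  -- Claim B: upper bound at the fixed point
  have hclaimB : ∀ i, i ≠ 0 → ω (KSetC h p hN i bs (bs i)) ≤ ENNReal.ofReal (g i) := by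
    intro i hi
    rcases eq_or_lt_of_le (hbsL i).2 with hceq | hclt
    · -- bs i = c i : the set is empty
      have hempty : KSetC h p hN i bs (bs i) = ∅ := by
        rw [Set.eq_empty_iff_forall_notMem]
        intro x hx
        have h1 : h (bs i) (p i) x < ε := by rw [hceq]; exact hcsmall i hi x
        have h2 : ε ≤ MexC h p hN i bs x := by
          refine le_trans (hεle x) ?_
          have := le_MexC h p hN i bs (show (0 : Fin N) ≠ i from fun hcon => hi hcon.symm) x
          rwa [hbs0] at this
        have h3 : MexC h p hN i bs x ≤ h (bs i) (p i) x := hx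
        linarith
      rw [hempty, measure_empty]; exact zero_le
    · refine measure_KSetC_le_of_right ω hN hp hTCs hA1 hA2 hA3mem hA3a hA3b hA3d hbsadm i
        hclt (hcβ i) ?_
      intro t hgt hle
      by_contra hcon
      push_neg at hcon
      have htmem : t ∈ SD bs i := ⟨⟨le_trans (hbsL i).1 (le_of_lt hgt), hle⟩, le_of_lt hcon⟩
      have hcontra : t ≤ bs i := by
        rw [← hfix i]; simp only [hGdef, if_neg hi]
        exact le_csSup (hSDbdd bs i) (Or.inl htmem)
      linarith
  -- the partition
  obtain ⟨Tt, hTmeas, hTdisj, hTcover, hTsub, hTmeq⟩ :=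
    exists_partition ω hN hp hTCs hA1 hA2 hA3mem hA3a hbsadm
  have hsumT : ∑ i, ω (Tt i) = ω Set.univ := by
    rw [← hTcover, measure_iUnion hTdisj hTmeas, tsum_fintype]
  -- exclude the degenerate case
  have hSDne : ∀ i, i ≠ 0 → (SD bs i).Nonempty := by
    intro i hi
    by_contra hne
    have hbsib0 : bs i = b0 i := hclaimA' i hi hne
    have hS0null : ω (KSetC h p hN 0 bs (bs 0)) = 0 := by
      have hsub : KSetC h p hN 0 bs (bs 0) ⊆
          KSetC h p hN 0 bs (bs 0) ∩ KSetC h p hN i bs (bs i) := by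
        intro x hx
        refine ⟨hx, ?_⟩
        show MexC h p hN i bs x ≤ h (bs i) (p i) x
        refine MexC_le h p hN i bs x fun k hk => ?_
        by_cases hk0 : k = 0
        · subst hk0
          rw [hbs0, hbsib0]
          exact hb0dom i hi x
        · calc h (bs k) (p k) x ≤ MexC h p hN 0 bs x := le_MexC h p hN 0 bs hk0 x
            _ ≤ h (bs 0) (p 0) x := hx
            _ = h (b0 0) (p 0) x := by rw [hbs0]
            _ ≤ h (b0 i) (p i) x := hb0dom i hi x
            _ = h (bs i) (p i) x := by rw [hbsib0]
      exact measure_mono_null hsub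
        (overlap_null ω hN hp hTCs hA1 hA2 hA3mem hA3a hbsadm (fun hcon => hi hcon.symm))
    have hsum : ∑ j, ω (KSetC h p hN j bs (bs j)) = ω Set.univ := by
      rw [← hsumT]
      exact Finset.sum_congr rfl fun j _ => (hTmeq j).symm
    have hlhs : ω Set.univ ≤ ∑ j ∈ Finset.univ.erase 0, ENNReal.ofReal (g j) := by
      rw [← hsum, ← Finset.add_sum_erase Finset.univ _ (Finset.mem_univ 0), hS0null, zero_add]
      exact Finset.sum_le_sum fun j hj => hclaimB j (Finset.mem_erase.mp hj).1
    have hrhs : ω Set.univ =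
        ENNReal.ofReal (g 0) + ∑ j ∈ Finset.univ.erase 0, ENNReal.ofReal (g j) := by
      rw [hmass]
      exact (Finset.add_sum_erase Finset.univ (fun j => ENNReal.ofReal (g j))
        (Finset.mem_univ 0)).symm
    have hfin : ∑ j ∈ Finset.univ.erase 0, ENNReal.ofReal (g j) ≠ ⊤ :=
      (ENNReal.sum_lt_top.mpr (fun j _ => ENNReal.ofReal_lt_top)).ne
    have hle0 : ENNReal.ofReal (g 0) + ∑ j ∈ Finset.univ.erase 0, ENNReal.ofReal (g j) ≤
        0 + ∑ j ∈ Finset.univ.erase 0, ENNReal.ofReal (g j) := by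
      rw [zero_add]; rw [hrhs] at hlhs; exact hlhs
    have hg00 : ENNReal.ofReal (g 0) = 0 := by
      have := (ENNReal.add_le_add_iff_right hfin).mp hle0
      exact le_antisymm this (zero_le)
    rw [ENNReal.ofReal_eq_zero] at hg00
    linarith [hg 0]
  have hKeq : ∀ i, i ≠ 0 → ω (KSetC h p hN i bs (bs i)) = ENNReal.ofReal (g i) :=
    fun i hi => le_antisymm (hclaimB i hi) (hclaimA i hi (hSDne i hi))
  have hK0 : ω (KSetC h p hN 0 bs (bs 0)) = ENNReal.ofReal (g 0) := by
    have hsum : ∑ j, ω (KSetC h p hN j bs (bs j)) = ∑ j, ENNReal.ofReal (g j) := by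
      rw [← hmass, ← hsumT]
      exact Finset.sum_congr rfl fun j _ => (hTmeq j).symm
    rw [← Finset.add_sum_erase Finset.univ _ (Finset.mem_univ 0),
      ← Finset.add_sum_erase Finset.univ (fun j => ENNReal.ofReal (g j)) (Finset.mem_univ 0)]
      at hsum
    have herase : ∑ j ∈ Finset.univ.erase 0, ω (KSetC h p hN j bs (bs j)) =
        ∑ j ∈ Finset.univ.erase 0, ENNReal.ofReal (g j) :=
      Finset.sum_congr rfl fun j hj => hKeq j (Finset.mem_erase.mp hj).1
    rw [herase] at hsum
    have hfin : ∑ j ∈ Finset.univ.erase 0, ENNReal.ofReal (g j) ≠ ⊤ :=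
      (ENNReal.sum_lt_top.mpr (fun j _ => ENNReal.ofReal_lt_top)).ne
    exact (ENNReal.add_left_inj hfin).mp hsum
  have hTg : ∀ i, ω (Tt i) = ENNReal.ofReal (g i) := by
    intro i; rw [hTmeq i]
    by_cases hi : i = 0
    · subst hi; exact hK0
    · exact hKeq i hi
  -- conclusion
  refine ⟨bs, hbs0, fun i => hbsadm i, ?_⟩
  set ρ : C(X, ℝ) := rhoC h p bs with hρdef
  have hρF : ρ ∈ F := rhoC_memF h hA1 hA3mem hbsadm
  refine ⟨ρ, ?_, ?_⟩
  · intro x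
    apply le_antisymm
    · refine rhoC_le h p bs x fun j => ?_
      exact le_ciSup (f := fun i => h (bs i) (p i) x)
        (Set.Finite.bddAbove (Set.finite_range _)) j
    · exact ciSup_le fun j => le_rhoC h p bs j x
  · intro E hE
    set P : Set X := {x | ∃ y, T ρ x = {y}} with hPdef
    have hPc : ω {x | ¬ ∃ y, T ρ x = {y}} = 0 := ae_iff.mp (hTCs ρ hρF).2.2.1
    have hmeasP : ∀ A : Set X, ω A = ω (A ∩ P) := by
      intro A
      refine le_antisymm ?_ (measure_mono Set.inter_subset_left)
      have hsub : A ⊆ (A ∩ P) ∪ {x | ¬ ∃ y, T ρ x = {y}} := by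
        intro x hx
        by_cases hxP : x ∈ P
        · exact Or.inl ⟨hx, hxP⟩
        · exact Or.inr hxP
      calc ω A ≤ ω ((A ∩ P) ∪ {x | ¬ ∃ y, T ρ x = {y}}) := measure_mono hsub
        _ ≤ ω (A ∩ P) + ω {x | ¬ ∃ y, T ρ x = {y}} := measure_union_le _ _
        _ = ω (A ∩ P) := by rw [hPc, add_zero]
    have hsingle : ∀ i, ∀ x, x ∈ Tt i ∩ P → T ρ x = {p i} := by
      rintro i x ⟨hxT, y, hy⟩
      have hmem : p i ∈ T ρ x := mem_T_rhoC hN hA1 hA2 hA3mem hA3a hbsadm i (hTsub i hxT)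
      rw [hy] at hmem ⊢
      rw [Set.mem_singleton_iff] at hmem
      rw [hmem]
    set U : Set X := ⋃ i ∈ Finset.univ.filter (fun i => p i ∈ E), Tt i with hUdef
    have hUP : SVPreimage (T ρ) E ∩ P = U ∩ P := by
      ext x
      constructor
      · rintro ⟨hxS, hxP⟩
        have hxU : x ∈ ⋃ i, Tt i := by rw [hTcover]; trivial
        obtain ⟨i, hxi⟩ := Set.mem_iUnion.mp hxU
        have heq := hsingle i x ⟨hxi, hxP⟩
        obtain ⟨z, hz⟩ := hxS
        have hzpi : z = p i := by
          have := hz.1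
          rw [heq, Set.mem_singleton_iff] at this
          exact this
        have hpE : p i ∈ E := hzpi ▸ hz.2
        exact ⟨Set.mem_biUnion (Finset.mem_filter.mpr ⟨Finset.mem_univ i, hpE⟩) hxi, hxP⟩
      · rintro ⟨hxU, hxP⟩
        obtain ⟨i, hi, hxi⟩ := Set.mem_iUnion₂.mp hxU
        have heq := hsingle i x ⟨hxi, hxP⟩
        refine ⟨⟨p i, ?_, (Finset.mem_filter.mp hi).2⟩, hxP⟩
        rw [heq]; rfl
    have hωU : ω U = ∑ i ∈ Finset.univ.filter (fun i => p i ∈ E), ω (Tt i) := by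
      refine measure_biUnion_finset ?_ (fun i _ => hTmeas i)
      intro i _ j _ hij
      exact hTdisj hij
    calc ω (SVPreimage (T ρ) E) = ω (SVPreimage (T ρ) E ∩ P) := hmeasP _
      _ = ω (U ∩ P) := by rw [hUP]
      _ = ω U := (hmeasP U).symm
      _ = ∑ i ∈ Finset.univ.filter (fun i => p i ∈ E), ω (Tt i) := hωU
      _ = ∑ i ∈ Finset.univ.filter (fun i => p i ∈ E), ENNReal.ofReal (g i) :=
          Finset.sum_congr rfl fun i _ => hTg i
      _ = ∑ i, E.indicator (fun _ => ENNReal.ofReal (g i)) (p i) := by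
          rw [Finset.sum_filter]
          refine Finset.sum_congr rfl fun i _ => ?_
          rw [Set.indicator_apply]
end

section
/- In the T-convex setting with (A3'), assume additionally that X is connected, that ω(E) > 0 for every nonempty open set E ⊆ X, and that (A3')(b) is strengthened to h_{s,y₀}(x) < h_{t,y₀}(x) for all x whenever t < s. Let ρ = max_{1≤i≤N} h_{bᵢ,pᵢ} and ρ* = max_{1≤i≤N} h_{bᵢ*,pᵢ} both satisfy M_{T(ρ)} = M_{T(ρ*)} = Σᵢ gᵢ δ_{pᵢ} with g₁,…,g_N > 0 and p₁,…,p_N ∈ Y distinct. Then: (a) if b₁* ≤ b₁ then bᵢ* ≤ bᵢ for all 1 ≤ i ≤ N, and if b₁* = b₁ then bᵢ* = bᵢ for all i; (b) if ρ(x₀) = ρ*(x₀) for some x₀ ∈ X then ρ = ρ* on X. -/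
open Filter MeasureTheory Topology

section CoreAux

set_option linter.unusedSectionVars false

variable {X Y : Type*} [MetricSpace X] [CompactSpace X] [MetricSpace Y] [CompactSpace Y]
    [MeasurableSpace X] [BorelSpace X] [MeasurableSpace Y] [BorelSpace Y] [DecidableEq Y]

private lemma le_isup_aux {N : ℕ} [NeZero N] (f : Fin N → ℝ) (i : Fin N) :
    f i ≤ ⨆ j, f j :=
  le_ciSup (Set.Finite.bddAbove (Set.finite_range f)) i

private lemma exists_eq_isup_aux {N : ℕ} [NeZero N] (f : Fin N → ℝ) :
    ∃ i, f i = ⨆ j, f j := by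
  haveI : Nonempty (Fin N) := ⟨0⟩
  obtain ⟨i, hi⟩ := Finite.exists_max f
  exact ⟨i, le_antisymm (le_isup_aux f i) (ciSup_le hi)⟩

/-- Contact points: if `h (c i) (p i)` touches `σ` at `x`, then `p i ∈ T σ x`. -/
private lemma contact_aux
    (F : Set C(X, ℝ)) (T : C(X, ℝ) → X → Set Y)
    (α β : Y → EReal) (h : ℝ → Y → C(X, ℝ))
    (hA2 : ∀ φ₁ ∈ F, ∀ φ₂ ∈ F, ∀ x₀ : X, φ₂ x₀ ≤ φ₁ x₀ → T φ₁ x₀ ⊆ T (φ₁ ⊔ φ₂) x₀)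
    (hA3mem : ∀ (y : Y) (t : ℝ), α y < (t : EReal) → (t : EReal) < β y → h t y ∈ F)
    (hA3a : ∀ (y : Y) (t : ℝ), α y < (t : EReal) → (t : EReal) < β y → ∀ x : X, y ∈ T (h t y) x)
    {N : ℕ} [NeZero N] (p : Fin N → Y) (c : Fin N → ℝ)
    (hc : ∀ i, α (p i) < (c i : EReal) ∧ (c i : EReal) < β (p i))
    (σ : C(X, ℝ)) (hσF : σ ∈ F) (hσ : ∀ x, σ x = ⨆ i, h (c i) (p i) x)
    (i : Fin N) (x : X) (hx : h (c i) (p i) x = σ x) : p i ∈ T σ x := by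
  have hle : ∀ x', h (c i) (p i) x' ≤ σ x' := fun x' => by
    rw [hσ x']; exact le_isup_aux (fun j => h (c j) (p j) x') i
  have heq : h (c i) (p i) ⊔ σ = σ := by
    ext x'
    exact sup_eq_right.mpr (hle x')
  have key := hA2 (h (c i) (p i)) (hA3mem _ _ (hc i).1 (hc i).2) σ hσF x hx.ge
  rw [heq] at key
  exact key (hA3a _ _ (hc i).1 (hc i).2 x)

/-- Measure of the preimage of a finite subset of the `p i`'s. -/
private lemma meas_aux
    (ω : Measure X) (T : C(X, ℝ) → X → Set Y)
    {N : ℕ} [NeZero N] (p : Fin N → Y) (hp : Function.Injective p)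
    (g : Fin N → ℝ) (σ : C(X, ℝ))
    (hM : ∀ E : Set Y, MeasurableSet E →
      ω (SVPreimage (T σ) E) = ∑ i, E.indicator (fun _ => ENNReal.ofReal (g i)) (p i))
    (s : Finset (Fin N)) :
    ω (SVPreimage (T σ) ↑(s.image p)) = ∑ i ∈ s, ENNReal.ofReal (g i) := by
  rw [hM _ ((s.image p).measurableSet)]
  have : ∀ i : Fin N,
      (↑(s.image p) : Set Y).indicator (fun _ => ENNReal.ofReal (g i)) (p i)
        = if i ∈ s then ENNReal.ofReal (g i) else 0 := by
    intro i
    rw [Set.indicator_apply]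
    congr 1
    simp only [Finset.coe_image, Set.mem_image, Finset.mem_coe, eq_iff_iff]
    constructor
    · rintro ⟨j, hj, hje⟩; rwa [← hp hje]
    · intro hi; exact ⟨i, hi, rfl⟩
  simp only [this]
  rw [Finset.sum_ite_mem, Finset.univ_inter]

/-- a.e., preimage of a set of `p i`'s is inside the union of contact sets. -/
private lemma pre_sub_aux
    (ω : Measure X) (F : Set C(X, ℝ)) (T : C(X, ℝ) → X → Set Y)
    (α β : Y → EReal) (h : ℝ → Y → C(X, ℝ))
    (hA2 : ∀ φ₁ ∈ F, ∀ φ₂ ∈ F, ∀ x₀ : X, φ₂ x₀ ≤ φ₁ x₀ → T φ₁ x₀ ⊆ T (φ₁ ⊔ φ₂) x₀)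
    (hA3mem : ∀ (y : Y) (t : ℝ), α y < (t : EReal) → (t : EReal) < β y → h t y ∈ F)
    (hA3a : ∀ (y : Y) (t : ℝ), α y < (t : EReal) → (t : EReal) < β y → ∀ x : X, y ∈ T (h t y) x)
    {N : ℕ} [NeZero N] (p : Fin N → Y) (hp : Function.Injective p) (c : Fin N → ℝ)
    (hc : ∀ i, α (p i) < (c i : EReal) ∧ (c i : EReal) < β (p i))
    (σ : C(X, ℝ)) (hσF : σ ∈ F) (hσ : ∀ x, σ x = ⨆ i, h (c i) (p i) x)
    (s : Finset (Fin N)) :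
    SVPreimage (T σ) ↑(s.image p) ⊆
      (⋃ i ∈ s, {x | h (c i) (p i) x = σ x}) ∪ {x | ¬ ∃ y, T σ x = {y}} := by
  rintro x ⟨y, hyT, hyE⟩
  by_cases hxD : ∃ y', T σ x = {y'}
  · left
    obtain ⟨y', hy'⟩ := hxD
    rw [hy'] at hyT
    obtain ⟨j, hjs, hje⟩ := Finset.mem_coe.mp hyE |> Finset.mem_image.mp
    obtain ⟨k, hk⟩ := exists_eq_isup_aux (fun i => h (c i) (p i) x)
    have hkx : h (c k) (p k) x = σ x := by rw [hk, hσ x]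
    have hpk : p k ∈ T σ x :=
      contact_aux F T α β h hA2 hA3mem hA3a p c hc σ hσF hσ k x hkx
    rw [hy'] at hpk
    have : p k = p j := by
      rw [Set.mem_singleton_iff.mp hpk, hje, Set.mem_singleton_iff.mp hyT]
    rw [hp this] at hkx
    exact Set.mem_biUnion hjs hkx
  · right; exact hxD


/-- Core comparison lemma: two max-type solutions with the same point-mass measure
cannot have parameters strictly ordered in one slot and weakly the other way in another. -/
private theorem core_false
    (ω : Measure X) [IsFiniteMeasure ω] [ConnectedSpace X]
    (hωpos : ∀ U : Set X, IsOpen U → U.Nonempty → 0 < ω U)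
    (F : Set C(X, ℝ)) (T : C(X, ℝ) → X → Set Y)
    (α β : Y → EReal) (h : ℝ → Y → C(X, ℝ))
    (hTCs : ∀ f ∈ F, IsCs ω (T f))
    (hA2 : ∀ φ₁ ∈ F, ∀ φ₂ ∈ F, ∀ x₀ : X, φ₂ x₀ ≤ φ₁ x₀ → T φ₁ x₀ ⊆ T (φ₁ ⊔ φ₂) x₀)
    (hA3mem : ∀ (y : Y) (t : ℝ), α y < (t : EReal) → (t : EReal) < β y → h t y ∈ F)
    (hA3a : ∀ (y : Y) (t : ℝ), α y < (t : EReal) → (t : EReal) < β y → ∀ x : X, y ∈ T (h t y) x)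
    (hA3b : ∀ (y : Y) (t s : ℝ), α y < (t : EReal) → (s : EReal) < β y → t < s →
      ∀ x, h s y x < h t y x)
    {N : ℕ} [NeZero N]
    (p : Fin N → Y) (hp : Function.Injective p)
    (g : Fin N → ℝ) (hg : ∀ i, 0 < g i)
    (b bs : Fin N → ℝ)
    (hb : ∀ i, α (p i) < (b i : EReal) ∧ (b i : EReal) < β (p i))
    (hbs : ∀ i, α (p i) < (bs i : EReal) ∧ (bs i : EReal) < β (p i))
    (ρ ρs : C(X, ℝ)) (hρF : ρ ∈ F) (hρsF : ρs ∈ F)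
    (hρ : ∀ x, ρ x = ⨆ i, h (b i) (p i) x)
    (hρs : ∀ x, ρs x = ⨆ i, h (bs i) (p i) x)
    (hMρ : ∀ E : Set Y, MeasurableSet E →
      ω (SVPreimage (T ρ) E) = ∑ i, E.indicator (fun _ => ENNReal.ofReal (g i)) (p i))
    (hMρs : ∀ E : Set Y, MeasurableSet E →
      ω (SVPreimage (T ρs) E) = ∑ i, E.indicator (fun _ => ENNReal.ofReal (g i)) (p i))
    (i₀ : Fin N) (hi₀ : bs i₀ ≤ b i₀)
    (i₁ : Fin N) (hi₁ : b i₁ < bs i₁) : False := by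
  classical
  -- pointwise bounds
  have hleρ : ∀ i x, h (b i) (p i) x ≤ ρ x := fun i x => by
    rw [hρ x]; exact le_isup_aux (fun j => h (b j) (p j) x) i
  have hleρs : ∀ i x, h (bs i) (p i) x ≤ ρs x := fun i x => by
    rw [hρs x]; exact le_isup_aux (fun j => h (bs j) (p j) x) i
  -- weak monotonicity in the parameter
  have hweak : ∀ (y : Y) (t s : ℝ), α y < (t : EReal) → (s : EReal) < β y → t ≤ s →
      ∀ x, h s y x ≤ h t y x := by
    intro y t s ht hs hts x
    rcases eq_or_lt_of_le hts with rfl | hlt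
    · exact le_rfl
    · exact (hA3b y t s ht hs hlt x).le
  -- index sets
  set Jf : Finset (Fin N) := Finset.univ.filter (fun i => b i < bs i) with hJf
  have hi₁J : i₁ ∈ Jf := by simp [hJf, hi₁]
  have hi₀K : i₀ ∈ Jfᶜ := by
    simp only [hJf, Finset.mem_compl, Finset.mem_filter, Finset.mem_univ, true_and, not_lt]
    exact hi₀
  have hJne : Jf.Nonempty := ⟨i₁, hi₁J⟩
  have hKne : Jfᶜ.Nonempty := ⟨i₀, hi₀K⟩
  have hmemJ : ∀ i ∈ Jf, b i < bs i := fun i hi => (Finset.mem_filter.mp hi).2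
  have hmemK : ∀ j ∈ Jfᶜ, bs j ≤ b j := fun j hj =>
    not_lt.mp fun hlt => (Finset.mem_compl.mp hj) (by simp [hJf, hlt])
  -- the comparison functions and the open set G
  set FJ : C(X, ℝ) := Jf.sup' hJne (fun i => h (b i) (p i)) with hFJ
  set FK : C(X, ℝ) := Jfᶜ.sup' hKne (fun j => h (bs j) (p j)) with hFK
  set G : Set X := {x | FK x < FJ x} with hG
  have hGopen : IsOpen G := isOpen_lt (map_continuous FK) (map_continuous FJ)
  -- contact sets for ρs over J, i.e. A*
  set As : Set X := ⋃ i ∈ Jf, {x | h (bs i) (p i) x = ρs x} with hAs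
  have hAsclosed : IsClosed As :=
    Set.Finite.isClosed_biUnion (Jf.finite_toSet)
      (fun i _ => isClosed_eq (map_continuous _) (map_continuous ρs))
  -- A* ⊆ G
  have hAsG : As ⊆ G := by
    intro x hx
    simp only [hAs, Set.mem_iUnion, Set.mem_setOf_eq, exists_prop] at hx
    obtain ⟨i, hiJ, hix⟩ := hx
    show FK x < FJ x
    rw [hFK, hFJ, ContinuousMap.sup'_apply, ContinuousMap.sup'_apply]
    rw [Finset.sup'_lt_iff, ]
    intro j hj
    calc h (bs j) (p j) x ≤ ρs x := hleρs j x
      _ = h (bs i) (p i) x := hix.symm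
      _ < h (b i) (p i) x := hA3b (p i) (b i) (bs i) (hb i).1 (hbs i).2 (hmemJ i hiJ) x
      _ ≤ Jf.sup' hJne fun k => h (b k) (p k) x := Finset.le_sup' (fun k => h (b k) (p k) x) hiJ
  -- G contains no ρ-contact point of an index outside J
  have hGK : ∀ j ∈ Jfᶜ, ∀ x ∈ G, h (b j) (p j) x ≠ ρ x := by
    intro j hj x hxG hjx
    have h1 : FJ x ≤ ρ x := by
      rw [hFJ, ContinuousMap.sup'_apply]
      exact Finset.sup'_le _ _ fun i _ => hleρ i x
    have h2 : ρ x ≤ FK x := by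
      rw [hFK, ContinuousMap.sup'_apply]
      calc ρ x = h (b j) (p j) x := hjx.symm
        _ ≤ h (bs j) (p j) x :=
          hweak (p j) (bs j) (b j) (hbs j).1 (hb j).2 (hmemK j hj) x
        _ ≤ Jfᶜ.sup' hKne fun i => h (bs i) (p i) x := Finset.le_sup' (fun i => h (bs i) (p i) x) hj
    exact absurd hxG (not_lt.mpr (h1.trans h2)).elim
  -- hence every point of G is a ρ-contact point of some index in J
  have hGsub : G ⊆ SVPreimage (T ρ) ↑(Jf.image p) := by
    intro x hxG
    obtain ⟨k, hk⟩ := exists_eq_isup_aux (fun i => h (b i) (p i) x)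
    have hkx : h (b k) (p k) x = ρ x := by rw [hk, hρ x]
    have hkJ : k ∈ Jf := by
      by_contra hkK
      exact hGK k (Finset.mem_compl.mpr hkK) x hxG hkx
    exact ⟨p k, contact_aux F T α β h hA2 hA3mem hA3a p b hb ρ hρF hρ k x hkx,
      Finset.mem_coe.mpr (Finset.mem_image_of_mem p hkJ)⟩
  -- measure bookkeeping
  have hDρs : ω {x | ¬ ∃ y, T ρs x = {y}} = 0 := ae_iff.mp (hTCs ρs hρsF).2.2.1
  have hDρ : ω {x | ¬ ∃ y, T ρ x = {y}} = 0 := ae_iff.mp (hTCs ρ hρF).2.2.1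
  have hGle : ω G ≤ ∑ i ∈ Jf, ENNReal.ofReal (g i) := by
    rw [← meas_aux ω T p hp g ρ hMρ Jf]
    exact measure_mono hGsub
  have hAsge : ∑ i ∈ Jf, ENNReal.ofReal (g i) ≤ ω As := by
    have hsub := pre_sub_aux ω F T α β h hA2 hA3mem hA3a p hp bs hbs ρs hρsF hρs Jf
    calc ∑ i ∈ Jf, ENNReal.ofReal (g i)
        = ω (SVPreimage (T ρs) ↑(Jf.image p)) := (meas_aux ω T p hp g ρs hMρs Jf).symm
      _ ≤ ω (As ∪ {x | ¬ ∃ y, T ρs x = {y}}) := measure_mono hsub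
      _ ≤ ω As + ω {x | ¬ ∃ y, T ρs x = {y}} := measure_union_le _ _
      _ = ω As := by rw [hDρs, add_zero]
  have hωAsG : ω As = ω G :=
    le_antisymm (measure_mono hAsG) (hGle.trans hAsge)
  -- G \ As is open and null, hence empty
  have hdiff : ω (G \ As) = 0 := by
    have h1 := measure_inter_add_diff (μ := ω) G hAsclosed.measurableSet
    rw [Set.inter_eq_right.mpr hAsG, hωAsG] at h1
    have h2 : ω G + ω (G \ As) = ω G + 0 := by rw [add_zero]; exact h1
    exact (ENNReal.add_right_inj (measure_ne_top ω G)).mp h2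
  have hGAs : G ⊆ As := by
    by_contra hGA
    obtain ⟨x, hxG, hxA⟩ := Set.not_subset.mp hGA
    have hopen : IsOpen (G \ As) := hGopen.sdiff hAsclosed
    have := hωpos _ hopen ⟨x, hxG, hxA⟩
    rw [hdiff] at this
    exact lt_irrefl 0 this
  have hGeq : G = As := le_antisymm hGAs hAsG
  -- G is nonempty
  have hGpos : 0 < ω G := by
    rw [← hωAsG]
    calc (0 : ENNReal) < ENNReal.ofReal (g i₁) := ENNReal.ofReal_pos.mpr (hg i₁)
      _ ≤ ∑ i ∈ Jf, ENNReal.ofReal (g i) :=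
        Finset.single_le_sum (f := fun i => ENNReal.ofReal (g i)) (fun i _ => zero_le) hi₁J
      _ ≤ ω As := hAsge
  have hGne : G.Nonempty := by
    rcases Set.eq_empty_or_nonempty G with he | hne
    · rw [he, measure_empty] at hGpos; exact absurd hGpos (lt_irrefl 0)
    · exact hne
  -- G is clopen and nonempty, hence G = univ
  have hGclopen : IsClopen G := ⟨by rw [hGeq]; exact hAsclosed, hGopen⟩
  have hGuniv : G = Set.univ := hGclopen.eq_univ hGne
  -- but the contact set of index i₀ for ρ is nonempty and disjoint from G
  have hSne : ({x | h (b i₀) (p i₀) x = ρ x}).Nonempty := by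
    have hsub := pre_sub_aux ω F T α β h hA2 hA3mem hA3a p hp b hb ρ hρF hρ {i₀}
    have hms : ∑ i ∈ ({i₀} : Finset (Fin N)), ENNReal.ofReal (g i)
        = ω (SVPreimage (T ρ) ↑(({i₀} : Finset (Fin N)).image p)) :=
      (meas_aux ω T p hp g ρ hMρ {i₀}).symm
    rw [Finset.sum_singleton] at hms
    have hpos : (0 : ENNReal) < ω ({x | h (b i₀) (p i₀) x = ρ x} ∪ {x | ¬ ∃ y, T ρ x = {y}}) := by
      calc (0 : ENNReal) < ENNReal.ofReal (g i₀) := ENNReal.ofReal_pos.mpr (hg i₀)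
        _ = ω (SVPreimage (T ρ) ↑(({i₀} : Finset (Fin N)).image p)) := hms
        _ ≤ _ := measure_mono (by simpa using hsub)
    have hpos2 : (0 : ENNReal) < ω {x | h (b i₀) (p i₀) x = ρ x} := by
      by_contra hz
      push_neg at hz
      have hz0 : ω {x | h (b i₀) (p i₀) x = ρ x} = 0 := le_antisymm hz zero_le
      have : ω ({x | h (b i₀) (p i₀) x = ρ x} ∪ {x | ¬ ∃ y, T ρ x = {y}}) = 0 := by
        refine le_antisymm ?_ zero_le
        calc ω _ ≤ ω {x | h (b i₀) (p i₀) x = ρ x} + ω {x | ¬ ∃ y, T ρ x = {y}} :=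
            measure_union_le _ _
          _ = 0 := by rw [hz0, hDρ, add_zero]
      rw [this] at hpos
      exact lt_irrefl 0 hpos
    rcases Set.eq_empty_or_nonempty {x | h (b i₀) (p i₀) x = ρ x} with he | hne
    · rw [he, measure_empty] at hpos2; exact absurd hpos2 (lt_irrefl 0)
    · exact hne
  obtain ⟨xhat, hxhat⟩ := hSne
  exact hGK i₀ hi₀K xhat (hGuniv ▸ Set.mem_univ xhat) hxhat

end CoreAux

/-- Theorem 2.10 (comparison/uniqueness, convex case). -/

theorem stmt6 {X Y : Type*} [MetricSpace X] [CompactSpace X] [MetricSpace Y] [CompactSpace Y]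
    [MeasurableSpace X] [BorelSpace X] [MeasurableSpace Y] [BorelSpace Y]
    (ω : Measure X) [IsFiniteMeasure ω]
    -- X is connected and ω is positive on nonempty open sets
    [ConnectedSpace X]
    (hωpos : ∀ U : Set X, IsOpen U → U.Nonempty → 0 < ω U)
    (F : Set C(X, ℝ)) (T : C(X, ℝ) → X → Set Y)
    (α β : Y → EReal) (h : ℝ → Y → C(X, ℝ))
    -- F ⊆ C⁺(X)
    (hFpos : ∀ f ∈ F, ∀ x, 0 < f x)
    -- (A1')
    (hA1 : ∀ f₁ ∈ F, ∀ f₂ ∈ F, f₁ ⊔ f₂ ∈ F)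
    -- T maps F into C_s(X,Y)
    (hTCs : ∀ f ∈ F, IsCs ω (T f))
    -- T is continuous at each φ ∈ F
    (hTcont : ∀ φ ∈ F, TContinuousAt F T φ)
    -- (A2')
    (hA2 : ∀ φ₁ ∈ F, ∀ φ₂ ∈ F, ∀ x₀ : X, φ₂ x₀ ≤ φ₁ x₀ → T φ₁ x₀ ⊆ T (φ₁ ⊔ φ₂) x₀)
    -- (A3') with (b) strengthened to strict monotonicity
    (hA3mem : ∀ (y : Y) (t : ℝ), α y < (t : EReal) → (t : EReal) < β y → h t y ∈ F)
    (hA3a : ∀ (y : Y) (t : ℝ), α y < (t : EReal) → (t : EReal) < β y → ∀ x : X, y ∈ T (h t y) x)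
    (hA3b : ∀ (y : Y) (t s : ℝ), α y < (t : EReal) → (s : EReal) < β y → t < s →
      ∀ x, h s y x < h t y x)
    (hA3c : ∀ (y : Y), ∀ ε : ℝ, 0 < ε → ∃ t₀ : ℝ, α y < (t₀ : EReal) ∧ (t₀ : EReal) < β y ∧
      ∀ t : ℝ, t₀ ≤ t → (t : EReal) < β y → ∀ x, h t y x < ε)
    (hA3d : ∀ (y : Y) (t : ℝ), α y < (t : EReal) → (t : EReal) < β y →
      ∀ ε : ℝ, 0 < ε → ∃ δ : ℝ, 0 < δ ∧ ∀ t' : ℝ, α y < (t' : EReal) → (t' : EReal) < β y →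
        |t' - t| < δ → ∀ x, |h t' y x - h t y x| ≤ ε)
    -- the data
    {N : ℕ} [NeZero N] (hN : 2 ≤ N)
    (p : Fin N → Y) (hp : Function.Injective p)
    (g : Fin N → ℝ) (hg : ∀ i, 0 < g i)
    -- two solutions ρ = max h_{bᵢ,pᵢ} and ρ* = max h_{bᵢ*,pᵢ} as in Theorem 2.9
    (b bs : Fin N → ℝ)
    (hb : ∀ i, α (p i) < (b i : EReal) ∧ (b i : EReal) < β (p i))
    (hbs : ∀ i, α (p i) < (bs i : EReal) ∧ (bs i : EReal) < β (p i))
    (ρ ρs : C(X, ℝ))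
    (hρ : ∀ x, ρ x = ⨆ i, h (b i) (p i) x)
    (hρs : ∀ x, ρs x = ⨆ i, h (bs i) (p i) x)
    (hMρ : ∀ E : Set Y, MeasurableSet E →
      ω (SVPreimage (T ρ) E) = ∑ i, E.indicator (fun _ => ENNReal.ofReal (g i)) (p i))
    (hMρs : ∀ E : Set Y, MeasurableSet E →
      ω (SVPreimage (T ρs) E) = ∑ i, E.indicator (fun _ => ENNReal.ofReal (g i)) (p i)) :
    -- (a)
    ((bs 0 ≤ b 0 → ∀ i, bs i ≤ b i) ∧ (bs 0 = b 0 → ∀ i, bs i = b i)) ∧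
    -- (b)
    ((∃ x₀ : X, ρ x₀ = ρs x₀) → ∀ x : X, ρ x = ρs x) := by
  classical
  haveI : Nonempty (Fin N) := ⟨0⟩
  -- ρ and ρs belong to F
  have hsupF : ∀ (σ : C(X, ℝ)) (c : Fin N → ℝ),
      (∀ i, α (p i) < (c i : EReal) ∧ (c i : EReal) < β (p i)) →
      (∀ x, σ x = ⨆ i, h (c i) (p i) x) → σ ∈ F := by
    intro σ c hc hσ
    have hmem : Finset.univ.sup' Finset.univ_nonempty (fun i => h (c i) (p i)) ∈ F :=
      Finset.sup'_induction _ _ (fun f1 hf1 f2 hf2 => hA1 f1 hf1 f2 hf2)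
        (fun i _ => hA3mem _ _ (hc i).1 (hc i).2)
    have hσeq : σ = Finset.univ.sup' Finset.univ_nonempty (fun i => h (c i) (p i)) := by
      ext x
      rw [hσ x, ContinuousMap.sup'_apply]
      exact le_antisymm
        (ciSup_le fun i => Finset.le_sup' (fun j => h (c j) (p j) x) (Finset.mem_univ i))
        (Finset.sup'_le _ _ fun i _ => le_isup_aux (fun j => h (c j) (p j) x) i)
    rw [hσeq]; exact hmem
  have hρF : ρ ∈ F := hsupF ρ b hb hρ
  have hρsF : ρs ∈ F := hsupF ρs bs hbs hρs
  -- the two directions of the comparison principle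
  have coreA : ∀ i₀, bs i₀ ≤ b i₀ → ∀ i, bs i ≤ b i := by
    intro i₀ h0 i
    by_contra hlt
    exact core_false ω hωpos F T α β h hTCs hA2 hA3mem hA3a hA3b p hp g hg b bs hb hbs
      ρ ρs hρF hρsF hρ hρs hMρ hMρs i₀ h0 i (not_le.mp hlt)
  have coreB : ∀ i₀, b i₀ ≤ bs i₀ → ∀ i, b i ≤ bs i := by
    intro i₀ h0 i
    by_contra hlt
    exact core_false ω hωpos F T α β h hTCs hA2 hA3mem hA3a hA3b p hp g hg bs b hbs hb
      ρs ρ hρsF hρF hρs hρ hMρs hMρ i₀ h0 i (not_le.mp hlt)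
  refine ⟨⟨fun h0 => coreA 0 h0, fun h0 i => le_antisymm (coreA 0 h0.le i) (coreB 0 h0.ge i)⟩, ?_⟩
  rintro ⟨x₀, hx₀⟩ x
  have hkey : ∀ j, b j = bs j := by
    rcases le_total (bs 0) (b 0) with hc | hc
    · have hall : ∀ i, bs i ≤ b i := coreA 0 hc
      obtain ⟨i, hi⟩ := exists_eq_isup_aux (fun j => h (b j) (p j) x₀)
      have hix : h (b i) (p i) x₀ = ρ x₀ := by rw [hi, hρ x₀]
      have h2 : h (bs i) (p i) x₀ ≤ ρs x₀ := by
        rw [hρs x₀]; exact le_isup_aux (fun j => h (bs j) (p j) x₀) i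
      have heq : b i ≤ bs i := by
        by_contra hlt
        have hstrict := hA3b (p i) (bs i) (b i) (hbs i).1 (hb i).2 (not_le.mp hlt) x₀
        have : ρ x₀ < ρ x₀ := by
          calc ρ x₀ = h (b i) (p i) x₀ := hix.symm
            _ < h (bs i) (p i) x₀ := hstrict
            _ ≤ ρs x₀ := h2
            _ = ρ x₀ := hx₀.symm
        exact lt_irrefl _ this
      have hallB : ∀ j, b j ≤ bs j := coreB i heq
      exact fun j => le_antisymm (hallB j) (hall j)
    · have hall : ∀ i, b i ≤ bs i := coreB 0 hc
      obtain ⟨i, hi⟩ := exists_eq_isup_aux (fun j => h (bs j) (p j) x₀)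
      have hix : h (bs i) (p i) x₀ = ρs x₀ := by rw [hi, hρs x₀]
      have h2 : h (b i) (p i) x₀ ≤ ρ x₀ := by
        rw [hρ x₀]; exact le_isup_aux (fun j => h (b j) (p j) x₀) i
      have heq : bs i ≤ b i := by
        by_contra hlt
        have hstrict := hA3b (p i) (b i) (bs i) (hb i).1 (hbs i).2 (not_le.mp hlt) x₀
        have : ρs x₀ < ρs x₀ := by
          calc ρs x₀ = h (bs i) (p i) x₀ := hix.symm
            _ < h (b i) (p i) x₀ := hstrict
            _ ≤ ρ x₀ := h2
            _ = ρs x₀ := hx₀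
        exact lt_irrefl _ this
      have hallA : ∀ j, bs j ≤ b j := coreA i heq
      exact fun j => le_antisymm (hall j) (hallA j)
  rw [hρ x, hρs x]
  exact iSup_congr fun i => by rw [hkey i]
end
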